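/- arXiv:1403.0386 — 5 statements merged into one kernel-verified Lean document; each statement's English description precedes it below -/
import Mathlib

section
/- For λ = 2, the random variable S(2) has the uniform distribution on [−1,1]; that is, the pushforward measure ℙ ∘ S(2)⁻¹ equals (1/2)·(Lebesgue measure restricted to [−1,1]). -/
open MeasureTheory ProbabilityTheory Finset
open scoped ENNReal NNReal

noncomputable def vv (m j : ℕ) : ℝ := (2 * j + 1) * (2⁻¹ : ℝ) ^ m - 1

lemma vv_inj {m j j' : ℕ} (h : vv m j = vv m j') : j = j' := by
  unfold vv at h
  have hp : (0:ℝ) < (2⁻¹:ℝ)^m := by positivity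
  have h2 : (2 * (j:ℝ) + 1) = (2 * (j':ℝ) + 1) :=
    mul_right_cancel₀ (ne_of_gt hp) (by linarith)
  have : (j:ℝ) = j' := by linarith
  exact_mod_cast this

lemma count_card (N : ℕ) (x : ℝ) :
    ((range N).filter (fun j : ℕ => (j : ℝ) ≤ x)).card = min N (⌊x⌋ + 1).toNat := by
  rw [← Finset.card_range (min N (⌊x⌋ + 1).toNat)]
  congr 1
  ext j
  simp only [mem_filter, mem_range, lt_min_iff, Int.lt_toNat]
  constructor
  · rintro ⟨h1, h2⟩
    exact ⟨h1, Int.lt_add_one_iff.2 (Int.le_floor.2 h2)⟩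
  · rintro ⟨h1, h2⟩
    exact ⟨h1, Int.le_floor.1 (Int.lt_add_one_iff.1 h2)⟩

lemma count_upper (N : ℕ) (x : ℝ) :
    (((range N).filter (fun j : ℕ => (j : ℝ) ≤ x)).card : ℝ) ≤ max 0 (x + 1) := by
  rw [count_card]
  have h1 : ((min N (⌊x⌋ + 1).toNat : ℕ) : ℝ) ≤ ((⌊x⌋ + 1).toNat : ℝ) := by
    exact_mod_cast Nat.cast_le.2 (min_le_right _ _)
  refine h1.trans ?_
  have h3 : (((⌊x⌋ + 1).toNat : ℕ) : ℝ) = max ((⌊x⌋:ℝ) + 1) 0 := by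
    have := Int.toNat_eq_max (⌊x⌋ + 1)
    have h4 : (((⌊x⌋ + 1).toNat : ℤ) : ℝ) = ((max (⌊x⌋ + 1) 0 : ℤ) : ℝ) := by exact_mod_cast this
    push_cast at h4 ⊢
    convert h4 using 2
  rw [h3, max_comm]
  apply max_le_max le_rfl
  have := Int.floor_le x
  linarith

lemma count_lower (N : ℕ) (x : ℝ) :
    min (N : ℝ) x ≤ (((range N).filter (fun j : ℕ => (j : ℝ) ≤ x)).card : ℝ) := by
  rw [count_card]
  have h0 : ((min N (⌊x⌋ + 1).toNat : ℕ) : ℝ) = min (N:ℝ) (((⌊x⌋ + 1).toNat : ℕ) : ℝ) := by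
    simp [Nat.cast_min]
  rw [h0]
  apply min_le_min le_rfl
  have h2 : ((⌊x⌋ + 1 : ℤ) : ℝ) ≤ (((⌊x⌋ + 1).toNat : ℕ) : ℝ) := by
    exact_mod_cast Int.self_le_toNat _
  refine le_trans ?_ h2
  push_cast
  have := Int.lt_floor_add_one x
  linarith

lemma atom_prob {Ω : Type*} [MeasurableSpace Ω] (P : Measure Ω) [IsProbabilityMeasure P]
    (Y : ℕ → Ω → ℝ) (hY : ∀ n, Measurable (Y n))
    (hind : iIndepFun Y P)
    (hp : ∀ n, P {ω | Y n ω = (2⁻¹:ℝ)^(n+1)} = 1/2)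
    (hm : ∀ n, P {ω | Y n ω = -((2⁻¹:ℝ)^(n+1))} = 1/2) :
    ∀ m, ∀ j, j < 2^m → P {ω | ∑ n ∈ range m, Y n ω = vv m j} = ((2:ℝ≥0∞)^m)⁻¹ := by
  intro m
  induction m with
  | zero =>
    intro j hj
    interval_cases j
    have : vv 0 0 = 0 := by unfold vv; norm_num
    simp [this]
  | succ m IH =>
    intro j hj
    have smeas : Measurable (fun ω => ∑ n ∈ range m, Y n ω) :=
      Finset.measurable_sum _ (fun n _ => hY n)
    have hAtomMeas : ∀ u : ℝ, MeasurableSet {ω | ∑ n ∈ range m, Y n ω = u} := fun u =>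
      smeas (measurableSet_singleton u)
    have hUnull : ∀ u : ℝ, (∀ i, i < 2^m → u ≠ vv m i) →
        P {ω | ∑ n ∈ range m, Y n ω = u} = 0 := by
      intro u hu
      set U := ⋃ i ∈ (range (2^m) : Finset ℕ), {ω | ∑ n ∈ range m, Y n ω = vv m i} with hU
      have hUmeas : MeasurableSet U := by
        exact MeasurableSet.biUnion (Finset.countable_toSet _) (fun i _ => hAtomMeas _)
      have hdisj : (↑(range (2^m)) : Set ℕ).PairwiseDisjoint
          (fun i => {ω | ∑ n ∈ range m, Y n ω = vv m i}) := by
        intro a _ b _ hab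
        refine Set.disjoint_left.2 (fun ω ha hb => hab ?_)
        exact vv_inj (ha.symm.trans hb)
      have hPU : P U = 1 := by
        rw [hU, measure_biUnion_finset hdisj (fun i _ => hAtomMeas _)]
        have : ∀ i ∈ range (2^m), P {ω | ∑ n ∈ range m, Y n ω = vv m i} = ((2:ℝ≥0∞)^m)⁻¹ :=
          fun i hi => IH i (mem_range.1 hi)
        rw [Finset.sum_congr rfl this, Finset.sum_const, Finset.card_range, nsmul_eq_mul]
        have h2 : ((2^m : ℕ) : ℝ≥0∞) = (2:ℝ≥0∞)^m := by push_cast; ring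
        rw [h2, ENNReal.mul_inv_cancel (by positivity) (ENNReal.pow_ne_top ENNReal.ofNat_ne_top)]
      have hUc : P Uᶜ = 0 := by
        rw [measure_compl hUmeas (measure_ne_top P _), hPU, measure_univ, tsub_self]
      refine measure_mono_null ?_ hUc
      intro ω hω
      simp only [Set.mem_compl_iff, hU, Set.mem_iUnion]
      rintro ⟨i, hi, hvi⟩
      exact hu i (by simpa using hi) (hω.symm.trans hvi)
    have hIndep : IndepFun (fun ω => ∑ n ∈ range m, Y n ω) (Y m) P := by
      have h := hind.indepFun_sum_range_succ hY m
      have : (∑ j ∈ range m, Y j) = (fun ω => ∑ n ∈ range m, Y n ω) := by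
        funext ω; simp [Finset.sum_apply]
      rwa [this] at h
    have hsplit : ∀ u c' : ℝ,
        P ({ω | ∑ n ∈ range m, Y n ω = u} ∩ {ω | Y m ω = c'}) =
        P {ω | ∑ n ∈ range m, Y n ω = u} * P {ω | Y m ω = c'} := by
      intro u c'
      exact hIndep.measure_inter_preimage_eq_mul {u} {c'}
        (measurableSet_singleton u) (measurableSet_singleton c')
    set c : ℝ := (2⁻¹:ℝ)^(m+1) with hc
    set w : ℝ := vv (m+1) j with hw
    set A : Set Ω := {ω | Y m ω = c} with hA
    set B : Set Ω := {ω | Y m ω = -c} with hB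
    have hAmeas : MeasurableSet A := hY m (measurableSet_singleton c)
    have hBmeas : MeasurableSet B := hY m (measurableSet_singleton (-c))
    have hcne : c ≠ -c := by
      have : (0:ℝ) < c := by positivity
      intro h; linarith
    have hdisjAB : Disjoint A B := by
      refine Set.disjoint_left.2 (fun ω ha hb => hcne ?_)
      exact ha.symm.trans hb
    have hPAB : P (A ∪ B) = 1 := by
      rw [measure_union hdisjAB hBmeas, hp m, hm m]
      norm_num [ENNReal.inv_two_add_inv_two]
    set E : Set Ω := {ω | ∑ n ∈ range (m+1), Y n ω = w} with hE
    have hEA : E ∩ A = {ω | ∑ n ∈ range m, Y n ω = w - c} ∩ A := by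
      ext ω
      simp only [Set.mem_inter_iff, hE, hA, Set.mem_setOf_eq, Finset.sum_range_succ]
      constructor
      · rintro ⟨h1, h2⟩; exact ⟨by rw [h2] at h1; linarith, h2⟩
      · rintro ⟨h1, h2⟩; exact ⟨by rw [h2, h1]; ring, h2⟩
    have hEB : E ∩ B = {ω | ∑ n ∈ range m, Y n ω = w + c} ∩ B := by
      ext ω
      simp only [Set.mem_inter_iff, hE, hB, Set.mem_setOf_eq, Finset.sum_range_succ]
      constructor
      · rintro ⟨h1, h2⟩; exact ⟨by rw [h2] at h1; linarith, h2⟩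
      · rintro ⟨h1, h2⟩; exact ⟨by rw [h2, h1]; ring, h2⟩
    have hcompl : P ((A ∪ B)ᶜ) = 0 := by
      rw [measure_compl (hAmeas.union hBmeas) (by finiteness), hPAB, measure_univ, tsub_self]
    have hPE : P E = P {ω | ∑ n ∈ range m, Y n ω = w - c} * (1/2)
        + P {ω | ∑ n ∈ range m, Y n ω = w + c} * (1/2) := by
      have hsplitE : P E = P (E ∩ (A ∪ B)) := by
        have h0 : P (E \ (A ∪ B)) = 0 :=
          measure_mono_null (fun ω hω => hω.2) hcompl
        have h1 := measure_inter_add_diff (μ := P) E (hAmeas.union hBmeas)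
        rw [h0, add_zero] at h1
        exact h1.symm
      have hdisj2 : Disjoint (E ∩ A) (E ∩ B) :=
        hdisjAB.mono Set.inter_subset_right Set.inter_subset_right
      have hmeas2 : MeasurableSet (E ∩ B) := by
        rw [hEB]; exact (hAtomMeas _).inter hBmeas
      rw [hsplitE, Set.inter_union_distrib_left, measure_union hdisj2 hmeas2, hEA, hEB,
        hsplit (w - c) c, hsplit (w + c) (-c)]
      rw [show {ω | Y m ω = c} = A from rfl, show {ω | Y m ω = -c} = B from rfl,
        hA, hB, hc, hp m, hm m]
    have h2m : 2 ^ (m+1) = 2 ^ m * 2 := pow_succ 2 m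
    have hq : (0:ℝ) < (2⁻¹:ℝ)^m := by positivity
    have hfinal : ((2:ℝ≥0∞)^m)⁻¹ * (1/2) = ((2:ℝ≥0∞)^(m+1))⁻¹ := by
      rw [pow_succ, ENNReal.mul_inv (Or.inl (by positivity))
        (Or.inl (ENNReal.pow_ne_top ENNReal.ofNat_ne_top))]
      rw [one_div]
    rcases Nat.even_or_odd j with ⟨i, hi⟩ | ⟨i, hi⟩
    · have him : i < 2 ^ m := by omega
      have hwc : w + c = vv m i := by
        rw [hw, hc]; unfold vv; rw [pow_succ]; push_cast [hi]; ring
      have hdead : ∀ i', i' < 2 ^ m → w - c ≠ vv m i' := by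
        intro i' _ h
        rw [hw, hc] at h; unfold vv at h
        rw [pow_succ] at h
        ring_nf at h
        have hj' : (j:ℝ) = 2 * i' + 1 := by
          have h2 : (j:ℝ) * (2⁻¹:ℝ)^m = (2 * (i':ℝ) + 1) * (2⁻¹:ℝ)^m := by ring_nf; linarith
          exact mul_right_cancel₀ (ne_of_gt hq) h2
        have : j = 2 * i' + 1 := by exact_mod_cast hj'
        omega
      rw [hPE, hUnull _ hdead, hwc, IH i him, zero_mul, zero_add, hfinal]
    · have him : i < 2 ^ m := by omega
      have hwc : w - c = vv m i := by
        rw [hw, hc]; unfold vv; rw [pow_succ]; push_cast [hi]; ring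
      have hdead : ∀ i', i' < 2 ^ m → w + c ≠ vv m i' := by
        intro i' _ h
        rw [hw, hc] at h; unfold vv at h
        rw [pow_succ] at h
        ring_nf at h
        have hj' : (j:ℝ) + 1 = 2 * i' + 1 := by
          have h2 : ((j:ℝ) + 1) * (2⁻¹:ℝ)^m = (2 * (i':ℝ) + 1) * (2⁻¹:ℝ)^m := by
            ring_nf; linarith
          exact mul_right_cancel₀ (ne_of_gt hq) h2
        have : j + 1 = 2 * i' + 1 := by exact_mod_cast hj'
        omega
      rw [hPE, hUnull _ hdead, hwc, IH i him, zero_mul, add_zero, hfinal]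

/-- `S(2)` has the uniform distribution on `[-1, 1]`. -/
theorem stmt_1 {Ω : Type*} [MeasurableSpace Ω] (P : Measure Ω) [IsProbabilityMeasure P]
    (X : ℕ → Ω → ℝ) (hmeas : ∀ n, Measurable (X n))
    (hindep : iIndepFun X P)
    (h1 : ∀ n, P {ω | X n ω = 1} = 1 / 2) (h2 : ∀ n, P {ω | X n ω = -1} = 1 / 2)
    (S : ℝ → Ω → ℝ)
    (hS : ∀ l : ℝ, 1 < l → ∀ ω, S l ω = ∑' n : ℕ, l ^ (-(n + 1 : ℤ)) * X n ω) :
    P.map (S 2) = (1 / 2 : ENNReal) • (volume.restrict (Set.Icc (-1 : ℝ) 1)) := by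
  classical
  set Y : ℕ → Ω → ℝ := fun n => (fun x => (2⁻¹:ℝ)^(n+1) * x) ∘ X n with hYdef
  have hYeq : ∀ n ω, Y n ω = (2⁻¹:ℝ)^(n+1) * X n ω := fun n ω => rfl
  have hYmeas : ∀ n, Measurable (Y n) := fun n => (measurable_const_mul _).comp (hmeas n)
  have hYind : iIndepFun Y P :=
    hindep.comp (fun n x => (2⁻¹:ℝ)^(n+1) * x) (fun n => measurable_const_mul _)
  have hcpos : ∀ n : ℕ, (0:ℝ) < (2⁻¹:ℝ)^(n+1) := fun n => by positivity
  have hpY : ∀ n, P {ω | Y n ω = (2⁻¹:ℝ)^(n+1)} = 1/2 := by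
    intro n
    have hset : {ω | Y n ω = (2⁻¹:ℝ)^(n+1)} = {ω | X n ω = 1} := by
      ext ω; simp only [Set.mem_setOf_eq, hYeq]
      constructor
      · intro h
        exact mul_left_cancel₀ (ne_of_gt (hcpos n)) (h.trans (mul_one _).symm)
      · intro h; rw [h, mul_one]
    rw [hset]; exact h1 n
  have hmY : ∀ n, P {ω | Y n ω = -((2⁻¹:ℝ)^(n+1))} = 1/2 := by
    intro n
    have hset : {ω | Y n ω = -((2⁻¹:ℝ)^(n+1))} = {ω | X n ω = -1} := by
      ext ω; simp only [Set.mem_setOf_eq, hYeq]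
      constructor
      · intro h
        have h3 : (2⁻¹:ℝ)^(n+1) * X n ω = (2⁻¹:ℝ)^(n+1) * (-1) := by rw [h]; ring
        exact mul_left_cancel₀ (ne_of_gt (hcpos n)) h3
      · intro h; rw [h]; ring
    rw [hset]; exact h2 n
  have hf : ∀ ω, S 2 ω = ∑' n : ℕ, Y n ω := by
    intro ω
    rw [hS 2 (by norm_num) ω]
    apply tsum_congr
    intro n
    rw [hYeq]
    congr 1
    rw [show (-(n+1:ℤ)) = -((n+1 : ℕ) : ℤ) by push_cast; ring, zpow_neg, zpow_natCast, inv_pow]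
  set G : Set Ω := ⋂ n, ({ω | X n ω = 1} ∪ {ω | X n ω = -1}) with hG
  have hGmeas : MeasurableSet G := MeasurableSet.iInter (fun n =>
    (hmeas n (measurableSet_singleton 1)).union (hmeas n (measurableSet_singleton (-1))))
  have hGc : P Gᶜ = 0 := by
    rw [hG, Set.compl_iInter]
    refine measure_iUnion_null (fun n => ?_)
    have hdisj : Disjoint {ω | X n ω = 1} {ω | X n ω = -1} := by
      refine Set.disjoint_left.2 (fun ω ha hb => ?_)
      have : (1:ℝ) = -1 := ha.symm.trans hb
      norm_num at this
    have hun : P ({ω | X n ω = 1} ∪ {ω | X n ω = -1}) = 1 := by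
      rw [measure_union hdisj (hmeas n (measurableSet_singleton (-1))), h1 n, h2 n]
      norm_num [ENNReal.inv_two_add_inv_two]
    have hABm : MeasurableSet ({ω | X n ω = 1} ∪ {ω | X n ω = -1}) :=
      (hmeas n (measurableSet_singleton 1)).union (hmeas n (measurableSet_singleton (-1)))
    rw [measure_compl hABm (measure_ne_top P _), hun, measure_univ, tsub_self]
  have hXpm : ∀ ω ∈ G, ∀ n, X n ω = 1 ∨ X n ω = -1 := by
    intro ω hω n
    have := Set.mem_iInter.1 hω n
    rcases this with h | h
    · exact Or.inl h
    · exact Or.inr h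
  have habs : ∀ ω ∈ G, ∀ n, |Y n ω| = (2⁻¹:ℝ)^(n+1) := by
    intro ω hω n
    rcases hXpm ω hω n with h | h <;> rw [hYeq, h]
    · rw [mul_one, abs_of_pos (hcpos n)]
    · rw [mul_neg_one, abs_neg, abs_of_pos (hcpos n)]
  have hsumm : ∀ ω ∈ G, Summable (fun n => Y n ω) := by
    intro ω hω
    apply Summable.of_abs
    rw [show (fun n => |Y n ω|) = fun n : ℕ => (2⁻¹:ℝ)^(n+1) from funext (habs ω hω)]
    rw [show (fun n : ℕ => (2⁻¹:ℝ)^(n+1)) = fun n : ℕ => (2⁻¹:ℝ)^n * 2⁻¹ from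
      funext (fun n => pow_succ _ _)]
    exact (summable_geometric_of_lt_one (by norm_num) (by norm_num)).mul_right _
  have hsummgeo : ∀ m : ℕ, Summable (fun n : ℕ => (2⁻¹:ℝ)^(n + m + 1)) := by
    intro m
    rw [show (fun n : ℕ => (2⁻¹:ℝ)^(n+m+1)) = fun n : ℕ => (2⁻¹:ℝ)^n * (2⁻¹:ℝ)^(m+1) from
      funext (fun n => by rw [← pow_add]; ring_nf)]
    exact (summable_geometric_of_lt_one (by norm_num) (by norm_num)).mul_right _
  have hgeo : ∀ m : ℕ, ∑' n : ℕ, (2⁻¹:ℝ)^(n + m + 1) = (2⁻¹:ℝ)^m := by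
    intro m
    rw [show (fun n : ℕ => (2⁻¹:ℝ)^(n+m+1)) = fun n : ℕ => (2⁻¹:ℝ)^n * (2⁻¹:ℝ)^(m+1) from
      funext (fun n => by rw [← pow_add]; ring_nf)]
    rw [tsum_mul_right, tsum_geometric_of_lt_one (by norm_num) (by norm_num), pow_succ]
    norm_num
    ring
  have htail : ∀ ω ∈ G, ∀ m, |S 2 ω - ∑ n ∈ range m, Y n ω| ≤ (2⁻¹:ℝ)^m := by
    intro ω hω m
    have hsum := hsumm ω hω
    have hdecomp := hsum.sum_add_tsum_nat_add m
    have heq : S 2 ω - ∑ n ∈ range m, Y n ω = ∑' n : ℕ, Y (n + m) ω := by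
      rw [hf ω]; linarith [hdecomp]
    rw [heq]
    have habs' : ∀ n : ℕ, ‖Y (n+m) ω‖ = (2⁻¹:ℝ)^(n+m+1) := fun n => by
      rw [Real.norm_eq_abs]; exact habs ω hω (n+m)
    have hsumabs : Summable (fun n : ℕ => ‖Y (n+m) ω‖) := by
      rw [show (fun n : ℕ => ‖Y (n+m) ω‖) = fun n : ℕ => (2⁻¹:ℝ)^(n+m+1) from funext habs']
      exact hsummgeo m
    calc |∑' n : ℕ, Y (n+m) ω| ≤ ∑' n : ℕ, ‖Y (n+m) ω‖ := by
          rw [← Real.norm_eq_abs]; exact norm_tsum_le_tsum_norm hsumabs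
    _ = (2⁻¹:ℝ)^m := by
          rw [show (fun n : ℕ => ‖Y (n+m) ω‖) = fun n : ℕ => (2⁻¹:ℝ)^(n+m+1) from funext habs']
          exact hgeo m
  have hsmeas : ∀ m, Measurable (fun ω => ∑ n ∈ range m, Y n ω) := fun m =>
    Finset.measurable_sum _ (fun n _ => hYmeas n)
  have haet : ∀ᵐ ω ∂P, Filter.Tendsto (fun m => ∑ n ∈ range m, Y n ω)
      Filter.atTop (nhds (S 2 ω)) := by
    rw [MeasureTheory.ae_iff]
    refine measure_mono_null ?_ hGc
    intro ω hω
    simp only [Set.mem_setOf_eq] at hω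
    simp only [Set.mem_compl_iff]
    intro hωG
    exact hω (by rw [hf ω]; exact (hsumm ω hωG).hasSum.tendsto_sum_nat)
  have hfaem : AEMeasurable (S 2) P :=
    aemeasurable_of_tendsto_metrizable_ae Filter.atTop
      (fun m => (hsmeas m).aemeasurable) haet
  haveI : IsProbabilityMeasure (P.map (S 2)) := Measure.isProbabilityMeasure_map hfaem
  apply Measure.ext_of_Iic
  intro t
  have hIccInt : Set.Iic t ∩ Set.Icc (-1:ℝ) 1 = Set.Icc (-1) (min t 1) := by
    ext x
    simp only [Set.mem_inter_iff, Set.mem_Iic, Set.mem_Icc, le_min_iff]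
    constructor
    · rintro ⟨ha, hb, hc⟩; exact ⟨hb, ha, hc⟩
    · rintro ⟨ha, hb, hc⟩; exact ⟨hb, ha, hc⟩
  have hhalf : (1/2 : ℝ≥0∞) = ENNReal.ofReal (1/2) := by
    rw [ENNReal.ofReal_div_of_pos (by norm_num)]
    norm_num
  have hRHS : ((1/2 : ℝ≥0∞) • (volume.restrict (Set.Icc (-1:ℝ) 1))) (Set.Iic t)
      = ENNReal.ofReal ((min t 1 + 1)/2) := by
    rw [Measure.smul_apply, Measure.restrict_apply measurableSet_Iic, hIccInt, Real.volume_Icc,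
      smul_eq_mul, hhalf, ← ENNReal.ofReal_mul (by norm_num)]
    congr 1; ring
  rw [hRHS, Measure.map_apply_of_aemeasurable hfaem measurableSet_Iic]
  -- quantitative bounds
  have hAmeas : ∀ m (u:ℝ), MeasurableSet {ω | ∑ n ∈ range m, Y n ω = u} := fun m u =>
    hsmeas m (measurableSet_singleton u)
  have hatom := atom_prob P Y hYmeas hYind hpY hmY
  have hofe : ∀ m : ℕ, ((2:ℝ≥0∞)^m)⁻¹ = ENNReal.ofReal ((2⁻¹:ℝ)^m) := by
    intro m
    rw [ENNReal.ofReal_pow (by norm_num), ENNReal.ofReal_inv_of_pos (by norm_num),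
      ENNReal.ofReal_ofNat, ENNReal.inv_pow]
  have hdisjA : ∀ m, (Set.univ : Set ℕ).PairwiseDisjoint
      (fun j => {ω | ∑ n ∈ range m, Y n ω = vv m j}) := by
    intro m a _ b _ hab
    refine Set.disjoint_left.2 (fun ω ha hb => hab ?_)
    exact vv_inj (ha.symm.trans hb)
  have hPU : ∀ m, P (⋃ j ∈ (range (2^m) : Finset ℕ), {ω | ∑ n ∈ range m, Y n ω = vv m j}) = 1 := by
    intro m
    rw [measure_biUnion_finset ((hdisjA m).subset (Set.subset_univ _)) (fun j _ => hAmeas m _)]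
    rw [Finset.sum_congr rfl (fun j hj => hatom m j (mem_range.1 hj)), Finset.sum_const,
      Finset.card_range, nsmul_eq_mul]
    rw [show ((2^m : ℕ) : ℝ≥0∞) = (2:ℝ≥0∞)^m by push_cast; ring]
    exact ENNReal.mul_inv_cancel (by positivity) (ENNReal.pow_ne_top ENNReal.ofNat_ne_top)
  have hfilter : ∀ (m:ℕ) (c:ℝ), (range (2^m)).filter (fun j : ℕ => vv m j ≤ c)
      = (range (2^m)).filter (fun j : ℕ => (j:ℝ) ≤ ((c+1)/(2⁻¹:ℝ)^m - 1)/2) := by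
    intro m c
    apply Finset.filter_congr
    intro j _
    have he : (0:ℝ) < (2⁻¹:ℝ)^m := by positivity
    unfold vv
    constructor
    · intro h
      have h2 : (2*(j:ℝ)+1) * (2⁻¹:ℝ)^m ≤ c + 1 := by linarith
      have h3 : (2*(j:ℝ)+1) ≤ (c+1)/(2⁻¹:ℝ)^m := (le_div_iff₀ he).2 h2
      linarith
    · intro h
      have h3 : (2*(j:ℝ)+1) ≤ (c+1)/(2⁻¹:ℝ)^m := by linarith
      have h2 := (le_div_iff₀ he).1 h3
      linarith
  have hupper : ∀ m : ℕ, P (S 2 ⁻¹' Set.Iic t)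
      ≤ ENNReal.ofReal ((min t 1 + 1)/2) + ENNReal.ofReal (2 * (2⁻¹:ℝ)^m) := by
    intro m
    have he : (0:ℝ) < (2⁻¹:ℝ)^m := by positivity
    set e : ℝ := (2⁻¹:ℝ)^m with hedef
    set Jup := (range (2^m)).filter (fun j : ℕ => vv m j ≤ t + e) with hJup
    set U := ⋃ j ∈ (range (2^m) : Finset ℕ), {ω | ∑ n ∈ range m, Y n ω = vv m j} with hU
    have hUmeas : MeasurableSet U :=
      MeasurableSet.biUnion (Finset.countable_toSet _) (fun i _ => hAmeas m _)
    have hUc : P Uᶜ = 0 := by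
      rw [measure_compl hUmeas (measure_ne_top P _), hPU m, measure_univ, tsub_self]
    have hsub : S 2 ⁻¹' Set.Iic t ⊆ (Gᶜ ∪ Uᶜ) ∪
        ⋃ j ∈ Jup, {ω | ∑ n ∈ range m, Y n ω = vv m j} := by
      intro ω hω
      by_cases hωG : ω ∈ G
      · by_cases hωU : ω ∈ U
        · right
          rw [hU] at hωU
          simp only [Set.mem_iUnion, exists_prop] at hωU ⊢
          obtain ⟨j, hj1, hj2⟩ := hωU
          simp only [Set.mem_setOf_eq] at hj2
          refine ⟨j, ?_, hj2⟩
          rw [hJup, mem_filter]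
          refine ⟨hj1, ?_⟩
          have h4 := htail ω hωG m
          rw [abs_le] at h4
          have h6 : S 2 ω ≤ t := hω
          rw [← hj2]
          linarith [h4.2]
        · exact Or.inl (Or.inr hωU)
      · exact Or.inl (Or.inl hωG)
    have hcardsum : P (⋃ j ∈ Jup, {ω | ∑ n ∈ range m, Y n ω = vv m j})
        ≤ ENNReal.ofReal ((Jup.card : ℝ) * e) := by
      refine le_trans (measure_biUnion_finset_le _ _) ?_
      rw [Finset.sum_congr rfl (fun j hj => hatom m j
        (mem_range.1 (mem_filter.1 hj).1)), Finset.sum_const, nsmul_eq_mul, hofe m,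
        ← ENNReal.ofReal_natCast, ← ENNReal.ofReal_mul (Nat.cast_nonneg _)]
    have hchain : P (S 2 ⁻¹' Set.Iic t) ≤ ENNReal.ofReal ((Jup.card : ℝ) * e) := by
      refine le_trans (measure_mono hsub) ?_
      refine le_trans (measure_union_le _ _) ?_
      have hz : P (Gᶜ ∪ Uᶜ) = 0 :=
        measure_union_null hGc hUc
      rw [hz, zero_add]
      exact hcardsum
    refine hchain.trans ?_
    -- now the real estimate
    have hcard1 : (Jup.card : ℝ) ≤ max 0 (((t + e + 1)/e - 1)/2 + 1) := by
      rw [hJup, hfilter m (t + e)]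
      exact count_upper _ _
    have hcard2 : (Jup.card : ℝ) ≤ (2:ℝ)^m := by
      have := Finset.card_filter_le (range (2^m)) (fun j : ℕ => vv m j ≤ t + e)
      rw [Finset.card_range] at this
      calc (Jup.card : ℝ) ≤ ((2^m : ℕ) : ℝ) := by exact_mod_cast this
      _ = (2:ℝ)^m := by push_cast; ring
    have hNe : (2:ℝ)^m * e = 1 := by
      rw [hedef, ← mul_pow]; norm_num
    by_cases hT2 : 0 ≤ (min t 1 + 1)/2 + 2*e
    · refine le_trans (ENNReal.ofReal_le_ofReal ?_) (ENNReal.ofReal_add_le)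
      rcases le_or_gt (((t + e + 1)/e - 1)/2 + 1) 0 with hx | hx
      · have : (Jup.card : ℝ) ≤ 0 := by rw [max_eq_left hx] at hcard1; exact hcard1
        nlinarith
      · rw [max_eq_right hx.le] at hcard1
        have hxe : (((t + e + 1)/e - 1)/2 + 1) * e = (t+1)/2 + e := by
          have : (t + e + 1)/e * e = t + e + 1 := div_mul_cancel₀ _ (ne_of_gt he)
          nlinarith
        have hJe : (Jup.card : ℝ) * e ≤ (t+1)/2 + e := by
          calc (Jup.card : ℝ) * e ≤ (((t + e + 1)/e - 1)/2 + 1) * e :=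
                mul_le_mul_of_nonneg_right hcard1 he.le
          _ = (t+1)/2 + e := hxe
        have hJe1 : (Jup.card : ℝ) * e ≤ 1 := by
          calc (Jup.card : ℝ) * e ≤ (2:ℝ)^m * e := mul_le_mul_of_nonneg_right hcard2 he.le
          _ = 1 := hNe
        rcases le_total t 1 with ht | ht
        · rw [min_eq_left ht]; linarith
        · rw [min_eq_right ht]; linarith
    · push_neg at hT2
      have htneg : t < -1 := by
        rcases le_total t 1 with ht | ht
        · rw [min_eq_left ht] at hT2; linarith
        · rw [min_eq_right ht] at hT2; linarith
      have hJempty : Jup = ∅ := by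
        rw [hJup, Finset.filter_eq_empty_iff]
        intro j _
        unfold vv
        have hj0 : (0:ℝ) ≤ (j:ℝ) := Nat.cast_nonneg j
        have : (2*(j:ℝ)+1) * e ≥ e := by nlinarith
        push_neg
        nlinarith
      rw [hJempty]
      simp
  have hlower : ∀ m : ℕ, ENNReal.ofReal ((min t 1 + 1)/2)
      ≤ P (S 2 ⁻¹' Set.Iic t) + ENNReal.ofReal ((2⁻¹:ℝ)^m) := by
    intro m
    have he : (0:ℝ) < (2⁻¹:ℝ)^m := by positivity
    set e : ℝ := (2⁻¹:ℝ)^m with hedef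
    set Jlo := (range (2^m)).filter (fun j : ℕ => vv m j ≤ t - e) with hJlo
    set U := ⋃ j ∈ Jlo, {ω | ∑ n ∈ range m, Y n ω = vv m j} with hU
    have hsub : U ∩ G ⊆ S 2 ⁻¹' Set.Iic t := by
      rintro ω ⟨hωU, hωG⟩
      rw [hU] at hωU
      simp only [Set.mem_iUnion, exists_prop] at hωU
      obtain ⟨j, hj1, hj2⟩ := hωU
      simp only [Set.mem_setOf_eq] at hj2
      have hjle : vv m j ≤ t - e := (mem_filter.1 hj1).2
      have h4 := htail ω hωG m
      rw [abs_le] at h4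
      show S 2 ω ≤ t
      rw [hj2] at h4
      linarith [h4.1]
    have hP1 : P U ≤ P (S 2 ⁻¹' Set.Iic t) := by
      have h0 := measure_inter_add_diff (μ := P) U hGmeas
      have h00 : P (U \ G) = 0 := measure_mono_null (fun ω hω => hω.2) hGc
      calc P U = P (U ∩ G) := by rw [← h0, h00, add_zero]
      _ ≤ _ := measure_mono hsub
    have hPJ : P U = ENNReal.ofReal ((Jlo.card : ℝ) * e) := by
      rw [hU, measure_biUnion_finset ((hdisjA m).subset (Set.subset_univ _))
        (fun j _ => hAmeas m _)]
      rw [Finset.sum_congr rfl (fun j hj => hatom m j (mem_range.1 (mem_filter.1 hj).1)),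
        Finset.sum_const, nsmul_eq_mul, hofe m,
        ← ENNReal.ofReal_natCast, ← ENNReal.ofReal_mul (Nat.cast_nonneg _)]
    have hNe : (2:ℝ)^m * e = 1 := by
      rw [hedef, ← mul_pow]; norm_num
    have hcardlo : min ((2:ℝ)^m) (((t - e + 1)/e - 1)/2) ≤ (Jlo.card : ℝ) := by
      rw [hJlo, hfilter m (t - e)]
      have := count_lower (2^m) (((t - e + 1)/e - 1)/2)
      rw [show ((2^m : ℕ) : ℝ) = (2:ℝ)^m by push_cast; ring] at this
      exact this
    have hxe : (((t - e + 1)/e - 1)/2) * e = (t+1)/2 - e := by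
      have : (t - e + 1)/e * e = t - e + 1 := div_mul_cancel₀ _ (ne_of_gt he)
      nlinarith
    have hreal : (min t 1 + 1)/2 ≤ (Jlo.card : ℝ) * e + e := by
      have hmin : min ((2:ℝ)^m) (((t - e + 1)/e - 1)/2) * e ≤ (Jlo.card : ℝ) * e :=
        mul_le_mul_of_nonneg_right hcardlo he.le
      rw [min_mul_of_nonneg _ _ he.le, hNe, hxe] at hmin
      rcases le_total t 1 with ht | ht
      · rw [min_eq_left ht]
        rcases min_cases 1 ((t+1)/2 - e) with ⟨hm1, _⟩ | ⟨hm1, hm2⟩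
        · rw [hm1] at hmin; linarith
        · rw [hm1] at hmin; linarith
      · rw [min_eq_right ht]
        rcases min_cases 1 ((t+1)/2 - e) with ⟨hm1, _⟩ | ⟨hm1, hm2⟩
        · rw [hm1] at hmin; linarith
        · rw [hm1] at hmin; linarith
    calc ENNReal.ofReal ((min t 1 + 1)/2) ≤ ENNReal.ofReal ((Jlo.card : ℝ) * e + e) :=
          ENNReal.ofReal_le_ofReal hreal
    _ ≤ ENNReal.ofReal ((Jlo.card : ℝ) * e) + ENNReal.ofReal e := ENNReal.ofReal_add_le
    _ ≤ P (S 2 ⁻¹' Set.Iic t) + ENNReal.ofReal e := by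
          rw [← hPJ]; exact add_le_add_left hP1 _
  apply le_antisymm
  · refine ENNReal.le_of_forall_pos_le_add (fun ε hε _ => ?_)
    have hεpos : (0:ℝ) < (ε:ℝ)/2 := div_pos (NNReal.coe_pos.2 hε) two_pos
    obtain ⟨m, hm⟩ := exists_pow_lt_of_lt_one hεpos (by norm_num : (2⁻¹:ℝ) < 1)
    refine (hupper m).trans (add_le_add_right ?_ _)
    rw [← ENNReal.ofReal_coe_nnreal]
    exact ENNReal.ofReal_le_ofReal (by linarith)
  · refine ENNReal.le_of_forall_pos_le_add (fun ε hε _ => ?_)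
    have hεpos : (0:ℝ) < (ε:ℝ) := NNReal.coe_pos.2 hε
    obtain ⟨m, hm⟩ := exists_pow_lt_of_lt_one hεpos (by norm_num : (2⁻¹:ℝ) < 1)
    refine (hlower m).trans (add_le_add_right ?_ _)
    rw [← ENNReal.ofReal_coe_nnreal]
    exact ENNReal.ofReal_le_ofReal hm.le
end

section
/- For every λ > 1 and every integer n ≥ 1, the odd moments vanish, m_{2n−1}(λ) = 0, and the even moments satisfy the recursion m_{2n}(λ) = (λ^{2n} − 1)^{−1} · Σ_{j=0}^{n−1} C(2n, 2j) · m_{2j}(λ), with m_0(λ) = 1. -/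
open MeasureTheory ProbabilityTheory Finset Filter

section Aux

variable {Ω : Type*} [MeasurableSpace Ω] {P : Measure Ω} [IsProbabilityMeasure P]
  {X : ℕ → Ω → ℝ}

lemma aux_ae (hmeas : ∀ n, Measurable (X n))
    (h1 : ∀ n, P {ω | X n ω = 1} = 1 / 2) (h2 : ∀ n, P {ω | X n ω = -1} = 1 / 2)
    (n : ℕ) : ∀ᵐ ω ∂P, X n ω = 1 ∨ X n ω = -1 := by
  have hA : MeasurableSet {ω | X n ω = 1} := hmeas n (measurableSet_singleton 1)
  have hB : MeasurableSet {ω | X n ω = -1} := hmeas n (measurableSet_singleton (-1))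
  have hdisj : Disjoint {ω | X n ω = 1} {ω | X n ω = -1} := by
    rw [Set.disjoint_left]
    rintro ω (h : X n ω = 1) (h' : X n ω = -1)
    rw [h] at h'; norm_num at h'
  have hunion : P ({ω | X n ω = 1} ∪ {ω | X n ω = -1}) = 1 := by
    rw [measure_union hdisj hB, h1, h2]
    rw [ENNReal.div_add_div_same]
    rw [one_add_one_eq_two]
    exact ENNReal.div_self (two_ne_zero) (ENNReal.ofNat_ne_top)
  have : P ({ω | X n ω = 1} ∪ {ω | X n ω = -1})ᶜ = 0 := by
    rw [measure_compl (hA.union hB) (measure_ne_top _ _), measure_univ, hunion, tsub_self]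
  have hmem : {ω | X n ω = 1} ∪ {ω | X n ω = -1} ∈ ae P := mem_ae_iff.2 this
  filter_upwards [hmem] with ω hω
  simpa [Set.mem_union] using hω

lemma aux_ae' (hmeas : ∀ n, Measurable (X n))
    (h1 : ∀ n, P {ω | X n ω = 1} = 1 / 2) (h2 : ∀ n, P {ω | X n ω = -1} = 1 / 2) :
    ∀ᵐ ω ∂P, ∀ n, X n ω = 1 ∨ X n ω = -1 :=
  ae_all_iff.2 (aux_ae hmeas h1 h2)

lemma aux_int (hmeas : ∀ n, Measurable (X n))
    (h1 : ∀ n, P {ω | X n ω = 1} = 1 / 2) (h2 : ∀ n, P {ω | X n ω = -1} = 1 / 2)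
    (n : ℕ) : ∫ ω, X n ω ∂P = 0 := by
  have hA : MeasurableSet {ω | X n ω = 1} := hmeas n (measurableSet_singleton 1)
  have hB : MeasurableSet {ω | X n ω = -1} := hmeas n (measurableSet_singleton (-1))
  have hcong : X n =ᵐ[P] fun ω =>
      Set.indicator {ω | X n ω = 1} (fun _ => (1:ℝ)) ω
        + Set.indicator {ω | X n ω = -1} (fun _ => (-1:ℝ)) ω := by
    filter_upwards [aux_ae hmeas h1 h2 n] with ω hω
    rcases hω with h | h <;>
      norm_num [Set.indicator_apply, Set.mem_setOf_eq, h]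
  rw [integral_congr_ae hcong, integral_add
    ((integrable_const (1:ℝ)).indicator hA) ((integrable_const (-1:ℝ)).indicator hB),
    integral_indicator_const _ hA, integral_indicator_const _ hB, measureReal_def, measureReal_def, h1, h2]
  norm_num [ENNReal.toReal_div]

lemma aux_pow (hmeas : ∀ n, Measurable (X n))
    (h1 : ∀ n, P {ω | X n ω = 1} = 1 / 2) (h2 : ∀ n, P {ω | X n ω = -1} = 1 / 2)
    (n a : ℕ) : ∫ ω, X n ω ^ a ∂P = if Even a then 1 else 0 := by
  rcases Nat.even_or_odd a with ha | ha
  · have : (fun ω => X n ω ^ a) =ᵐ[P] fun _ => (1:ℝ) := by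
      filter_upwards [aux_ae hmeas h1 h2 n] with ω hω
      rcases hω with h | h <;> simp [h, ha.neg_one_pow]
    rw [integral_congr_ae this]
    simp [ha]
  · have : (fun ω => X n ω ^ a) =ᵐ[P] X n := by
      filter_upwards [aux_ae hmeas h1 h2 n] with ω hω
      rcases hω with h | h <;> simp [h, ha.neg_one_pow]
    rw [integral_congr_ae this, aux_int hmeas h1 h2 n]
    simp [Nat.not_even_iff_odd.2 ha]

lemma aux_prod (hmeas : ∀ n, Measurable (X n))
    (hindep : iIndepFun X P)
    (h1 : ∀ n, P {ω | X n ω = 1} = 1 / 2) (h2 : ∀ n, P {ω | X n ω = -1} = 1 / 2)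
    (t : Finset ℕ) (e : ℕ → ℕ) :
    ∫ ω, ∏ b ∈ t, X b ω ^ e b ∂P = ∏ b ∈ t, (if Even (e b) then (1:ℝ) else 0) := by
  classical
  induction t using Finset.induction_on with
  | empty => simp
  | @insert a s ha ih =>
    have hmp : ∀ n : ℕ, Measurable fun ω => X n ω ^ e n :=
      fun n => (hmeas n).pow_const _
    have hip : iIndepFun (fun n ω => X n ω ^ e n) P :=
      hindep.comp (fun n x => x ^ e n) (fun n => measurable_id.pow_const _)
    have hIF : IndepFun (fun ω => ∏ b ∈ s, X b ω ^ e b) (fun ω => X a ω ^ e a) P := by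
      have := hip.indepFun_finsetProd_of_notMem hmp ha
      convert this using 1
      ext ω
      simp
    simp only [Finset.prod_insert ha]
    have heq : ∫ ω, X a ω ^ e a * ∏ b ∈ s, X b ω ^ e b ∂P
        = ∫ ω, ((fun ω => X a ω ^ e a) * (fun ω => ∏ b ∈ s, X b ω ^ e b)) ω ∂P := by
      simp [Pi.mul_apply]
    have hint : ∫ ω, X a ω ^ e a * ∏ b ∈ s, X b ω ^ e b ∂P
        = (∫ ω, X a ω ^ e a ∂P) * ∫ ω, ∏ b ∈ s, X b ω ^ e b ∂P := by
      rw [heq]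
      exact hIF.symm.integral_mul_eq_mul_integral (hmp a).aestronglyMeasurable
        (Finset.measurable_prod s fun b _ => hmp b).aestronglyMeasurable
    rw [hint, ih, aux_pow hmeas h1 h2]

lemma aux_shift (hmeas : ∀ n, Measurable (X n))
    (hindep : iIndepFun X P)
    (h1 : ∀ n, P {ω | X n ω = 1} = 1 / 2) (h2 : ∀ n, P {ω | X n ω = -1} = 1 / 2)
    (c : ℕ → ℝ) (q : ℕ → ℕ) (hq : Function.Injective q) (N k : ℕ) :
    ∫ ω, (∑ n ∈ range N, c n * X (q n) ω) ^ k ∂P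
      = ∑ p ∈ Fintype.piFinset (fun _ : Fin k => range N),
          (∏ i, c (p i)) *
            ∏ b ∈ Finset.image p univ,
              (if Even ((univ.filter (fun i => p i = b)).card) then (1:ℝ) else 0) := by
  classical
  have hIprod : ∀ (g : Fin k → ℕ), Integrable (fun ω => ∏ i, X (g i) ω) P := by
    intro g
    refine Integrable.mono' (integrable_const (1:ℝ))
      ((Finset.measurable_prod univ fun i _ => hmeas (g i)).aestronglyMeasurable) ?_
    filter_upwards [aux_ae' hmeas h1 h2] with ω hω
    rw [Real.norm_eq_abs, Finset.abs_prod]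
    have : ∀ i ∈ univ, |X (g i) ω| = 1 := by
      intro i _
      rcases hω (g i) with h | h <;> simp [h]
    rw [Finset.prod_congr rfl this]
    simp
  have hexp : ∀ ω, (∑ n ∈ range N, c n * X (q n) ω) ^ k
      = ∑ p ∈ Fintype.piFinset (fun _ : Fin k => range N),
          (∏ i, c (p i)) * ∏ i, X (q (p i)) ω := by
    intro ω
    have h1' : (∑ n ∈ range N, c n * X (q n) ω) ^ k
        = ∏ _i : Fin k, (∑ n ∈ range N, c n * X (q n) ω) := by
      rw [Finset.prod_const, Finset.card_univ, Fintype.card_fin]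
    rw [h1', Finset.prod_univ_sum]
    refine Finset.sum_congr rfl fun p _ => ?_
    rw [← Finset.prod_mul_distrib]
  simp only [hexp]
  rw [integral_finset_sum _ (fun p _ => ((hIprod fun i => q (p i)).const_mul _))]
  refine Finset.sum_congr rfl fun p _ => ?_
  rw [MeasureTheory.integral_const_mul]
  congr 1
  have hcomp : ∀ ω : Ω, ∏ i, X (q (p i)) ω
      = ∏ b ∈ Finset.image (fun i => q (p i)) univ,
          X b ω ^ ((univ.filter fun i => q (p i) = b).card) :=
    fun ω => Finset.prod_comp (fun b => X b ω) (fun i => q (p i))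
  simp only [hcomp]
  rw [aux_prod hmeas hindep h1 h2]
  have himg : Finset.image (fun i => q (p i)) univ = Finset.image q (Finset.image p univ) := by
    rw [Finset.image_image]; rfl
  rw [himg, Finset.prod_image (fun x _ y _ h => hq h)]
  refine Finset.prod_congr rfl fun b _ => ?_
  simp only [hq.eq_iff]

lemma aux_shift_eq (hmeas : ∀ n, Measurable (X n))
    (hindep : iIndepFun X P)
    (h1 : ∀ n, P {ω | X n ω = 1} = 1 / 2) (h2 : ∀ n, P {ω | X n ω = -1} = 1 / 2)
    (c : ℕ → ℝ) (N k : ℕ) :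
    ∫ ω, (∑ n ∈ range N, c n * X (n + 1) ω) ^ k ∂P
      = ∫ ω, (∑ n ∈ range N, c n * X n ω) ^ k ∂P := by
  have hid := aux_shift hmeas hindep h1 h2 c id Function.injective_id N k
  simp only [id_eq] at hid
  rw [aux_shift hmeas hindep h1 h2 c Nat.succ Nat.succ_injective N k, ← hid]

end Aux

/-- odd moments vanish and the even moments satisfy
`m_(2n)(λ) = (λ^(2n) - 1)⁻¹ ∑_{j=0}^{n-1} C(2n,2j) m_(2j)(λ)`, with `m_0(λ) = 1`. -/
theorem stmt_4 {Ω : Type*} [MeasurableSpace Ω] (P : Measure Ω) [IsProbabilityMeasure P]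
    (X : ℕ → Ω → ℝ) (hmeas : ∀ n, Measurable (X n))
    (hindep : iIndepFun X P)
    (h1 : ∀ n, P {ω | X n ω = 1} = 1 / 2) (h2 : ∀ n, P {ω | X n ω = -1} = 1 / 2)
    (S : ℝ → Ω → ℝ)
    (hS : ∀ l : ℝ, 1 < l → ∀ ω, S l ω = ∑' n : ℕ, l ^ (-(n + 1 : ℤ)) * X n ω)
    (m : ℝ → ℕ → ℝ) (hm : ∀ l k, m l k = ∫ ω, (S l ω) ^ k ∂P)
    (l : ℝ) (hl : 1 < l) (n : ℕ) (hn : 1 ≤ n) :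
    m l 0 = 1 ∧ m l (2 * n - 1) = 0 ∧
      m l (2 * n) = (l ^ (2 * n) - 1)⁻¹ *
        ∑ j ∈ Finset.range n, ((2 * n).choose (2 * j) : ℝ) * m l (2 * j) := by
  classical
  have hl0 : (0:ℝ) < l := lt_trans one_pos hl
  set r : ℝ := l⁻¹ with hr_def
  have hr0 : 0 < r := inv_pos.2 hl0
  have hr1 : r < 1 := inv_lt_one_of_one_lt₀ hl
  set c : ℕ → ℝ := fun n => r ^ (n + 1) with hc_def
  have hc_nonneg : ∀ n, 0 ≤ c n := fun n => pow_nonneg hr0.le _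
  have hc_sum : Summable c := by
    have : Summable (fun n : ℕ => r ^ n * r) :=
      (summable_geometric_of_lt_one hr0.le hr1).mul_right r
    simpa [hc_def, pow_succ] using this
  set B : ℝ := ∑' n, c n with hB_def
  have hB0 : 0 ≤ B := tsum_nonneg hc_nonneg
  have hc_eq : ∀ nn : ℕ, l ^ (-(nn + 1 : ℤ)) = c nn := by
    intro nn
    rw [zpow_neg, show ((nn : ℤ) + 1) = ((nn + 1 : ℕ) : ℤ) by push_cast; ring,
      zpow_natCast, ← inv_pow]
  -- partial sums and shifted series
  set SN : ℕ → Ω → ℝ := fun N ω => ∑ n ∈ range N, c n * X n ω with hSN_def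
  set S' : Ω → ℝ := fun ω => ∑' n, c n * X (n + 1) ω with hS'_def
  set S'N : ℕ → Ω → ℝ := fun N ω => ∑ n ∈ range N, c n * X (n + 1) ω with hS'N_def
  have hG := aux_ae' hmeas h1 h2
  have hSN_meas : ∀ N, Measurable (SN N) :=
    fun N => Finset.measurable_sum _ (fun n _ => (hmeas n).const_mul _)
  have hS'N_meas : ∀ N, Measurable (S'N N) :=
    fun N => Finset.measurable_sum _ (fun n _ => (hmeas (n + 1)).const_mul _)
  -- pointwise facts on the good set
  have hgood : ∀ ω, (∀ nn, X nn ω = 1 ∨ X nn ω = -1) →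
      (∀ g : ℕ → ℕ, ∀ nn, ‖c nn * X (g nn) ω‖ = c nn) := by
    intro ω hω g nn
    rcases hω (g nn) with h | h <;>
      simp [h, Real.norm_eq_abs, abs_mul, abs_of_nonneg (hc_nonneg nn)]
  have hsum : ∀ ω, (∀ nn, X nn ω = 1 ∨ X nn ω = -1) →
      ∀ g : ℕ → ℕ, Summable (fun nn => c nn * X (g nn) ω) := by
    intro ω hω g
    exact Summable.of_norm_bounded hc_sum (fun nn => le_of_eq (hgood ω hω g nn))
  have htsum_bd : ∀ ω, (∀ nn, X nn ω = 1 ∨ X nn ω = -1) →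
      ∀ g : ℕ → ℕ, ‖∑' nn, c nn * X (g nn) ω‖ ≤ B := by
    intro ω hω g
    have hs : Summable fun nn => ‖c nn * X (g nn) ω‖ :=
      hc_sum.congr (fun nn => (hgood ω hω g nn).symm)
    refine le_trans (norm_tsum_le_tsum_norm hs) ?_
    rw [tsum_congr (hgood ω hω g)]
  have hSeq : ∀ ω, S l ω = ∑' nn, c nn * X nn ω := by
    intro ω
    rw [hS l hl ω]
    exact tsum_congr fun nn => by rw [hc_eq nn]
  have hSbd : ∀ ω, (∀ nn, X nn ω = 1 ∨ X nn ω = -1) → |S l ω| ≤ B := by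
    intro ω hω
    rw [hSeq ω, ← Real.norm_eq_abs]
    exact htsum_bd ω hω id
  have hS'bd : ∀ ω, (∀ nn, X nn ω = 1 ∨ X nn ω = -1) → |S' ω| ≤ B := by
    intro ω hω
    rw [hS'_def, ← Real.norm_eq_abs]
    exact htsum_bd ω hω (fun nn => nn + 1)
  have hSNbd : ∀ N ω, (∀ nn, X nn ω = 1 ∨ X nn ω = -1) → |SN N ω| ≤ B := by
    intro N ω hω
    calc |SN N ω| ≤ ∑ nn ∈ range N, ‖c nn * X nn ω‖ := by
          rw [← Real.norm_eq_abs]; exact norm_sum_le _ _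
    _ = ∑ nn ∈ range N, c nn := Finset.sum_congr rfl fun nn _ => hgood ω hω id nn
    _ ≤ B := Summable.sum_le_tsum _ (fun nn _ => hc_nonneg nn) hc_sum
  have hS'Nbd : ∀ N ω, (∀ nn, X nn ω = 1 ∨ X nn ω = -1) → |S'N N ω| ≤ B := by
    intro N ω hω
    calc |S'N N ω| ≤ ∑ nn ∈ range N, ‖c nn * X (nn + 1) ω‖ := by
          rw [← Real.norm_eq_abs]; exact norm_sum_le _ _
    _ = ∑ nn ∈ range N, c nn :=
          Finset.sum_congr rfl fun nn _ => hgood ω hω (fun x => x + 1) nn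
    _ ≤ B := Summable.sum_le_tsum _ (fun nn _ => hc_nonneg nn) hc_sum
  have htendS : ∀ ω, (∀ nn, X nn ω = 1 ∨ X nn ω = -1) →
      Tendsto (fun N => SN N ω) atTop (nhds (S l ω)) := by
    intro ω hω
    rw [hSeq ω]
    exact (hsum ω hω id).hasSum.tendsto_sum_nat
  have htendS' : ∀ ω, (∀ nn, X nn ω = 1 ∨ X nn ω = -1) →
      Tendsto (fun N => S'N N ω) atTop (nhds (S' ω)) := by
    intro ω hω
    exact (hsum ω hω (fun nn => nn + 1)).hasSum.tendsto_sum_nat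
  have hSam : AEMeasurable (S l) P := by
    refine aemeasurable_of_tendsto_metrizable_ae atTop
      (fun N => (hSN_meas N).aemeasurable) ?_
    filter_upwards [hG] with ω hω using htendS ω hω
  have hS'am : AEMeasurable S' P := by
    refine aemeasurable_of_tendsto_metrizable_ae atTop
      (fun N => (hS'N_meas N).aemeasurable) ?_
    filter_upwards [hG] with ω hω using htendS' ω hω
  -- integral limits
  have hSlim : ∀ i : ℕ, Tendsto (fun N => ∫ ω, SN N ω ^ i ∂P) atTop
      (nhds (∫ ω, S l ω ^ i ∂P)) := by
    intro i
    refine tendsto_integral_of_dominated_convergence (fun _ => B ^ i)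
      (fun N => ((hSN_meas N).pow_const i).aestronglyMeasurable)
      (integrable_const _) (fun N => ?_) ?_
    · filter_upwards [hG] with ω hω
      rw [Real.norm_eq_abs, abs_pow]
      exact pow_le_pow_left₀ (abs_nonneg _) (hSNbd N ω hω) i
    · filter_upwards [hG] with ω hω
      exact (htendS ω hω).pow i
  have hS'lim : ∀ i : ℕ, Tendsto (fun N => ∫ ω, S'N N ω ^ i ∂P) atTop
      (nhds (∫ ω, S' ω ^ i ∂P)) := by
    intro i
    refine tendsto_integral_of_dominated_convergence (fun _ => B ^ i)
      (fun N => ((hS'N_meas N).pow_const i).aestronglyMeasurable)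
      (integrable_const _) (fun N => ?_) ?_
    · filter_upwards [hG] with ω hω
      rw [Real.norm_eq_abs, abs_pow]
      exact pow_le_pow_left₀ (abs_nonneg _) (hS'Nbd N ω hω) i
    · filter_upwards [hG] with ω hω
      exact (htendS' ω hω).pow i
  have hS'mom : ∀ i : ℕ, ∫ ω, S' ω ^ i ∂P = m l i := by
    intro i
    have heach : ∀ N, ∫ ω, S'N N ω ^ i ∂P = ∫ ω, SN N ω ^ i ∂P :=
      fun N => aux_shift_eq hmeas hindep h1 h2 c N i
    have h1' : Tendsto (fun N => ∫ ω, S'N N ω ^ i ∂P) atTop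
        (nhds (∫ ω, S l ω ^ i ∂P)) := by
      simp only [heach]
      exact hSlim i
    rw [hm l i]
    exact tendsto_nhds_unique (hS'lim i) h1'
  -- independence of X 0 and S'N
  set Z : ℕ → Ω → ℝ := fun nn ω => if nn = 0 then X nn ω else c (nn - 1) * X nn ω with hZ_def
  have hZm : ∀ nn, Measurable (Z nn) := by
    intro nn
    by_cases h : nn = 0 <;> simp only [hZ_def, h, if_true, if_false, reduceIte] <;>
      first
        | exact hmeas 0
        | exact (hmeas nn).const_mul _
  have hZi : iIndepFun Z P := by
    have := hindep.comp (fun nn x => if nn = 0 then x else c (nn - 1) * x)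
      (fun nn => by
        by_cases h : nn = 0 <;> simp only [h, if_true, if_false, reduceIte]
        · exact measurable_id
        · exact measurable_id.const_mul _)
    convert this using 2
    rfl
  have hIndepN : ∀ N, IndepFun (X 0) (S'N N) P := by
    intro N
    have h0 : (0:ℕ) ∉ (range N).image (· + 1) := by simp
    have hind := (hZi.indepFun_finsetSum_of_notMem hZm h0).symm
    have hZ0 : Z 0 = X 0 := by funext ω; simp [hZ_def]
    have hZS : (∑ nn ∈ (range N).image (· + 1), Z nn) = S'N N := by
      funext ω
      rw [Finset.sum_apply]
      rw [Finset.sum_image (by intro x _ y _ h; simp only at h; omega)]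
      refine Finset.sum_congr rfl fun nn _ => ?_
      simp [hZ_def]
    rw [hZ0, hZS] at hind
    exact hind
  -- factorization of mixed moments
  have hfac : ∀ j i : ℕ, ∫ ω, X 0 ω ^ j * S' ω ^ i ∂P
      = (if Even j then (1:ℝ) else 0) * m l i := by
    intro j i
    have hfacN : ∀ N, ∫ ω, X 0 ω ^ j * S'N N ω ^ i ∂P
        = (∫ ω, X 0 ω ^ j ∂P) * ∫ ω, S'N N ω ^ i ∂P := by
      intro N
      have hIF : IndepFun (fun ω => X 0 ω ^ j) (fun ω => S'N N ω ^ i) P :=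
        (hIndepN N).comp (measurable_id.pow_const j) (measurable_id.pow_const i)
      have heq : ∫ ω, X 0 ω ^ j * S'N N ω ^ i ∂P
          = ∫ ω, ((fun ω => X 0 ω ^ j) * (fun ω => S'N N ω ^ i)) ω ∂P := by
        simp [Pi.mul_apply]
      rw [heq]
      exact hIF.integral_mul_eq_mul_integral ((hmeas 0).pow_const j).aestronglyMeasurable
        ((hS'N_meas N).pow_const i).aestronglyMeasurable
    have hlhs : Tendsto (fun N => ∫ ω, X 0 ω ^ j * S'N N ω ^ i ∂P) atTop
        (nhds (∫ ω, X 0 ω ^ j * S' ω ^ i ∂P)) := by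
      refine tendsto_integral_of_dominated_convergence (fun _ => B ^ i)
        (fun N => (((hmeas 0).pow_const j).mul
          ((hS'N_meas N).pow_const i)).aestronglyMeasurable)
        (integrable_const _) (fun N => ?_) ?_
      · filter_upwards [hG] with ω hω
        have hx : |X 0 ω ^ j| = 1 := by
          rcases hω 0 with h | h <;> simp [h, abs_pow]
        rw [Real.norm_eq_abs, abs_mul, hx, one_mul, abs_pow]
        exact pow_le_pow_left₀ (abs_nonneg _) (hS'Nbd N ω hω) i
      · filter_upwards [hG] with ω hω
        exact ((htendS' ω hω).pow i).const_mul (X 0 ω ^ j)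
    have hrhs : Tendsto (fun N => ∫ ω, X 0 ω ^ j * S'N N ω ^ i ∂P) atTop
        (nhds ((∫ ω, X 0 ω ^ j ∂P) * ∫ ω, S' ω ^ i ∂P)) := by
      simp only [hfacN]
      exact (hS'lim i).const_mul _
    have := tendsto_nhds_unique hlhs hrhs
    rw [this, aux_pow hmeas h1 h2 0 j, hS'mom i]
  -- a.e. decomposition
  have hdecomp : ∀ᵐ ω ∂P, S l ω = r * X 0 ω + r * S' ω := by
    filter_upwards [hG] with ω hω
    have hsum0 : Summable (fun nn => c nn * X nn ω) := by
      simpa using hsum ω hω id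
    rw [hSeq ω, hsum0.tsum_eq_zero_add]
    have hc0 : c 0 = r := pow_one r
    have hcs : ∀ nn : ℕ, c (nn + 1) = r * c nn := by
      intro nn
      simp only [hc_def]
      rw [pow_succ]
      ring
    have : (∑' nn : ℕ, c (nn + 1) * X (nn + 1) ω) = r * S' ω := by
      rw [hS'_def, ← tsum_mul_left]
      exact tsum_congr fun nn => by rw [hcs nn]; ring
    rw [hc0, this]
  -- the master recursion
  have hrl : ∀ k : ℕ, r ^ k * l ^ k = 1 := by
    intro k
    rw [← mul_pow, inv_mul_cancel₀ (ne_of_gt hl0), one_pow]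
  have hMaster : ∀ k : ℕ, m l k * l ^ k
      = ∑ j ∈ range (k + 1),
          (k.choose j : ℝ) * (if Even j then (1:ℝ) else 0) * m l (k - j) := by
    intro k
    have hpow : ∀ᵐ ω ∂P, S l ω ^ k
        = ∑ j ∈ range (k + 1),
            (r * X 0 ω) ^ j * (r * S' ω) ^ (k - j) * (k.choose j : ℝ) := by
      filter_upwards [hdecomp] with ω hω
      rw [hω, add_pow]
    have hint_j : ∀ j ∈ range (k + 1), Integrable
        (fun ω => (r * X 0 ω) ^ j * (r * S' ω) ^ (k - j) * (k.choose j : ℝ)) P := by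
      intro j _
      refine Integrable.mono' (integrable_const (r ^ j * (r * B) ^ (k - j) * (k.choose j : ℝ)))
        (((((hmeas 0).aemeasurable.const_mul r).pow_const j).mul
          ((hS'am.const_mul r).pow_const (k - j))).mul_const _).aestronglyMeasurable ?_
      filter_upwards [hG] with ω hω
      have hx : |r * X 0 ω| = r := by
        rcases hω 0 with h | h <;> simp [h, abs_mul, abs_of_nonneg hr0.le]
      have hy : |r * S' ω| ≤ r * B := by
        rw [abs_mul, abs_of_nonneg hr0.le]
        exact mul_le_mul_of_nonneg_left (hS'bd ω hω) hr0.le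
      rw [Real.norm_eq_abs, abs_mul, abs_mul, abs_pow, abs_pow, hx]
      have h1' : |S' ω| ^ (k - j) ≤ B ^ (k - j) := by
        exact pow_le_pow_left₀ (abs_nonneg _) (hS'bd ω hω) _
      have h2' : |r * S' ω| ^ (k - j) ≤ (r * B) ^ (k - j) :=
        pow_le_pow_left₀ (abs_nonneg _) hy _
      have h3' : |(k.choose j : ℝ)| = (k.choose j : ℝ) := abs_of_nonneg (Nat.cast_nonneg _)
      rw [h3']
      have := mul_le_mul_of_nonneg_left h2' (pow_nonneg hr0.le j)
      exact mul_le_mul_of_nonneg_right this (Nat.cast_nonneg _)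
    have hterm : ∀ j ∈ range (k + 1),
        ∫ ω, (r * X 0 ω) ^ j * (r * S' ω) ^ (k - j) * (k.choose j : ℝ) ∂P
          = r ^ k * ((k.choose j : ℝ) * (if Even j then (1:ℝ) else 0) * m l (k - j)) := by
      intro j hj
      have hjk : j + (k - j) = k := Nat.add_sub_cancel' (Nat.lt_succ_iff.mp (mem_range.mp hj))
      have hptwise : ∀ ω, (r * X 0 ω) ^ j * (r * S' ω) ^ (k - j) * (k.choose j : ℝ)
          = (r ^ k * (k.choose j : ℝ)) * (X 0 ω ^ j * S' ω ^ (k - j)) := by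
        intro ω
        rw [mul_pow, mul_pow]
        have : r ^ j * r ^ (k - j) = r ^ k := by rw [← pow_add, hjk]
        calc r ^ j * X 0 ω ^ j * (r ^ (k - j) * S' ω ^ (k - j)) * (k.choose j : ℝ)
            = (r ^ j * r ^ (k - j)) * (k.choose j : ℝ) * (X 0 ω ^ j * S' ω ^ (k - j)) := by ring
        _ = (r ^ k * (k.choose j : ℝ)) * (X 0 ω ^ j * S' ω ^ (k - j)) := by rw [this]
      simp only [hptwise]
      rw [MeasureTheory.integral_const_mul, hfac j (k - j)]
      ring
    rw [hm l k, integral_congr_ae hpow, integral_finset_sum _ hint_j,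
      Finset.sum_congr rfl hterm, ← Finset.mul_sum, mul_right_comm, hrl k, one_mul]
  -- odd moments vanish
  have hModd : ∀ k, Odd k → m l k = 0 := by
    intro k
    induction k using Nat.strong_induction_on with
    | _ k ih =>
      intro hk
      have hk1 : k % 2 = 1 := Nat.odd_iff.mp hk
      have hM := hMaster k
      have hsum_eq : ∑ j ∈ range (k + 1),
          (k.choose j : ℝ) * (if Even j then (1:ℝ) else 0) * m l (k - j) = m l k := by
        rw [Finset.sum_range_succ']
        have hz : ∀ i ∈ range k,
            (k.choose (i + 1) : ℝ) * (if Even (i + 1) then (1:ℝ) else 0)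
              * m l (k - (i + 1)) = 0 := by
          intro i hi
          by_cases he : Even (i + 1)
          · have hi' : i < k := mem_range.mp hi
            have hmod : (i + 1) % 2 = 0 := Nat.even_iff.mp he
            have hodd' : Odd (k - (i + 1)) := by
              rw [Nat.odd_iff]; omega
            rw [ih (k - (i + 1)) (by omega) hodd']
            ring
          · simp [he]
        rw [Finset.sum_eq_zero hz]
        simp
      rw [hsum_eq] at hM
      have hlk : (1:ℝ) < l ^ k := one_lt_pow₀ hl (by omega)
      have h2' : m l k * (l ^ k - 1) = 0 := by nlinarith [hM]
      rcases mul_eq_zero.mp h2' with h | h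
      · exact h
      · exfalso; linarith
  have hm0 : m l 0 = 1 := by
    rw [hm]; simp
  refine ⟨hm0, hModd _ ⟨n - 1, by omega⟩, ?_⟩
  -- even recursion
  have hM := hMaster (2 * n)
  have hsum_eq : ∑ j ∈ range (2 * n + 1),
      ((2 * n).choose j : ℝ) * (if Even j then (1:ℝ) else 0) * m l (2 * n - j)
      = (∑ j ∈ range n, ((2 * n).choose (2 * j) : ℝ) * m l (2 * j)) + m l (2 * n) := by
    rw [Finset.sum_range_succ']
    congr 1
    · -- the shifted sum equals the target sum
      have hfil : ∑ i ∈ (range (2 * n)).filter (fun i => Odd i),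
          (((2 * n).choose (i + 1) : ℝ) * (if Even (i + 1) then (1:ℝ) else 0)
            * m l (2 * n - (i + 1)))
          = ∑ i ∈ range (2 * n),
          (((2 * n).choose (i + 1) : ℝ) * (if Even (i + 1) then (1:ℝ) else 0)
            * m l (2 * n - (i + 1))) := by
        refine Finset.sum_filter_of_ne ?_
        intro x hx hne
        by_contra hodd
        have hev : Even x := Nat.even_iff.mpr (by
          have := Nat.odd_iff.not.mp hodd
          omega)
        have : ¬ Even (x + 1) := by
          have := Nat.even_iff.mp hev
          rw [Nat.even_iff]; omega
        simp [this] at hne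
      rw [← hfil]
      refine Finset.sum_nbij' (fun a => n - (a + 1) / 2) (fun u => 2 * n - 2 * u - 1)
        ?_ ?_ ?_ ?_ ?_
      · intro a ha
        simp only [Finset.mem_filter, Finset.mem_range, Nat.odd_iff] at ha
        simp only [Finset.mem_range]
        omega
      · intro u hu
        simp only [Finset.mem_range] at hu
        simp only [Finset.mem_filter, Finset.mem_range, Nat.odd_iff]
        omega
      · intro a ha
        simp only [Finset.mem_filter, Finset.mem_range, Nat.odd_iff] at ha
        show 2 * n - 2 * (n - (a + 1) / 2) - 1 = a
        omega
      · intro u hu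
        simp only [Finset.mem_range] at hu
        show n - (2 * n - 2 * u - 1 + 1) / 2 = u
        omega
      · intro a ha
        simp only [Finset.mem_filter, Finset.mem_range, Nat.odd_iff] at ha
        obtain ⟨halt, hamod⟩ := ha
        have he : Even (a + 1) := Nat.even_iff.mpr (by omega)
        have ha1 : a + 1 = 2 * n - 2 * (n - (a + 1) / 2) := by omega
        have hm2 : 2 * n - (a + 1) = 2 * (n - (a + 1) / 2) := by omega
        rw [hm2, ha1, Nat.choose_symm (by omega : 2 * (n - (a + 1) / 2) ≤ 2 * n)]
        have he2 : Even (2 * n - 2 * (n - (a + 1) / 2)) := by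
          rw [Nat.even_iff]; omega
        simp only [he2, if_pos, mul_one]
        congr 2
        rw [show n - (2 * n - 2 * (n - (a + 1) / 2)) / 2 = n - (a + 1) / 2 by omega]
    · simp
  rw [hsum_eq] at hM
  have hlk : (1:ℝ) < l ^ (2 * n) := one_lt_pow₀ hl (by omega)
  rw [inv_mul_eq_div, eq_div_iff (by intro h; nlinarith : l ^ (2 * n) - 1 ≠ 0)]
  linear_combination hM
end

section
/- For every λ > 1 and every integer k ≥ 1, m_{2k}(λ) = −(λ^{2k} − 1)^{−1} · Σ_{j=0}^{k−1} C(2k, 2j) · λ^{2j} · E_{2(k−j)} · m_{2j}(λ). -/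
open MeasureTheory ProbabilityTheory Finset

section Aux

lemma euler_refl (E : ℕ → ℝ) (hE0 : E 0 = 1)
    (hE : ∀ n : ℕ, 1 ≤ n → ∑ j ∈ Finset.range (n + 1), ((2 * n).choose (2 * j) : ℝ) * E (2 * j) = 0)
    (n : ℕ) :
    ∑ j ∈ Finset.range (n + 1), ((2 * n).choose (2 * j) : ℝ) * E (2 * (n - j))
      = if n = 0 then 1 else 0 := by
  rcases Nat.eq_zero_or_pos n with h | h
  · subst h; simp [hE0]
  · rw [if_neg h.ne']
    have := Finset.sum_range_reflect
      (fun j => ((2 * n).choose (2 * j) : ℝ) * E (2 * (n - j))) (n + 1)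
    rw [← this]
    rw [← hE n h]
    apply Finset.sum_congr rfl
    intro j hj
    have hj' : j ≤ n := Nat.lt_succ_iff.mp (Finset.mem_range.mp hj)
    have h1 : n + 1 - 1 - j = n - j := by omega
    have h2 : 2 * (n - j) = 2 * n - 2 * j := by omega
    have h3 : n - (n - j) = j := by omega
    rw [h1, h2, h3, Nat.choose_symm (by omega)]

lemma even_sum (f : ℕ → ℝ) (k : ℕ) (hf : ∀ i, Odd i → f i = 0) :
    ∑ i ∈ Finset.range (2 * k + 1), f i = ∑ j ∈ Finset.range (k + 1), f (2 * j) := by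
  induction k with
  | zero => simp
  | succ k ih =>
    have h1 : 2 * (k + 1) + 1 = (2 * k + 1) + 1 + 1 := by omega
    rw [h1, Finset.sum_range_succ, Finset.sum_range_succ, ih, Finset.sum_range_succ,
      hf (2 * k + 1) ⟨k, by omega⟩]
    rw [Finset.sum_range_succ, show 2 * k + 2 = 2 * (k + 1) from by omega,
      Finset.sum_range_succ]
    ring

lemma invert (E a : ℕ → ℝ) (l : ℝ)
    (heuler : ∀ n : ℕ, ∑ j ∈ Finset.range (n + 1), ((2 * n).choose (2 * j) : ℝ) * E (2 * (n - j))
      = if n = 0 then 1 else 0)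
    (hrec : ∀ k : ℕ, l ^ (2 * k) * a k = ∑ j ∈ Finset.range (k + 1), ((2 * k).choose (2 * j) : ℝ) * a j)
    (k : ℕ) :
    ∑ j ∈ Finset.range (k + 1),
      ((2 * k).choose (2 * j) : ℝ) * l ^ (2 * j) * E (2 * (k - j)) * a j = a k := by
  have step1 : ∀ j ∈ Finset.range (k + 1),
      ((2 * k).choose (2 * j) : ℝ) * l ^ (2 * j) * E (2 * (k - j)) * a j
        = ∑ i ∈ Finset.range (k + 1),
            ((2 * k).choose (2 * j) : ℝ) * E (2 * (k - j)) * (((2 * j).choose (2 * i) : ℝ) * a i) := by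
    intro j hj
    have hj' : j ≤ k := Nat.lt_succ_iff.mp (Finset.mem_range.mp hj)
    have : ((2 * k).choose (2 * j) : ℝ) * l ^ (2 * j) * E (2 * (k - j)) * a j
        = ((2 * k).choose (2 * j) : ℝ) * E (2 * (k - j)) * (l ^ (2 * j) * a j) := by ring
    rw [this, hrec j, Finset.mul_sum]
    rw [← Finset.sum_subset (Finset.range_subset_range.mpr (by omega : j + 1 ≤ k + 1))]
    intro i hi hi'
    have : 2 * j < 2 * i := by
      simp only [Finset.mem_range] at hi hi'; omega
    rw [Nat.choose_eq_zero_of_lt this]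
    push_cast
    ring
  rw [Finset.sum_congr rfl step1, Finset.sum_comm]
  have inner : ∀ i ∈ Finset.range (k + 1),
      ∑ j ∈ Finset.range (k + 1),
        ((2 * k).choose (2 * j) : ℝ) * E (2 * (k - j)) * (((2 * j).choose (2 * i) : ℝ) * a i)
      = ((2 * k).choose (2 * i) : ℝ) * a i * (if k - i = 0 then (1:ℝ) else 0) := by
    intro i hi
    have hik : i ≤ k := Nat.lt_succ_iff.mp (Finset.mem_range.mp hi)
    rw [Finset.range_eq_Ico, ← Finset.sum_subset (Finset.Ico_subset_Ico_left (Nat.zero_le i) : Finset.Ico i (k+1) ⊆ Finset.Ico 0 (k+1))]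
    · rw [Finset.sum_Ico_eq_sum_range]
      have : ∀ j' ∈ Finset.range (k + 1 - i),
          ((2 * k).choose (2 * (i + j')) : ℝ) * E (2 * (k - (i + j'))) * (((2 * (i + j')).choose (2 * i) : ℝ) * a i)
          = ((2 * k).choose (2 * i) : ℝ) * a i *
              (((2 * (k - i)).choose (2 * j') : ℝ) * E (2 * ((k - i) - j'))) := by
        intro j' hj'
        have hj'' : j' ≤ k - i := by
          have := Finset.mem_range.mp hj'; omega
        have hc := Nat.choose_mul (n := 2 * k) (show 2 * i ≤ 2 * (i + j') by omega)
        have e1 : 2 * k - 2 * i = 2 * (k - i) := by omega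
        have e2 : 2 * (i + j') - 2 * i = 2 * j' := by omega
        have e3 : k - (i + j') = (k - i) - j' := by omega
        rw [e1, e2] at hc
        rw [e3]
        have := congrArg (fun x : ℕ => (x : ℝ)) hc
        push_cast at this
        calc ((2 * k).choose (2 * (i + j')) : ℝ) * E (2 * ((k-i) - j')) * (((2 * (i + j')).choose (2 * i) : ℝ) * a i)
            = (((2 * k).choose (2 * (i + j')) : ℝ) * ((2 * (i + j')).choose (2 * i) : ℝ)) * (E (2 * ((k-i) - j')) * a i) := by ring
          _ = (((2 * k).choose (2 * i) : ℝ) * ((2 * (k - i)).choose (2 * j') : ℝ)) * (E (2 * ((k-i) - j')) * a i) := by rw [this]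
          _ = ((2 * k).choose (2 * i) : ℝ) * a i * (((2 * (k - i)).choose (2 * j') : ℝ) * E (2 * ((k - i) - j'))) := by ring
      rw [Finset.sum_congr rfl this, ← Finset.mul_sum]
      have e4 : k + 1 - i = (k - i) + 1 := by omega
      rw [e4, heuler (k - i)]
    · intro j hjmem hjnot
      have h1 : j < i := by
        simp only [Finset.mem_Ico] at hjmem hjnot; omega
      rw [Nat.choose_eq_zero_of_lt (by omega : 2 * j < 2 * i)]
      push_cast; ring
  rw [Finset.sum_congr rfl inner]
  rw [Finset.sum_eq_single k]
  · simp
  · intro j hj hjk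
    have : j < k := by
      have := Finset.mem_range.mp hj; omega
    rw [if_neg (by omega)]; ring
  · intro h; exact absurd (Finset.self_mem_range_succ k) h

lemma aux_reindex {Ω : Type*} [MeasurableSpace Ω] {P : Measure Ω} [IsProbabilityMeasure P]
    {ι : Type*} (X : ℕ → Ω → ℝ)
    (hindep : iIndepFun X P) (g : ι → ℕ) (hg : Function.Injective g) :
    iIndepFun (fun i => X (g i)) P := by
  rw [iIndepFun_iff_measure_inter_preimage_eq_mul] at hindep ⊢
  intro S sets hsets
  rcases isEmpty_or_nonempty ι with hι | hι
  · have hS : S = ∅ := Finset.eq_empty_of_isEmpty S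
    subst hS; simp
  classical
  have hgg' : ∀ i, Function.invFun g (g i) = i := fun i => Function.leftInverse_invFun hg i
  have h1 : (⋂ i ∈ S, (fun i => X (g i)) i ⁻¹' sets i)
      = ⋂ j ∈ S.image g, X j ⁻¹' sets (Function.invFun g j) := by
    rw [Finset.set_biInter_finset_image]
    exact Set.iInter₂_congr fun i _ => by rw [hgg']
  have h2 := hindep (S.image g) (sets := fun j => sets (Function.invFun g j))
      (fun j hj => by
        obtain ⟨i, hi, rfl⟩ := Finset.mem_image.mp hj
        simpa [hgg'] using hsets i hi)
  rw [h1, h2, Finset.prod_image (fun i _ j _ h => hg h)]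
  exact Finset.prod_congr rfl fun i _ => by simp [hgg']

lemma aux_findim {Ω : Type*} [MeasurableSpace Ω] (P : Measure Ω) [IsProbabilityMeasure P]
    (X : ℕ → Ω → ℝ) (hmeas : ∀ n, Measurable (X n))
    (hindep : iIndepFun X P)
    (g : ℕ → ℕ) (hg : Function.Injective g) (s : Finset ℕ) :
    Measure.map (fun ω => fun i : s => X (g (i : ℕ)) ω) P
      = Measure.pi (fun i : s => P.map (X (g (i : ℕ)))) := by
  haveI : ∀ i : s, IsProbabilityMeasure (P.map (X (g (i : ℕ)))) :=
    fun i => Measure.isProbabilityMeasure_map (hmeas _).aemeasurable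
  have hre := aux_reindex X hindep (fun i : s => g (i : ℕ))
    (fun a b h => Subtype.coe_injective (hg h))
  refine (Measure.pi_eq fun A hA => ?_).symm
  rw [Measure.map_apply (measurable_pi_lambda _ fun i => hmeas _) (MeasurableSet.univ_pi hA)]
  have hpre : (fun ω => fun i : s => X (g (i : ℕ)) ω) ⁻¹' (Set.univ.pi A)
      = ⋂ i : s, X (g (i : ℕ)) ⁻¹' A i := by
    ext ω; simp [Set.mem_pi]
  rw [hpre, hre.meas_iInter (fun i => ⟨A i, hA i, rfl⟩)]
  refine Finset.prod_congr rfl fun i _ => ?_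
  rw [Measure.map_apply (hmeas _) (hA i)]

end Aux

/-- `m_(2k)(λ) = -(λ^(2k) - 1)⁻¹ ∑_{j=0}^{k-1} C(2k,2j) λ^(2j) E_(2(k-j)) m_(2j)(λ)`,
where `E` are the Euler numbers of even index. -/
theorem stmt_7 {Ω : Type*} [MeasurableSpace Ω] (P : Measure Ω) [IsProbabilityMeasure P]
    (X : ℕ → Ω → ℝ) (hmeas : ∀ n, Measurable (X n))
    (hindep : iIndepFun X P)
    (h1 : ∀ n, P {ω | X n ω = 1} = 1 / 2) (h2 : ∀ n, P {ω | X n ω = -1} = 1 / 2)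
    (S : ℝ → Ω → ℝ)
    (hS : ∀ l : ℝ, 1 < l → ∀ ω, S l ω = ∑' n : ℕ, l ^ (-(n + 1 : ℤ)) * X n ω)
    (m : ℝ → ℕ → ℝ) (hm : ∀ l k, m l k = ∫ ω, (S l ω) ^ k ∂P)
    (E : ℕ → ℝ) (hE0 : E 0 = 1)
    (hE : ∀ n : ℕ, 1 ≤ n → ∑ j ∈ Finset.range (n + 1), ((2 * n).choose (2 * j) : ℝ) * E (2 * j) = 0)
    (l : ℝ) (hl : 1 < l) (k : ℕ) (hk : 1 ≤ k) :
    m l (2 * k) = -(l ^ (2 * k) - 1)⁻¹ *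
      ∑ j ∈ Finset.range k,
        ((2 * k).choose (2 * j) : ℝ) * l ^ (2 * j) * E (2 * (k - j)) * m l (2 * j) := by
  classical
  have hl0 : (0:ℝ) < l := lt_trans one_pos hl
  have hlne : l ≠ 0 := hl0.ne'
  set r : ℝ := l⁻¹ with hr
  have hr0 : 0 ≤ r := inv_nonneg.mpr hl0.le
  have hr1 : r < 1 := by
    rw [hr]
    rw [inv_lt_one_iff₀]
    right; exact hl
  -- coefficient rewriting
  have hcoef : ∀ n : ℕ, l ^ (-(n + 1 : ℤ)) = r ^ (n + 1) := by
    intro n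
    rw [show (-(n + 1 : ℤ)) = -((n + 1 : ℕ) : ℤ) by push_cast; ring]
    rw [zpow_neg, zpow_natCast, hr, inv_pow]
  -- truncation
  set φ : ℝ → ℝ := fun x => max (-1) (min 1 x) with hφ
  have hφm : Measurable φ :=
    (continuous_const.max (continuous_const.min continuous_id)).measurable
  have hφ1 : ∀ x, |φ x| ≤ 1 := by
    intro x
    rw [abs_le]
    constructor
    · exact le_max_left _ _
    · exact max_le (by norm_num) (min_le_left _ _)
  have hφeq : ∀ x : ℝ, x = 1 ∨ x = -1 → φ x = x := by
    rintro x (rfl | rfl) <;> simp [hφ] <;> norm_num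
  -- the function G
  set G : (ℕ → ℝ) → ℝ := fun a => ∑' n, r ^ (n + 1) * φ (a n) with hG
  have hgeo : Summable (fun n : ℕ => r ^ (n + 1)) := by
    simpa [pow_succ] using (summable_geometric_of_lt_one hr0 hr1).mul_right r
  have hsumG : ∀ a : ℕ → ℝ, Summable (fun n => r ^ (n + 1) * φ (a n)) := by
    intro a
    refine Summable.of_norm_bounded hgeo fun n => ?_
    rw [norm_mul, Real.norm_eq_abs, Real.norm_eq_abs, abs_of_nonneg (pow_nonneg hr0 _)]
    calc r ^ (n+1) * |φ (a n)| ≤ r ^ (n+1) * 1 :=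
          mul_le_mul_of_nonneg_left (hφ1 _) (pow_nonneg hr0 _)
      _ = r ^ (n+1) := mul_one _
  have hGm : Measurable G := by
    apply measurable_of_tendsto_metrizable
      (f := fun N (a : ℕ → ℝ) => ∑ n ∈ Finset.range N, r ^ (n + 1) * φ (a n))
    · intro N
      exact Finset.measurable_sum _ fun n _ =>
        ((hφm.comp (measurable_pi_apply n)).const_mul _)
    · exact tendsto_pi_nhds.2 fun a => (hsumG a).hasSum.tendsto_sum_nat
  set B : ℝ := (1 - r)⁻¹ with hB
  have hGbd : ∀ a, ‖G a‖ ≤ B := by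
    intro a
    calc ‖G a‖ ≤ ∑' n, ‖r ^ (n + 1) * φ (a n)‖ :=
          norm_tsum_le_tsum_norm ((hsumG a).abs)
      _ ≤ ∑' n : ℕ, r ^ n := by
          refine Summable.tsum_le_tsum (fun n => ?_) ((hsumG a).abs) (summable_geometric_of_lt_one hr0 hr1)
          rw [norm_mul, Real.norm_eq_abs, Real.norm_eq_abs, abs_of_nonneg (pow_nonneg hr0 _)]
          calc r ^ (n+1) * |φ (a n)| ≤ r ^ (n+1) * 1 :=
                mul_le_mul_of_nonneg_left (hφ1 _) (pow_nonneg hr0 _)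
            _ = r ^ (n+1) := mul_one _
            _ ≤ r ^ n := pow_le_pow_of_le_one hr0 hr1.le (Nat.le_succ n)
      _ = B := tsum_geometric_of_lt_one hr0 hr1
  -- sequences
  set Y : Ω → (ℕ → ℝ) := fun ω n => X n ω with hY
  set Y' : Ω → (ℕ → ℝ) := fun ω n => X (n + 1) ω with hY'
  have hYm : Measurable Y := measurable_pi_lambda _ fun n => hmeas n
  have hY'm : Measurable Y' := measurable_pi_lambda _ fun n => hmeas (n + 1)
  -- almost everywhere ±1
  have hsets : ∀ n, {ω | X n ω = 1} = X n ⁻¹' {1} := by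
    intro n; ext ω; simp
  have hsets' : ∀ n, {ω | X n ω = -1} = X n ⁻¹' {-1} := by
    intro n; ext ω; simp
  have hBm : ∀ n, MeasurableSet {ω | X n ω = 1} := fun n => by
    rw [hsets]; exact hmeas n (measurableSet_singleton 1)
  have hCm : ∀ n, MeasurableSet {ω | X n ω = -1} := fun n => by
    rw [hsets']; exact hmeas n (measurableSet_singleton (-1))
  have hdisj : ∀ n, Disjoint {ω | X n ω = 1} {ω | X n ω = -1} := by
    intro n
    rw [Set.disjoint_left]
    intro ω hω hω'
    simp only [Set.mem_setOf_eq] at hω hω'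
    rw [hω] at hω'; norm_num at hω'
  have hU : ∀ n, P ({ω | X n ω = 1} ∪ {ω | X n ω = -1}) = 1 := by
    intro n
    rw [measure_union (hdisj n) (hCm n), h1 n, h2 n]
    rw [ENNReal.add_halves]
  have hUc : ∀ n, P (({ω | X n ω = 1} ∪ {ω | X n ω = -1})ᶜ) = 0 := by
    intro n
    rw [measure_compl ((hBm n).union (hCm n)) (measure_ne_top P _), hU n, measure_univ,
      tsub_self]
  have hAe : ∀ᵐ ω ∂P, ∀ n, X n ω = 1 ∨ X n ω = -1 := by
    rw [ae_all_iff]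
    intro n
    have hseteq : {a | ¬(X n a = 1 ∨ X n a = -1)} = ({ω | X n ω = 1} ∪ {ω | X n ω = -1})ᶜ := by
      ext ω; simp [not_or]
    rw [ae_iff, hseteq]
    exact hUc n
  -- marginals
  have hmarg : ∀ n (s : Set ℝ), MeasurableSet s →
      P (X n ⁻¹' s) = (if (1:ℝ) ∈ s then 1/2 else 0) + (if (-1:ℝ) ∈ s then 1/2 else 0) := by
    intro n s hs
    have h0 : P (X n ⁻¹' s) = P ((X n ⁻¹' s) ∩ ({ω | X n ω = 1} ∪ {ω | X n ω = -1})) :=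
      (measure_inter_conull (hUc n)).symm
    rw [h0, Set.inter_union_distrib_left]
    have e1 : (X n ⁻¹' s) ∩ {ω | X n ω = 1} = if (1:ℝ) ∈ s then {ω | X n ω = 1} else ∅ := by
      split_ifs with h
      · ext ω; simp only [Set.mem_inter_iff, Set.mem_preimage, Set.mem_setOf_eq]
        exact ⟨fun ⟨_, hb⟩ => hb, fun hb => ⟨by rw [hb]; exact h, hb⟩⟩
      · ext ω; simp only [Set.mem_inter_iff, Set.mem_preimage, Set.mem_setOf_eq,
          Set.mem_empty_iff_false, iff_false, not_and]
        intro hω hb; rw [hb] at hω; exact h hω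
    have e2 : (X n ⁻¹' s) ∩ {ω | X n ω = -1} = if (-1:ℝ) ∈ s then {ω | X n ω = -1} else ∅ := by
      split_ifs with h
      · ext ω; simp only [Set.mem_inter_iff, Set.mem_preimage, Set.mem_setOf_eq]
        exact ⟨fun ⟨_, hb⟩ => hb, fun hb => ⟨by rw [hb]; exact h, hb⟩⟩
      · ext ω; simp only [Set.mem_inter_iff, Set.mem_preimage, Set.mem_setOf_eq,
          Set.mem_empty_iff_false, iff_false, not_and]
        intro hω hb; rw [hb] at hω; exact h hω
    rw [measure_union ?hd ?hme, e1, e2]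
    · split_ifs <;> simp [h1 n, h2 n]
    case hd =>
      rw [e1, e2]
      split_ifs <;> simp [hdisj n]
    case hme =>
      rw [e2]; split_ifs
      · exact hCm n
      · exact MeasurableSet.empty
  have hmargmap : ∀ n, P.map (X n) = P.map (X 0) := by
    intro n
    ext s hs
    rw [Measure.map_apply (hmeas n) hs, Measure.map_apply (hmeas 0) hs, hmarg n s hs,
      hmarg 0 s hs]
  -- equality of the laws of the shifted sequences
  have hmapY : Measure.map Y P = Measure.map Y' P := by
    haveI : IsProbabilityMeasure (P.map Y) := Measure.isProbabilityMeasure_map hYm.aemeasurable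
    haveI : IsProbabilityMeasure (P.map Y') := Measure.isProbabilityMeasure_map hY'm.aemeasurable
    refine ext_of_generate_finite (measurableCylinders (fun _ : ℕ => ℝ))
      generateFrom_measurableCylinders.symm isPiSystem_measurableCylinders
      (fun t ht => ?_) (by simp)
    have htm : MeasurableSet t := MeasurableSet.of_mem_measurableCylinders ht
    obtain ⟨s, S₀, hS₀, rfl⟩ := (mem_measurableCylinders t).mp ht
    rw [Measure.map_apply hYm htm, Measure.map_apply hY'm htm]
    have hpre1 : Y ⁻¹' cylinder s S₀ = (fun ω => fun i : s => X (i : ℕ) ω) ⁻¹' S₀ := rfl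
    have hpre2 : Y' ⁻¹' cylinder s S₀ = (fun ω => fun i : s => X ((i : ℕ) + 1) ω) ⁻¹' S₀ := rfl
    rw [hpre1, hpre2,
      ← Measure.map_apply (measurable_pi_lambda _ fun i => hmeas _) hS₀,
      ← Measure.map_apply (measurable_pi_lambda _ fun i => hmeas _) hS₀]
    have hid := aux_findim P X hmeas hindep id (fun a b h => h) s
    have hsucc := aux_findim P X hmeas hindep (fun n => n + 1) (fun a b h => by simpa using h) s
    simp only [id_eq] at hid
    rw [hid, hsucc]
    have hfg : (fun i : s => P.map (X (i : ℕ))) = (fun i : s => P.map (X ((i : ℕ) + 1))) := by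
      funext i; exact (hmargmap _).trans (hmargmap _).symm
    rw [hfg]
  -- a.e. identities
  have haeS : ∀ᵐ ω ∂P, S l ω = G (Y ω) := by
    filter_upwards [hAe] with ω hω
    rw [hS l hl ω]
    refine tsum_congr fun n => ?_
    rw [hcoef n, hφeq _ (hω n)]
  have haeshift : ∀ᵐ ω ∂P, l * S l ω = X 0 ω + G (Y' ω) := by
    filter_upwards [hAe] with ω hω
    have habs : ∀ n, |X n ω| = 1 := by
      intro n; rcases hω n with h | h <;> rw [h] <;> norm_num
    have hu : Summable (fun n => r ^ n * X n ω) := by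
      refine Summable.of_norm_bounded (summable_geometric_of_lt_one hr0 hr1) fun n => ?_
      rw [norm_mul, Real.norm_eq_abs, Real.norm_eq_abs, abs_of_nonneg (pow_nonneg hr0 _),
        habs n, mul_one]
    have hSeq : S l ω = r * ∑' n, r ^ n * X n ω := by
      rw [hS l hl ω, ← tsum_mul_left]
      refine tsum_congr fun n => ?_
      rw [hcoef n, pow_succ']
      ring
    rw [hSeq, ← mul_assoc, mul_inv_cancel₀ hlne, one_mul]
    rw [Summable.tsum_eq_zero_add hu]
    congr 1
    · simp
    · refine tsum_congr fun n => ?_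
      rw [hφeq _ (hω (n + 1)), pow_succ']
  -- T'
  set T : Ω → ℝ := fun ω => G (Y' ω) with hT
  have hTm : Measurable T := hGm.comp hY'm
  have hTbd : ∀ ω, ‖T ω‖ ≤ B := fun ω => hGbd _
  have hB0 : 0 ≤ B := inv_nonneg.mpr (by linarith)
  -- law of T coincides with law of S for moments
  have hTj : ∀ j : ℕ, ∫ ω, (T ω) ^ j ∂P = m l j := by
    intro j
    have e1 : ∫ ω, (T ω) ^ j ∂P = ∫ a, (G a) ^ j ∂(P.map Y') :=
      (integral_map hY'm.aemeasurable ((hGm.pow_const j).aestronglyMeasurable)).symm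
    rw [e1, ← hmapY, integral_map hYm.aemeasurable ((hGm.pow_const j).aestronglyMeasurable),
      hm l j]
    refine integral_congr_ae ?_
    filter_upwards [haeS] with ω h
    rw [h]
  -- integrability
  have hIntX : ∀ i : ℕ, Integrable (fun ω => (X 0 ω) ^ i) P := by
    intro i
    refine Integrable.mono' (integrable_const (1:ℝ))
      ((hmeas 0).pow_const i).aestronglyMeasurable ?_
    filter_upwards [hAe] with ω hω
    have : |X 0 ω| = 1 := by rcases hω 0 with h | h <;> rw [h] <;> norm_num
    rw [Real.norm_eq_abs, abs_pow, this, one_pow]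
  have hIntT : ∀ j : ℕ, Integrable (fun ω => (T ω) ^ j) P := by
    intro j
    refine Integrable.mono' (integrable_const (B ^ j))
      (hTm.pow_const j).aestronglyMeasurable ?_
    refine Filter.Eventually.of_forall fun ω => ?_
    rw [Real.norm_eq_abs, abs_pow]
    exact pow_le_pow_left₀ (abs_nonneg _) (hTbd ω) j
  have hIntXT : ∀ i j : ℕ, Integrable (fun ω => (X 0 ω) ^ i * (T ω) ^ j) P := by
    intro i j
    refine Integrable.mono' (integrable_const (B ^ j))
      (((hmeas 0).pow_const i).mul (hTm.pow_const j)).aestronglyMeasurable ?_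
    filter_upwards [hAe] with ω hω
    have h10 : |X 0 ω| = 1 := by rcases hω 0 with h | h <;> rw [h] <;> norm_num
    rw [Real.norm_eq_abs, abs_mul, abs_pow, abs_pow, h10, one_pow, one_mul]
    exact pow_le_pow_left₀ (abs_nonneg _) (hTbd ω) j
  -- independence of X 0 and T
  have hind0 : IndepFun (X 0) T P := by
    have hiI : iIndep (fun n => MeasurableSpace.comap (X n) inferInstance) P :=
      hindep.iIndep
    have hIndep2 := indep_iSup_of_disjoint (fun i => (hmeas i).comap_le) hiI
      (S := {0}) (T := {n : ℕ | n ≠ 0})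
      (Set.disjoint_left.mpr fun a ha ha' => ha' ha)
    have hle1 : MeasurableSpace.comap (X 0) inferInstance
        ≤ ⨆ i ∈ ({0} : Set ℕ), MeasurableSpace.comap (X i) inferInstance :=
      le_biSup (fun i : ℕ => MeasurableSpace.comap (X i) inferInstance)
        (by simp : (0:ℕ) ∈ ({0} : Set ℕ))
    have hle2 : MeasurableSpace.comap T inferInstance
        ≤ ⨆ i ∈ {n : ℕ | n ≠ 0}, MeasurableSpace.comap (X i) inferInstance := by
      have e0 : MeasurableSpace.comap T inferInstance
          = MeasurableSpace.comap Y' (MeasurableSpace.comap G inferInstance) := by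
        rw [MeasurableSpace.comap_comp]; rfl
      rw [e0]
      refine le_trans (MeasurableSpace.comap_mono hGm.comap_le) ?_
      have e1 : (MeasurableSpace.pi : MeasurableSpace (ℕ → ℝ)).comap Y'
          = ⨆ n : ℕ, MeasurableSpace.comap (fun ω => X (n + 1) ω) inferInstance := by
        rw [MeasurableSpace.pi, MeasurableSpace.comap_iSup]
        refine iSup_congr fun n => ?_
        rw [MeasurableSpace.comap_comp]; rfl
      rw [e1]
      refine iSup_le fun n => ?_
      exact le_biSup (fun i : ℕ => MeasurableSpace.comap (X i) inferInstance)
        (by simp : (n+1) ∈ {n : ℕ | n ≠ 0})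
    exact indep_of_indep_of_le_left (indep_of_indep_of_le_right hIndep2 hle2) hle1
  -- moments of X 0
  have hX0mom : ∀ i : ℕ, ∫ ω, (X 0 ω) ^ i ∂P = if Even i then 1 else 0 := by
    intro i
    have heqi : (fun ω => (X 0 ω) ^ i) =ᵐ[P]
        fun ω => Set.indicator {ω | X 0 ω = 1} (fun _ => (1:ℝ)) ω
          + Set.indicator {ω | X 0 ω = -1} (fun _ => ((-1:ℝ)) ^ i) ω := by
      filter_upwards [hAe] with ω hω
      rcases hω 0 with h | h
      · rw [Set.indicator_of_mem (by exact h), Set.indicator_of_notMem (by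
          simp only [Set.mem_setOf_eq, h]; norm_num), h, one_pow, add_zero]
      · rw [Set.indicator_of_notMem (by
          simp only [Set.mem_setOf_eq, h]; norm_num), Set.indicator_of_mem (by exact h), h,
          zero_add]
    rw [integral_congr_ae heqi, integral_add
      ((integrable_const (1:ℝ)).indicator (hBm 0))
      ((integrable_const (((-1:ℝ)) ^ i)).indicator (hCm 0)),
      integral_indicator_const _ (hBm 0), integral_indicator_const _ (hCm 0),
      measureReal_def, measureReal_def, h1 0, h2 0]
    have htr : ((1 : ENNReal)/2).toReal = (1/2 : ℝ) := by
      rw [ENNReal.toReal_div]; norm_num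
    rw [htr]
    rcases Nat.even_or_odd i with h | h
    · rw [if_pos h, h.neg_one_pow]; norm_num
    · rw [if_neg (Nat.not_even_iff_odd.mpr h), h.neg_one_pow]; norm_num
  -- the moment recursion
  have hrec : ∀ K : ℕ, l ^ (2 * K) * m l (2 * K)
      = ∑ j ∈ Finset.range (K + 1), ((2 * K).choose (2 * j) : ℝ) * m l (2 * j) := by
    intro K
    have e1 : l ^ (2 * K) * m l (2 * K) = ∫ ω, (l * S l ω) ^ (2 * K) ∂P := by
      rw [hm l (2 * K)]
      simp_rw [mul_pow]
      rw [integral_const_mul]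
    have e2 : ∫ ω, (l * S l ω) ^ (2 * K) ∂P = ∫ ω, (X 0 ω + T ω) ^ (2 * K) ∂P := by
      refine integral_congr_ae ?_
      filter_upwards [haeshift] with ω h
      rw [h]
    have e3 : ∫ ω, (X 0 ω + T ω) ^ (2 * K) ∂P
        = ∑ i ∈ Finset.range (2 * K + 1),
            ((2 * K).choose i : ℝ) * ((if Even i then (1:ℝ) else 0) * ∫ ω, (T ω) ^ (2 * K - i) ∂P) := by
      have e3a : ∀ ω, (X 0 ω + T ω) ^ (2 * K)
          = ∑ i ∈ Finset.range (2 * K + 1),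
              (X 0 ω) ^ i * (T ω) ^ (2 * K - i) * ((2 * K).choose i : ℝ) := fun ω => add_pow _ _ _
      simp_rw [e3a]
      rw [integral_finset_sum _ (fun i _ => (hIntXT i (2 * K - i)).mul_const _)]
      refine Finset.sum_congr rfl fun i _ => ?_
      rw [integral_mul_const]
      have hprod : ∫ ω, (X 0 ω) ^ i * (T ω) ^ (2 * K - i) ∂P
          = (∫ ω, (X 0 ω) ^ i ∂P) * ∫ ω, (T ω) ^ (2 * K - i) ∂P := by
        have hcomp := (hind0.comp (measurable_id.pow_const i)
          (measurable_id.pow_const (2 * K - i)))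
        have := IndepFun.integral_mul_eq_mul_integral hcomp (hIntX i).aestronglyMeasurable (hIntT (2 * K - i)).aestronglyMeasurable
        simpa [Function.comp] using this
      rw [hprod, hX0mom i]
      ring
    rw [e1, e2, e3]
    rw [even_sum _ K (fun i hi => by
      rw [if_neg (Nat.not_even_iff_odd.mpr hi)]; ring)]
    have e4 : ∀ j ∈ Finset.range (K + 1),
        ((2 * K).choose (2 * j) : ℝ) * ((if Even (2 * j) then (1:ℝ) else 0)
            * ∫ ω, (T ω) ^ (2 * K - 2 * j) ∂P)
          = ((2 * K).choose (2 * j) : ℝ) * m l (2 * (K - j)) := by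
      intro j hj
      have hjK : j ≤ K := Nat.lt_succ_iff.mp (Finset.mem_range.mp hj)
      rw [if_pos (even_two_mul j), one_mul, show 2 * K - 2 * j = 2 * (K - j) from by omega,
        hTj (2 * (K - j))]
    rw [Finset.sum_congr rfl e4]
    have := Finset.sum_range_reflect
      (fun j => ((2 * K).choose (2 * j) : ℝ) * m l (2 * (K - j))) (K + 1)
    rw [← this]
    refine Finset.sum_congr rfl fun j hj => ?_
    have hjK : j ≤ K := Nat.lt_succ_iff.mp (Finset.mem_range.mp hj)
    have h1' : K + 1 - 1 - j = K - j := by omega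
    have h2' : 2 * (K - j) = 2 * K - 2 * j := by omega
    have h3' : K - (K - j) = j := by omega
    rw [h1', h2', h3', Nat.choose_symm (by omega)]
  -- conclusion
  have hinv := invert E (fun j => m l (2 * j)) l (euler_refl E hE0 hE) hrec k
  rw [Finset.sum_range_succ] at hinv
  have hlast : ((2 * k).choose (2 * k) : ℝ) * l ^ (2 * k) * E (2 * (k - k)) * m l (2 * k)
      = l ^ (2 * k) * m l (2 * k) := by
    rw [Nat.choose_self, Nat.sub_self, mul_zero, hE0]
    push_cast; ring
  rw [hlast] at hinv
  have hne : l ^ (2 * k) - 1 ≠ 0 := by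
    have : (1:ℝ) < l ^ (2 * k) := one_lt_pow₀ hl (by omega)
    linarith
  have hsum : ∑ j ∈ Finset.range k,
      ((2 * k).choose (2 * j) : ℝ) * l ^ (2 * j) * E (2 * (k - j)) * m l (2 * j)
      = (1 - l ^ (2 * k)) * m l (2 * k) := by linarith
  rw [hsum]
  field_simp
  ring
end

section
/- For every λ > 1 and every integer n ≥ 0, m_{2n}(λ) = Σ over pairs (i, j) of nonnegative integers with i + j ≤ n of (2n)!/((2i)!(2j)!(2(n−i−j))!) · λ^{2i} · λ^{4j} · m_{2i}(λ³) · m_{2j}(λ³) · m_{2(n−i−j)}(λ³). -/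
open MeasureTheory ProbabilityTheory Finset Filter Topology

section aux

variable {Ω : Type*} [MeasurableSpace Ω] {P : Measure Ω} [IsProbabilityMeasure P]

noncomputable def Gm (d : ℕ → ℝ) (s : Finset ℕ) (mm : ℕ) : ℝ :=
  ∑ e ∈ Finset.piAntidiag s mm,
    (Nat.multinomial s e : ℝ) * ∏ k ∈ s, (d k ^ e k * if Even (e k) then 1 else 0)

lemma Gm_eq (d : ℕ → ℝ) (s : Finset ℕ) (mm : ℕ) :
    Gm d s mm = ∑ e ∈ Finset.piAntidiag s mm,
      ((Nat.multinomial s e : ℝ) * ∏ k ∈ s, d k ^ e k) *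
        ∏ k ∈ s, (if Even (e k) then (1:ℝ) else 0) := by
  unfold Gm
  refine Finset.sum_congr rfl fun e _ => ?_
  rw [Finset.prod_mul_distrib, mul_assoc]

lemma Gm_odd (d : ℕ → ℝ) (s : Finset ℕ) {mm : ℕ} (hmm : Odd mm) : Gm d s mm = 0 := by
  unfold Gm
  refine Finset.sum_eq_zero fun e he => ?_
  rw [Finset.mem_piAntidiag] at he
  have : ∃ k ∈ s, ¬ Even (e k) := by
    by_contra hcon
    push_neg at hcon
    have heven : Even (∑ k ∈ s, e k) :=
      Finset.sum_induction e Even (fun a b => Even.add) Even.zero hcon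
    rw [he.1] at heven
    exact (Nat.not_even_iff_odd.mpr hmm) heven
  obtain ⟨k, hk, hke⟩ := this
  rw [Finset.prod_eq_zero hk (by simp [hke]), mul_zero]

lemma myinteg {f : Ω → ℝ} (C : ℝ) (hf : Measurable f) (h : ∀ᵐ ω ∂P, |f ω| ≤ C) :
    Integrable f P :=
  Integrable.mono' (integrable_const C) hf.aestronglyMeasurable
    (by simpa [Real.norm_eq_abs] using h)

variable {Y : ℕ → Ω → ℝ}

lemma my_ae_pm (hmeas : ∀ n, Measurable (Y n)) (h1 : ∀ n, P {ω | Y n ω = 1} = 1 / 2)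
    (h2 : ∀ n, P {ω | Y n ω = -1} = 1 / 2) :
    ∀ᵐ ω ∂P, ∀ n, Y n ω = 1 ∨ Y n ω = -1 := by
  rw [ae_all_iff]
  intro n
  have hA : MeasurableSet {ω | Y n ω = 1} := hmeas n (measurableSet_singleton 1)
  have hB : MeasurableSet {ω | Y n ω = -1} := hmeas n (measurableSet_singleton (-1))
  have hdisj : Disjoint {ω | Y n ω = 1} {ω | Y n ω = -1} := by
    rw [Set.disjoint_left]
    rintro ω hω1 hω2
    simp only [Set.mem_setOf_eq] at hω1 hω2
    norm_num [hω1] at hω2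
  have hu : P ({ω | Y n ω = 1} ∪ {ω | Y n ω = -1}) = 1 := by
    rw [measure_union hdisj hB, h1 n, h2 n, ENNReal.add_halves]
  have hz : P (({ω | Y n ω = 1} ∪ {ω | Y n ω = -1})ᶜ) = 0 :=
    (prob_compl_eq_zero_iff (hA.union hB)).2 hu
  rw [ae_iff]
  have hset : {ω | ¬(Y n ω = 1 ∨ Y n ω = -1)} = ({ω | Y n ω = 1} ∪ {ω | Y n ω = -1})ᶜ := by
    ext ω; simp [not_or]
  rw [hset]
  exact hz

lemma my_moment (hmeas : ∀ n, Measurable (Y n)) (h1 : ∀ n, P {ω | Y n ω = 1} = 1 / 2)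
    (h2 : ∀ n, P {ω | Y n ω = -1} = 1 / 2) (n e : ℕ) :
    ∫ ω, Y n ω ^ e ∂P = if Even e then 1 else 0 := by
  have hae : ∀ᵐ ω ∂P, Y n ω = 1 ∨ Y n ω = -1 := (my_ae_pm hmeas h1 h2).mono fun ω h => h n
  rcases Nat.even_or_odd e with he | he
  · rw [if_pos he]
    rw [integral_congr_ae (g := fun _ => (1:ℝ)) (hae.mono fun ω h => by
      rcases h with h | h <;> simp [h, he.neg_one_pow])]
    simp
  · rw [if_neg (Nat.not_even_iff_odd.mpr he)]
    have h0 : ∫ ω, Y n ω ∂P = 0 := by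
      have hA : MeasurableSet {ω | Y n ω = 1} := hmeas n (measurableSet_singleton 1)
      have hB : MeasurableSet {ω | Y n ω = -1} := hmeas n (measurableSet_singleton (-1))
      have heq : Y n =ᵐ[P] fun ω => ({ω | Y n ω = 1}).indicator (fun _ => (1:ℝ)) ω
          - ({ω | Y n ω = -1}).indicator (fun _ => (1:ℝ)) ω := by
        refine hae.mono fun ω h => ?_
        rcases h with h | h <;>
          norm_num [Set.indicator_apply, Set.mem_setOf_eq, h]
      rw [integral_congr_ae heq, integral_sub ((integrable_const (1:ℝ)).indicator hA)
        ((integrable_const (1:ℝ)).indicator hB),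
        integral_indicator_const _ hA, integral_indicator_const _ hB, measureReal_def, measureReal_def, h1 n, h2 n, sub_self]
    calc ∫ ω, Y n ω ^ e ∂P = ∫ ω, Y n ω ∂P := integral_congr_ae (hae.mono fun ω h => by
          rcases h with h | h <;> simp [h, he.neg_one_pow])
    _ = 0 := h0

lemma my_int_prod (hmeas : ∀ n, Measurable (Y n))
    (hpm : ∀ᵐ ω ∂P, ∀ n, Y n ω = 1 ∨ Y n ω = -1) (u : Finset ℕ) (e : ℕ → ℕ) :
    Integrable (fun ω => ∏ k ∈ u, Y k ω ^ e k) P := by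
  refine myinteg 1 (Finset.measurable_prod u fun k _ => (hmeas k).pow_const (e k)) ?_
  refine hpm.mono fun ω h => ?_
  rw [Finset.abs_prod]
  have hone : ∀ k ∈ u, |Y k ω ^ e k| = 1 := fun k _ => by
    rcases h k with hk | hk <;> simp [hk, abs_pow]
  rw [Finset.prod_congr rfl hone, Finset.prod_const_one]

lemma my_prod_moment (hmeas : ∀ n, Measurable (Y n))
    (hindep : iIndepFun Y P)
    (h1 : ∀ n, P {ω | Y n ω = 1} = 1 / 2) (h2 : ∀ n, P {ω | Y n ω = -1} = 1 / 2)
    (u : Finset ℕ) (e : ℕ → ℕ) :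
    ∫ ω, ∏ k ∈ u, Y k ω ^ e k ∂P = ∏ k ∈ u, (if Even (e k) then (1:ℝ) else 0) := by
  classical
  have hpm := my_ae_pm hmeas h1 h2
  induction u using Finset.induction_on with
  | empty => simp
  | insert j u hj ih =>
    have hZindep : iIndepFun (fun k => fun ω => Y k ω ^ e k) P :=
      hindep.comp (fun k x => x ^ e k) (fun k => measurable_id.pow_const (e k))
    have hZmeas : ∀ k, Measurable fun ω => Y k ω ^ e k := fun k => (hmeas k).pow_const (e k)
    have hIF : IndepFun (fun ω => Y j ω ^ e j) (∏ k ∈ u, fun ω => Y k ω ^ e k) P :=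
      (hZindep.indepFun_finset_prod_of_notMem hZmeas hj).symm
    have hfn : (∏ k ∈ u, fun ω => Y k ω ^ e k) = fun ω => ∏ k ∈ u, Y k ω ^ e k := by
      funext ω; simp [Finset.prod_apply]
    have intj : Integrable (fun ω => Y j ω ^ e j) P :=
      myinteg 1 ((hmeas j).pow_const _) (hpm.mono fun ω h => by
        rcases h j with hk | hk <;> simp [hk, abs_pow])
    have intu : Integrable (∏ k ∈ u, fun ω => Y k ω ^ e k) P := by
      rw [hfn]; exact my_int_prod hmeas hpm u e
    have key := hIF.integral_mul_eq_mul_integral intj.aestronglyMeasurable intu.aestronglyMeasurable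
    rw [hfn] at key
    have hmul : ((fun ω => Y j ω ^ e j) * fun ω => ∏ k ∈ u, Y k ω ^ e k)
        = fun ω => Y j ω ^ e j * ∏ k ∈ u, Y k ω ^ e k := rfl
    rw [hmul] at key
    simp only [Finset.prod_insert hj]
    rw [key, ih, my_moment hmeas h1 h2 j (e j)]

lemma my_prod_moment3 (hmeas : ∀ n, Measurable (Y n))
    (hindep : iIndepFun Y P)
    (h1 : ∀ n, P {ω | Y n ω = 1} = 1 / 2) (h2 : ∀ n, P {ω | Y n ω = -1} = 1 / 2)
    {u0 u1 u2 : Finset ℕ} (h01 : Disjoint u0 u1) (h02 : Disjoint u0 u2)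
    (h12 : Disjoint u1 u2) (e0 e1 e2 : ℕ → ℕ) :
    ∫ ω, (∏ k ∈ u0, Y k ω ^ e0 k) * (∏ k ∈ u1, Y k ω ^ e1 k) *
        (∏ k ∈ u2, Y k ω ^ e2 k) ∂P
      = ((∏ k ∈ u0, if Even (e0 k) then (1:ℝ) else 0) *
          ∏ k ∈ u1, if Even (e1 k) then (1:ℝ) else 0) *
          ∏ k ∈ u2, if Even (e2 k) then (1:ℝ) else 0 := by
  classical
  set E : ℕ → ℕ := fun k => if k ∈ u0 then e0 k else if k ∈ u1 then e1 k else e2 k with hE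
  have hd2 : Disjoint (u0 ∪ u1) u2 := Finset.disjoint_union_left.mpr ⟨h02, h12⟩
  have hEu0 : ∀ k ∈ u0, E k = e0 k := fun k hk => by simp [hE, hk]
  have hEu1 : ∀ k ∈ u1, E k = e1 k := fun k hk => by
    simp [hE, Finset.disjoint_right.1 h01 hk, hk]
  have hEu2 : ∀ k ∈ u2, E k = e2 k := fun k hk => by
    simp [hE, Finset.disjoint_right.1 h02 hk, Finset.disjoint_right.1 h12 hk]
  have hpr : ∀ ω, (∏ k ∈ u0, Y k ω ^ e0 k) * (∏ k ∈ u1, Y k ω ^ e1 k) *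
      (∏ k ∈ u2, Y k ω ^ e2 k) = ∏ k ∈ (u0 ∪ u1) ∪ u2, Y k ω ^ E k := by
    intro ω
    rw [Finset.prod_union hd2, Finset.prod_union h01]
    congr 1
    · congr 1
      · exact Finset.prod_congr rfl fun k hk => by rw [hEu0 k hk]
      · exact Finset.prod_congr rfl fun k hk => by rw [hEu1 k hk]
    · exact Finset.prod_congr rfl fun k hk => by rw [hEu2 k hk]
  simp only [hpr]
  rw [my_prod_moment hmeas hindep h1 h2]
  rw [Finset.prod_union hd2, Finset.prod_union h01]
  congr 1
  · congr 1
    · exact Finset.prod_congr rfl fun k hk => by rw [hEu0 k hk]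
    · exact Finset.prod_congr rfl fun k hk => by rw [hEu1 k hk]
  · exact Finset.prod_congr rfl fun k hk => by rw [hEu2 k hk]

lemma my_moment_fin (hmeas : ∀ n, Measurable (Y n))
    (hindep : iIndepFun Y P)
    (h1 : ∀ n, P {ω | Y n ω = 1} = 1 / 2) (h2 : ∀ n, P {ω | Y n ω = -1} = 1 / 2)
    (d : ℕ → ℝ) (s : Finset ℕ) (mm : ℕ) :
    ∫ ω, (∑ k ∈ s, d k * Y k ω) ^ mm ∂P = Gm d s mm := by
  classical
  have hpm := my_ae_pm hmeas h1 h2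
  have hpt : ∀ ω, (∑ k ∈ s, d k * Y k ω) ^ mm
      = ∑ e ∈ Finset.piAntidiag s mm,
          ((Nat.multinomial s e : ℝ) * ∏ k ∈ s, d k ^ e k) * ∏ k ∈ s, Y k ω ^ e k := by
    intro ω
    rw [Finset.sum_pow_eq_sum_piAntidiag]
    refine Finset.sum_congr rfl fun e he => ?_
    rw [mul_assoc]
    congr 1
    rw [← Finset.prod_mul_distrib]
    exact Finset.prod_congr rfl fun k _ => mul_pow _ _ _
  simp only [hpt]
  rw [integral_finset_sum _ (fun e _ => (my_int_prod hmeas hpm s e).const_mul _)]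
  rw [Gm_eq]
  refine Finset.sum_congr rfl fun e _ => ?_
  rw [integral_const_mul, my_prod_moment hmeas hindep h1 h2]

lemma my_fact3 (hmeas : ∀ n, Measurable (Y n))
    (hindep : iIndepFun Y P)
    (h1 : ∀ n, P {ω | Y n ω = 1} = 1 / 2) (h2 : ∀ n, P {ω | Y n ω = -1} = 1 / 2)
    {u0 u1 u2 : Finset ℕ} (h01 : Disjoint u0 u1) (h02 : Disjoint u0 u2)
    (h12 : Disjoint u1 u2) (d0 d1 d2 : ℕ → ℝ) (a b c : ℕ) :
    ∫ ω, (∑ k ∈ u0, d0 k * Y k ω) ^ a * (∑ k ∈ u1, d1 k * Y k ω) ^ b *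
        (∑ k ∈ u2, d2 k * Y k ω) ^ c ∂P
      = Gm d0 u0 a * Gm d1 u1 b * Gm d2 u2 c := by
  classical
  have hpm := my_ae_pm hmeas h1 h2
  have hpt : ∀ (u : Finset ℕ) (d : ℕ → ℝ) (mm : ℕ) (ω : Ω),
      (∑ k ∈ u, d k * Y k ω) ^ mm
        = ∑ e ∈ Finset.piAntidiag u mm,
            ((Nat.multinomial u e : ℝ) * ∏ k ∈ u, d k ^ e k) * ∏ k ∈ u, Y k ω ^ e k := by
    intro u d mm ω
    rw [Finset.sum_pow_eq_sum_piAntidiag]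
    refine Finset.sum_congr rfl fun e he => ?_
    rw [mul_assoc]
    congr 1
    rw [← Finset.prod_mul_distrib]
    exact Finset.prod_congr rfl fun k _ => mul_pow _ _ _
  have hmain : ∀ ω, (∑ k ∈ u0, d0 k * Y k ω) ^ a * (∑ k ∈ u1, d1 k * Y k ω) ^ b *
      (∑ k ∈ u2, d2 k * Y k ω) ^ c
      = ∑ e0 ∈ Finset.piAntidiag u0 a, ∑ e1 ∈ Finset.piAntidiag u1 b,
          ∑ e2 ∈ Finset.piAntidiag u2 c,
          (((Nat.multinomial u0 e0 : ℝ) * ∏ k ∈ u0, d0 k ^ e0 k) *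
            ((Nat.multinomial u1 e1 : ℝ) * ∏ k ∈ u1, d1 k ^ e1 k) *
            ((Nat.multinomial u2 e2 : ℝ) * ∏ k ∈ u2, d2 k ^ e2 k)) *
          ((∏ k ∈ u0, Y k ω ^ e0 k) * (∏ k ∈ u1, Y k ω ^ e1 k) *
            (∏ k ∈ u2, Y k ω ^ e2 k)) := by
    intro ω
    rw [hpt u0 d0 a ω, hpt u1 d1 b ω, hpt u2 d2 c ω, Finset.sum_mul_sum, Finset.sum_mul]
    refine Finset.sum_congr rfl fun e0 _ => ?_
    rw [Finset.sum_mul]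
    refine Finset.sum_congr rfl fun e1 _ => ?_
    rw [Finset.mul_sum]
    refine Finset.sum_congr rfl fun e2 _ => ?_
    ring
  have hint3 : ∀ e0 e1 e2 : ℕ → ℕ, Integrable (fun ω =>
      (∏ k ∈ u0, Y k ω ^ e0 k) * (∏ k ∈ u1, Y k ω ^ e1 k) *
        (∏ k ∈ u2, Y k ω ^ e2 k)) P := by
    intro e0 e1 e2
    refine myinteg 1 (((Finset.measurable_prod u0 fun k _ => (hmeas k).pow_const (e0 k)).mul
      (Finset.measurable_prod u1 fun k _ => (hmeas k).pow_const (e1 k))).mul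
      (Finset.measurable_prod u2 fun k _ => (hmeas k).pow_const (e2 k))) ?_
    refine hpm.mono fun ω h => ?_
    have habs : ∀ (u : Finset ℕ) (e : ℕ → ℕ), |∏ k ∈ u, Y k ω ^ e k| = 1 := by
      intro u e
      rw [Finset.abs_prod, Finset.prod_congr rfl (fun k _ => ?_), Finset.prod_const_one]
      rcases h k with hk | hk <;> simp [hk, abs_pow]
    rw [abs_mul, abs_mul, habs, habs, habs]
    norm_num
  calc ∫ ω, (∑ k ∈ u0, d0 k * Y k ω) ^ a * (∑ k ∈ u1, d1 k * Y k ω) ^ b *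
        (∑ k ∈ u2, d2 k * Y k ω) ^ c ∂P
      = ∑ e0 ∈ Finset.piAntidiag u0 a, ∑ e1 ∈ Finset.piAntidiag u1 b,
          ∑ e2 ∈ Finset.piAntidiag u2 c,
          (((Nat.multinomial u0 e0 : ℝ) * ∏ k ∈ u0, d0 k ^ e0 k) *
            ((Nat.multinomial u1 e1 : ℝ) * ∏ k ∈ u1, d1 k ^ e1 k) *
            ((Nat.multinomial u2 e2 : ℝ) * ∏ k ∈ u2, d2 k ^ e2 k)) *
          (((∏ k ∈ u0, if Even (e0 k) then (1:ℝ) else 0) *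
            ∏ k ∈ u1, if Even (e1 k) then (1:ℝ) else 0) *
            ∏ k ∈ u2, if Even (e2 k) then (1:ℝ) else 0) := by
        simp only [hmain]
        rw [integral_finset_sum _ (fun e0 _ => integrable_finset_sum _ (fun e1 _ =>
          integrable_finset_sum _ (fun e2 _ => (hint3 e0 e1 e2).const_mul _)))]
        refine Finset.sum_congr rfl fun e0 _ => ?_
        rw [integral_finset_sum _ (fun e1 _ => integrable_finset_sum _ (fun e2 _ =>
          (hint3 e0 e1 e2).const_mul _))]
        refine Finset.sum_congr rfl fun e1 _ => ?_
        rw [integral_finset_sum _ (fun e2 _ => (hint3 e0 e1 e2).const_mul _)]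
        refine Finset.sum_congr rfl fun e2 _ => ?_
        rw [integral_const_mul, my_prod_moment3 hmeas hindep h1 h2 h01 h02 h12 e0 e1 e2]
    _ = Gm d0 u0 a * Gm d1 u1 b * Gm d2 u2 c := by
        rw [Gm_eq, Gm_eq, Gm_eq, Finset.sum_mul_sum, Finset.sum_mul]
        refine Finset.sum_congr rfl fun e0 _ => ?_
        rw [Finset.sum_mul]
        refine Finset.sum_congr rfl fun e1 _ => ?_
        rw [Finset.mul_sum]
        refine Finset.sum_congr rfl fun e2 _ => ?_
        ring

lemma my_subseq (hindep : iIndepFun Y P)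
    (φ : ℕ → ℕ) (hφ : Function.Injective φ) :
    iIndepFun (fun k => Y (φ k)) P := by
  classical
  rw [iIndepFun_iff_measure_inter_preimage_eq_mul]
  intro S sets hsets
  have hψ : ∀ k, Function.invFun φ (φ k) = k := fun k => Function.leftInverse_invFun hφ k
  have h := hindep.measure_inter_preimage_eq_mul (S.image φ)
    (sets := fun j => sets (Function.invFun φ j)) ?_
  · have hL : (⋂ j ∈ S.image φ, Y j ⁻¹' sets (Function.invFun φ j))
        = ⋂ i ∈ S, Y (φ i) ⁻¹' sets i := by
      rw [Finset.set_biInter_finset_image]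
      exact Set.iInter₂_congr fun i _ => by rw [hψ i]
    have hR : (∏ j ∈ S.image φ, P (Y j ⁻¹' sets (Function.invFun φ j)))
        = ∏ i ∈ S, P (Y (φ i) ⁻¹' sets i) := by
      rw [Finset.prod_image (fun x _ y _ hxy => hφ hxy)]
      exact Finset.prod_congr rfl fun i _ => by rw [hψ i]
    rw [hL, hR] at h
    exact h
  · intro j hj
    obtain ⟨i, hi, rfl⟩ := Finset.mem_image.1 hj
    simpa only [hψ i] using hsets i hi

lemma my_key_lim (hmeas : ∀ n, Measurable (Y n))
    (hpm : ∀ᵐ ω ∂P, ∀ n, Y n ω = 1 ∨ Y n ω = -1)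
    (d : ℕ → ℝ) (hd : Summable fun k => |d k|) (T : Ω → ℝ)
    (hT : ∀ ω, T ω = ∑' k, d k * Y k ω) (mm : ℕ) :
    Tendsto (fun K => ∫ ω, (∑ k ∈ Finset.range K, d k * Y k ω) ^ mm ∂P) atTop
      (𝓝 (∫ ω, T ω ^ mm ∂P)) := by
  have hD0 : 0 ≤ ∑' k, |d k| := tsum_nonneg fun k => abs_nonneg _
  refine tendsto_integral_of_dominated_convergence (fun _ => (∑' k, |d k|) ^ mm)
    (fun K => ((Finset.measurable_sum _ fun k _ =>
      (measurable_const.mul (hmeas k))).pow_const mm).aestronglyMeasurable)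
    (integrable_const _) (fun K => ?_) ?_
  · refine hpm.mono fun ω h => ?_
    have hb : |∑ k ∈ Finset.range K, d k * Y k ω| ≤ ∑' k, |d k| := by
      refine (Finset.abs_sum_le_sum_abs _ _).trans ?_
      refine le_trans (le_of_eq (Finset.sum_congr rfl fun k _ => ?_))
        (Summable.sum_le_tsum (Finset.range K) (fun k _ => abs_nonneg _) hd)
      rcases h k with hk | hk <;> simp [abs_mul, hk]
    rw [Real.norm_eq_abs, abs_pow]
    exact pow_le_pow_left₀ (abs_nonneg _) hb mm
  · refine hpm.mono fun ω h => ?_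
    have hsum : Summable fun k => d k * Y k ω := by
      refine Summable.of_abs (hd.congr fun k => ?_)
      rcases h k with hk | hk <;> simp [abs_mul, hk]
    rw [hT ω]
    exact hsum.hasSum.tendsto_sum_nat.pow mm

end aux

lemma sum_range_even (h : ℕ → ℝ) (hodd : ∀ r, Odd r → h r = 0) (N : ℕ) :
    ∑ r ∈ Finset.range (2 * N + 1), h r = ∑ i ∈ Finset.range (N + 1), h (2 * i) := by
  induction N with
  | zero => simp
  | succ N ih =>
    have h3 : 2 * (N + 1) + 1 = (2 * N + 1) + 1 + 1 := by ring
    rw [h3, Finset.sum_range_succ, Finset.sum_range_succ, ih,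
      hodd (2 * N + 1) ⟨N, by ring⟩, add_zero]
    conv_rhs => rw [Finset.sum_range_succ]
    have h4 : 2 * N + 1 + 1 = 2 * (N + 1) := by ring
    rw [h4]

lemma collapse (n : ℕ) (G : ℕ → ℝ) (hGodd : ∀ r, Odd r → G r = 0) (w : ℕ → ℕ → ℝ) :
    ∑ r ∈ Finset.range (2 * n + 1), ∑ t ∈ Finset.range (2 * n - r + 1),
        w r t * (G r * G t * G (2 * n - r - t))
      = ∑ i ∈ Finset.range (n + 1), ∑ j ∈ Finset.range (n + 1 - i),
          w (2 * i) (2 * j) * (G (2 * i) * G (2 * j) * G (2 * (n - i - j))) := by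
  rw [sum_range_even _ (fun r hr => Finset.sum_eq_zero fun t _ => by rw [hGodd r hr]; ring) n]
  refine Finset.sum_congr rfl fun i hi => ?_
  have hi' : i ≤ n := Nat.lt_succ_iff.1 (Finset.mem_range.1 hi)
  have e1 : 2 * n - 2 * i = 2 * (n - i) := by omega
  rw [e1, sum_range_even _ (fun t ht => by rw [hGodd t ht]; ring) (n - i)]
  have e2 : n + 1 - i = (n - i) + 1 := by omega
  rw [e2]
  refine Finset.sum_congr rfl fun j hj => ?_
  have hj' : j ≤ n - i := Nat.lt_succ_iff.1 (Finset.mem_range.1 hj)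
  have e3 : 2 * (n - i) - 2 * j = 2 * (n - i - j) := by omega
  rw [e3]

lemma sum_range_three (f : ℕ → ℝ) (K : ℕ) :
    ∑ k ∈ Finset.range (3 * K), f k
      = ∑ k ∈ Finset.range K, f (3 * k) + ∑ k ∈ Finset.range K, f (3 * k + 1)
        + ∑ k ∈ Finset.range K, f (3 * k + 2) := by
  induction K with
  | zero => simp
  | succ K ih =>
    have h3 : 3 * (K + 1) = 3 * K + 1 + 1 + 1 := by ring
    rw [h3]
    conv_lhs => rw [Finset.sum_range_succ, Finset.sum_range_succ, Finset.sum_range_succ]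
    conv_rhs => rw [Finset.sum_range_succ, Finset.sum_range_succ, Finset.sum_range_succ]
    rw [ih]
    ring

/-- `m_(2n)(λ) = ∑_(i+j≤n) (2n)!/((2i)!(2j)!(2(n-i-j))!) λ^(2i) λ^(4j)
m_(2i)(λ³) m_(2j)(λ³) m_(2(n-i-j))(λ³)`. -/
theorem stmt_10 {Ω : Type*} [MeasurableSpace Ω] (P : Measure Ω) [IsProbabilityMeasure P]
    (X : ℕ → Ω → ℝ) (hmeas : ∀ n, Measurable (X n))
    (hindep : iIndepFun X P)
    (h1 : ∀ n, P {ω | X n ω = 1} = 1 / 2) (h2 : ∀ n, P {ω | X n ω = -1} = 1 / 2)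
    (S : ℝ → Ω → ℝ)
    (hS : ∀ l : ℝ, 1 < l → ∀ ω, S l ω = ∑' n : ℕ, l ^ (-(n + 1 : ℤ)) * X n ω)
    (m : ℝ → ℕ → ℝ) (hm : ∀ l k, m l k = ∫ ω, (S l ω) ^ k ∂P)
    (l : ℝ) (hl : 1 < l) (n : ℕ) :
    m l (2 * n) = ∑ i ∈ Finset.range (n + 1), ∑ j ∈ Finset.range (n + 1 - i),
      ((2 * n).factorial : ℝ) /
          (((2 * i).factorial : ℝ) * ((2 * j).factorial : ℝ) * ((2 * (n - i - j)).factorial : ℝ)) *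
        l ^ (2 * i) * l ^ (4 * j) *
        m (l ^ 3) (2 * i) * m (l ^ 3) (2 * j) * m (l ^ 3) (2 * (n - i - j)) := by
  classical
  have hl0 : (0:ℝ) < l := lt_trans one_pos hl
  have hlne : l ≠ 0 := ne_of_gt hl0
  have hl3 : 1 < l ^ 3 := one_lt_pow₀ hl (by norm_num)
  have hpm := my_ae_pm hmeas h1 h2
  -- summability of geometric coefficients
  have hsum_abs : ∀ t : ℝ, 1 < t → Summable (fun k : ℕ => |t ^ (-(k + 1 : ℤ))|) := by
    intro t ht
    have ht0 : (0:ℝ) < t := lt_trans one_pos ht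
    have habs : ∀ k : ℕ, |t ^ (-(k + 1 : ℤ))| = t⁻¹ ^ (k + 1) := by
      intro k
      have h1' : t ^ (-(k + 1 : ℤ)) = (t ^ (k + 1 : ℕ))⁻¹ := by
        rw [← zpow_natCast t (k + 1), ← zpow_neg]
        congr 1
        all_goals omega
      rw [h1', ← inv_pow, abs_of_pos (pow_pos (inv_pos.2 ht0) _)]
    have hgeo : Summable fun k : ℕ => t⁻¹ ^ (k + 1) := by
      have h0 : (0:ℝ) ≤ t⁻¹ := le_of_lt (inv_pos.2 ht0)
      have h1'' : t⁻¹ < 1 := inv_lt_one_of_one_lt₀ ht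
      simpa only [pow_succ] using (summable_geometric_of_lt_one h0 h1'').mul_right t⁻¹
    exact hgeo.congr fun k => (habs k).symm
  have hDD0 : (0:ℝ) ≤ (∑' k : ℕ, |(l ^ 3) ^ (-(k + 1 : ℤ))|) := tsum_nonneg fun k => abs_nonneg _
  -- limits of Gm along range K
  have hglim : ∀ r : ℕ, Tendsto (fun K => Gm (fun k : ℕ => (l ^ 3) ^ (-(k + 1 : ℤ))) (Finset.range K) r) atTop
      (𝓝 (m (l ^ 3) r)) := by
    intro r
    have hk := my_key_lim hmeas hpm (fun k : ℕ => (l ^ 3) ^ (-(k + 1 : ℤ))) (hsum_abs _ hl3) (S (l ^ 3))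
      (fun ω => hS (l ^ 3) hl3 ω) r
    rw [hm (l ^ 3) r]
    have heq : ∀ K : ℕ, ∫ ω, (∑ k ∈ Finset.range K, (l ^ 3) ^ (-(k + 1 : ℤ)) * X k ω) ^ r ∂P
        = Gm (fun k : ℕ => (l ^ 3) ^ (-(k + 1 : ℤ))) (Finset.range K) r :=
      fun K => my_moment_fin hmeas hindep h1 h2 _ _ r
    exact hk.congr heq
  -- coefficient identities
  have hcc3 : ∀ k : ℕ, (l ^ 3) ^ (-(k + 1 : ℤ)) = l ^ (-(3 * (k:ℤ) + 3)) := by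
    intro k
    rw [← zpow_natCast l 3, ← zpow_mul]
    congr 1
    all_goals push_cast; ring
  have hc0 : ∀ k : ℕ, l ^ (-((3 * k : ℕ) + 1 : ℤ)) = l ^ 2 * (l ^ 3) ^ (-(k + 1 : ℤ)) := by
    intro k
    rw [hcc3, show (-((3 * k : ℕ) + 1 : ℤ)) = 2 + -(3 * (k:ℤ) + 3) from by push_cast; ring,
      zpow_add₀ hlne]
    congr 1
  have hc1 : ∀ k : ℕ, l ^ (-((3 * k + 1 : ℕ) + 1 : ℤ)) = l * (l ^ 3) ^ (-(k + 1 : ℤ)) := by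
    intro k
    rw [hcc3, show (-((3 * k + 1 : ℕ) + 1 : ℤ)) = 1 + -(3 * (k:ℤ) + 3) from by push_cast; ring,
      zpow_add₀ hlne, zpow_one]
  have hc2 : ∀ k : ℕ, l ^ (-((3 * k + 2 : ℕ) + 1 : ℤ)) = (l ^ 3) ^ (-(k + 1 : ℤ)) := by
    intro k
    rw [hcc3, show (-((3 * k + 2 : ℕ) + 1 : ℤ)) = -(3 * (k:ℤ) + 3) from by push_cast; ring]
  -- splitting the partial sums mod 3
  have hsplit : ∀ (K : ℕ) (ω : Ω), (∑ k ∈ Finset.range (3 * K), l ^ (-(k + 1 : ℤ)) * X k ω)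
      = l * (∑ k ∈ Finset.range K, (l ^ 3) ^ (-(k + 1 : ℤ)) * X (3 * k + 1) ω) + (l ^ 2 * (∑ k ∈ Finset.range K, (l ^ 3) ^ (-(k + 1 : ℤ)) * X (3 * k) ω) + (∑ k ∈ Finset.range K, (l ^ 3) ^ (-(k + 1 : ℤ)) * X (3 * k + 2) ω)) := by
    intro K ω
    rw [sum_range_three (fun k => l ^ (-(k + 1 : ℤ)) * X k ω) K]
    have hb0 : ∑ k ∈ Finset.range K, l ^ (-((3 * k : ℕ) + 1 : ℤ)) * X (3 * k) ω
        = l ^ 2 * (∑ k ∈ Finset.range K, (l ^ 3) ^ (-(k + 1 : ℤ)) * X (3 * k) ω) := by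
      rw [Finset.mul_sum]
      refine Finset.sum_congr rfl fun k _ => ?_
      rw [hc0 k]
      ring
    have hb1 : ∑ k ∈ Finset.range K, l ^ (-((3 * k + 1 : ℕ) + 1 : ℤ)) * X (3 * k + 1) ω
        = l * (∑ k ∈ Finset.range K, (l ^ 3) ^ (-(k + 1 : ℤ)) * X (3 * k + 1) ω) := by
      rw [Finset.mul_sum]
      refine Finset.sum_congr rfl fun k _ => ?_
      rw [hc1 k]
      ring
    have hb2 : ∑ k ∈ Finset.range K, l ^ (-((3 * k + 2 : ℕ) + 1 : ℤ)) * X (3 * k + 2) ω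
        = (∑ k ∈ Finset.range K, (l ^ 3) ^ (-(k + 1 : ℤ)) * X (3 * k + 2) ω) := by
      refine Finset.sum_congr rfl fun k _ => ?_
      rw [hc2 k]
    rw [hb0, hb1, hb2]
    ring
  -- transfers between image-indexed Gm and range-indexed Gm
  have hinj1 : Function.Injective (fun k : ℕ => 3 * k + 1) := by
    intro a b hab
    have hab' : 3 * a + 1 = 3 * b + 1 := hab
    omega
  have hinj0 : Function.Injective (fun k : ℕ => 3 * k) := by
    intro a b hab
    have hab' : 3 * a = 3 * b := hab
    omega
  have hinj2 : Function.Injective (fun k : ℕ => 3 * k + 2) := by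
    intro a b hab
    have hab' : 3 * a + 2 = 3 * b + 2 := hab
    omega
  have htrans1 : ∀ (K a : ℕ),
      Gm (fun j : ℕ => (l ^ 3) ^ (-((j / 3 : ℕ) + 1 : ℤ))) ((Finset.range K).image (fun k => 3 * k + 1)) a = Gm (fun k : ℕ => (l ^ 3) ^ (-(k + 1 : ℤ))) (Finset.range K) a := by
    intro K a
    rw [← my_moment_fin hmeas hindep h1 h2 (fun j : ℕ => (l ^ 3) ^ (-((j / 3 : ℕ) + 1 : ℤ))) ((Finset.range K).image (fun k => 3 * k + 1)) a]
    have hsi : ∀ ω : Ω, (∑ j ∈ (Finset.range K).image (fun k => 3 * k + 1),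
        (l ^ 3) ^ (-((j / 3 : ℕ) + 1 : ℤ)) * X j ω)
        = ∑ k ∈ Finset.range K, (l ^ 3) ^ (-(k + 1 : ℤ)) * X (3 * k + 1) ω := by
      intro ω
      rw [Finset.sum_image (fun x _ y _ hxy => hinj1 hxy)]
      refine Finset.sum_congr rfl fun k _ => ?_
      simp only [show (3 * k + 1) / 3 = k from by omega]
    simp only [hsi]
    exact my_moment_fin (fun nn => hmeas (3 * nn + 1)) (my_subseq hindep _ hinj1)
      (fun nn => h1 _) (fun nn => h2 _) (fun k : ℕ => (l ^ 3) ^ (-(k + 1 : ℤ))) (Finset.range K) a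
  have htrans0 : ∀ (K a : ℕ),
      Gm (fun j : ℕ => (l ^ 3) ^ (-((j / 3 : ℕ) + 1 : ℤ))) ((Finset.range K).image (fun k => 3 * k)) a = Gm (fun k : ℕ => (l ^ 3) ^ (-(k + 1 : ℤ))) (Finset.range K) a := by
    intro K a
    rw [← my_moment_fin hmeas hindep h1 h2 (fun j : ℕ => (l ^ 3) ^ (-((j / 3 : ℕ) + 1 : ℤ))) ((Finset.range K).image (fun k => 3 * k)) a]
    have hsi : ∀ ω : Ω, (∑ j ∈ (Finset.range K).image (fun k => 3 * k),
        (l ^ 3) ^ (-((j / 3 : ℕ) + 1 : ℤ)) * X j ω)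
        = ∑ k ∈ Finset.range K, (l ^ 3) ^ (-(k + 1 : ℤ)) * X (3 * k) ω := by
      intro ω
      rw [Finset.sum_image (fun x _ y _ hxy => hinj0 hxy)]
      refine Finset.sum_congr rfl fun k _ => ?_
      simp only [show (3 * k) / 3 = k from by omega]
    simp only [hsi]
    exact my_moment_fin (fun nn => hmeas (3 * nn)) (my_subseq hindep _ hinj0)
      (fun nn => h1 _) (fun nn => h2 _) (fun k : ℕ => (l ^ 3) ^ (-(k + 1 : ℤ))) (Finset.range K) a
  have htrans2 : ∀ (K a : ℕ),
      Gm (fun j : ℕ => (l ^ 3) ^ (-((j / 3 : ℕ) + 1 : ℤ))) ((Finset.range K).image (fun k => 3 * k + 2)) a = Gm (fun k : ℕ => (l ^ 3) ^ (-(k + 1 : ℤ))) (Finset.range K) a := by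
    intro K a
    rw [← my_moment_fin hmeas hindep h1 h2 (fun j : ℕ => (l ^ 3) ^ (-((j / 3 : ℕ) + 1 : ℤ))) ((Finset.range K).image (fun k => 3 * k + 2)) a]
    have hsi : ∀ ω : Ω, (∑ j ∈ (Finset.range K).image (fun k => 3 * k + 2),
        (l ^ 3) ^ (-((j / 3 : ℕ) + 1 : ℤ)) * X j ω)
        = ∑ k ∈ Finset.range K, (l ^ 3) ^ (-(k + 1 : ℤ)) * X (3 * k + 2) ω := by
      intro ω
      rw [Finset.sum_image (fun x _ y _ hxy => hinj2 hxy)]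
      refine Finset.sum_congr rfl fun k _ => ?_
      simp only [show (3 * k + 2) / 3 = k from by omega]
    simp only [hsi]
    exact my_moment_fin (fun nn => hmeas (3 * nn + 2)) (my_subseq hindep _ hinj2)
      (fun nn => h1 _) (fun nn => h2 _) (fun k : ℕ => (l ^ 3) ^ (-(k + 1 : ℤ))) (Finset.range K) a
  -- the per-K identity
  have hΦeq : ∀ K : ℕ,
      ∫ ω, (∑ k ∈ Finset.range (3 * K), l ^ (-(k + 1 : ℤ)) * X k ω) ^ (2 * n) ∂P
        = ∑ i ∈ Finset.range (n + 1), ∑ j ∈ Finset.range (n + 1 - i),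
            ((2 * n).factorial : ℝ) /
                (((2 * i).factorial : ℝ) * ((2 * j).factorial : ℝ) *
                  ((2 * (n - i - j)).factorial : ℝ)) *
              l ^ (2 * i) * l ^ (4 * j) *
              Gm (fun k : ℕ => (l ^ 3) ^ (-(k + 1 : ℤ))) (Finset.range K) (2 * i) * Gm (fun k : ℕ => (l ^ 3) ^ (-(k + 1 : ℤ))) (Finset.range K) (2 * j) * Gm (fun k : ℕ => (l ^ 3) ^ (-(k + 1 : ℤ))) (Finset.range K) (2 * (n - i - j)) := by
    intro K
    have hbound : ∀ (φ : ℕ → ℕ) (ω : Ω), (∀ nn, X nn ω = 1 ∨ X nn ω = -1) →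
        |∑ k ∈ Finset.range K, (l ^ 3) ^ (-(k + 1 : ℤ)) * X (φ k) ω| ≤ (∑' k : ℕ, |(l ^ 3) ^ (-(k + 1 : ℤ))|) := by
      intro φ ω h
      refine (Finset.abs_sum_le_sum_abs _ _).trans ?_
      refine le_trans (le_of_eq (Finset.sum_congr rfl fun k _ => ?_))
        (Summable.sum_le_tsum (Finset.range K) (fun k _ => abs_nonneg _) (hsum_abs _ hl3))
      rcases h (φ k) with hk | hk <;> simp [abs_mul, hk]
    have hmeasblk : ∀ q : ℕ, Measurable fun ω => ∑ k ∈ Finset.range K,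
        (l ^ 3) ^ (-(k + 1 : ℤ)) * X (3 * k + q) ω :=
      fun q => Finset.measurable_sum _ fun k _ => measurable_const.mul (hmeas _)
    have int_rt : ∀ r t u : ℕ, Integrable (fun ω => (∑ k ∈ Finset.range K, (l ^ 3) ^ (-(k + 1 : ℤ)) * X (3 * k + 1) ω) ^ r * ((∑ k ∈ Finset.range K, (l ^ 3) ^ (-(k + 1 : ℤ)) * X (3 * k) ω) ^ t * (∑ k ∈ Finset.range K, (l ^ 3) ^ (-(k + 1 : ℤ)) * X (3 * k + 2) ω) ^ u)) P := by
      intro r t u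
      refine myinteg ((∑' k : ℕ, |(l ^ 3) ^ (-(k + 1 : ℤ))|) ^ r * ((∑' k : ℕ, |(l ^ 3) ^ (-(k + 1 : ℤ))|) ^ t * (∑' k : ℕ, |(l ^ 3) ^ (-(k + 1 : ℤ))|) ^ u))
        (((hmeasblk 1).pow_const r).mul (((hmeasblk 0).pow_const t).mul
          ((hmeasblk 2).pow_const u))) ?_
      refine hpm.mono fun ω h => ?_
      rw [abs_mul, abs_mul, abs_pow, abs_pow, abs_pow]
      refine mul_le_mul (pow_le_pow_left₀ (abs_nonneg _) (hbound (fun k => 3 * k + 1) ω h) r)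
        (mul_le_mul (pow_le_pow_left₀ (abs_nonneg _) (hbound (fun k => 3 * k) ω h) t)
          (pow_le_pow_left₀ (abs_nonneg _) (hbound (fun k => 3 * k + 2) ω h) u)
          (pow_nonneg (abs_nonneg _) u) (pow_nonneg hDD0 t))
        (mul_nonneg (pow_nonneg (abs_nonneg _) t) (pow_nonneg (abs_nonneg _) u))
        (pow_nonneg hDD0 r)
    have hdisj10 : Disjoint ((Finset.range K).image (fun k => 3 * k + 1))
        ((Finset.range K).image (fun k => 3 * k)) := by
      simp only [Finset.disjoint_left, Finset.mem_image, Finset.mem_range]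
      rintro a ⟨x, _, rfl⟩ ⟨y, _, hy⟩
      omega
    have hdisj12 : Disjoint ((Finset.range K).image (fun k => 3 * k + 1))
        ((Finset.range K).image (fun k => 3 * k + 2)) := by
      simp only [Finset.disjoint_left, Finset.mem_image, Finset.mem_range]
      rintro a ⟨x, _, rfl⟩ ⟨y, _, hy⟩
      omega
    have hdisj02 : Disjoint ((Finset.range K).image (fun k => 3 * k))
        ((Finset.range K).image (fun k => 3 * k + 2)) := by
      simp only [Finset.disjoint_left, Finset.mem_image, Finset.mem_range]
      rintro a ⟨x, _, rfl⟩ ⟨y, _, hy⟩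
      omega
    have hA' : ∀ ω : Ω, (∑ j ∈ (Finset.range K).image (fun k => 3 * k + 1),
        (l ^ 3) ^ (-((j / 3 : ℕ) + 1 : ℤ)) * X j ω) = (∑ k ∈ Finset.range K, (l ^ 3) ^ (-(k + 1 : ℤ)) * X (3 * k + 1) ω) := by
      intro ω
      rw [Finset.sum_image (fun x _ y _ hxy => hinj1 hxy)]
      refine Finset.sum_congr rfl fun k _ => ?_
      simp only [show (3 * k + 1) / 3 = k from by omega]
    have hB' : ∀ ω : Ω, (∑ j ∈ (Finset.range K).image (fun k => 3 * k),
        (l ^ 3) ^ (-((j / 3 : ℕ) + 1 : ℤ)) * X j ω) = (∑ k ∈ Finset.range K, (l ^ 3) ^ (-(k + 1 : ℤ)) * X (3 * k) ω) := by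
      intro ω
      rw [Finset.sum_image (fun x _ y _ hxy => hinj0 hxy)]
      refine Finset.sum_congr rfl fun k _ => ?_
      simp only [show (3 * k) / 3 = k from by omega]
    have hC' : ∀ ω : Ω, (∑ j ∈ (Finset.range K).image (fun k => 3 * k + 2),
        (l ^ 3) ^ (-((j / 3 : ℕ) + 1 : ℤ)) * X j ω) = (∑ k ∈ Finset.range K, (l ^ 3) ^ (-(k + 1 : ℤ)) * X (3 * k + 2) ω) := by
      intro ω
      rw [Finset.sum_image (fun x _ y _ hxy => hinj2 hxy)]
      refine Finset.sum_congr rfl fun k _ => ?_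
      simp only [show (3 * k + 2) / 3 = k from by omega]
    have hblock : ∀ r t u : ℕ, ∫ ω, (∑ k ∈ Finset.range K, (l ^ 3) ^ (-(k + 1 : ℤ)) * X (3 * k + 1) ω) ^ r * ((∑ k ∈ Finset.range K, (l ^ 3) ^ (-(k + 1 : ℤ)) * X (3 * k) ω) ^ t * (∑ k ∈ Finset.range K, (l ^ 3) ^ (-(k + 1 : ℤ)) * X (3 * k + 2) ω) ^ u) ∂P
        = Gm (fun k : ℕ => (l ^ 3) ^ (-(k + 1 : ℤ))) (Finset.range K) (r) * Gm (fun k : ℕ => (l ^ 3) ^ (-(k + 1 : ℤ))) (Finset.range K) (t) * Gm (fun k : ℕ => (l ^ 3) ^ (-(k + 1 : ℤ))) (Finset.range K) (u) := by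
      intro r t u
      have hint : ∫ ω, (∑ k ∈ Finset.range K, (l ^ 3) ^ (-(k + 1 : ℤ)) * X (3 * k + 1) ω) ^ r * ((∑ k ∈ Finset.range K, (l ^ 3) ^ (-(k + 1 : ℤ)) * X (3 * k) ω) ^ t * (∑ k ∈ Finset.range K, (l ^ 3) ^ (-(k + 1 : ℤ)) * X (3 * k + 2) ω) ^ u) ∂P
          = ∫ ω, (∑ j ∈ (Finset.range K).image (fun k => 3 * k + 1),
                (l ^ 3) ^ (-((j / 3 : ℕ) + 1 : ℤ)) * X j ω) ^ r *
              (∑ j ∈ (Finset.range K).image (fun k => 3 * k),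
                (l ^ 3) ^ (-((j / 3 : ℕ) + 1 : ℤ)) * X j ω) ^ t *
              (∑ j ∈ (Finset.range K).image (fun k => 3 * k + 2),
                (l ^ 3) ^ (-((j / 3 : ℕ) + 1 : ℤ)) * X j ω) ^ u ∂P := by
        refine integral_congr_ae (Filter.Eventually.of_forall fun ω => ?_)
        beta_reduce
        rw [hA' ω, hB' ω, hC' ω]
        ring
      rw [hint, my_fact3 hmeas hindep h1 h2 hdisj10 hdisj12 hdisj02 (fun j : ℕ => (l ^ 3) ^ (-((j / 3 : ℕ) + 1 : ℤ))) (fun j : ℕ => (l ^ 3) ^ (-((j / 3 : ℕ) + 1 : ℤ))) (fun j : ℕ => (l ^ 3) ^ (-((j / 3 : ℕ) + 1 : ℤ))) r t u,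
        htrans1 K r, htrans0 K t, htrans2 K u]
    calc ∫ ω, (∑ k ∈ Finset.range (3 * K), l ^ (-(k + 1 : ℤ)) * X k ω) ^ (2 * n) ∂P
        = ∫ ω, (l * (∑ k ∈ Finset.range K, (l ^ 3) ^ (-(k + 1 : ℤ)) * X (3 * k + 1) ω) + (l ^ 2 * (∑ k ∈ Finset.range K, (l ^ 3) ^ (-(k + 1 : ℤ)) * X (3 * k) ω) + (∑ k ∈ Finset.range K, (l ^ 3) ^ (-(k + 1 : ℤ)) * X (3 * k + 2) ω))) ^ (2 * n) ∂P :=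
          integral_congr_ae (Filter.Eventually.of_forall fun ω => by
            beta_reduce
            rw [hsplit K ω])
      _ = ∑ r ∈ Finset.range (2 * n + 1), ∑ t ∈ Finset.range (2 * n - r + 1),
            (((2 * n).choose r : ℝ) * ((2 * n - r).choose t : ℝ) * l ^ r * (l ^ 2) ^ t) *
              (Gm (fun k : ℕ => (l ^ 3) ^ (-(k + 1 : ℤ))) (Finset.range K) (r) * Gm (fun k : ℕ => (l ^ 3) ^ (-(k + 1 : ℤ))) (Finset.range K) (t) * Gm (fun k : ℕ => (l ^ 3) ^ (-(k + 1 : ℤ))) (Finset.range K) (2 * n - r - t)) := by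
          have hexp : ∀ ω : Ω, (l * (∑ k ∈ Finset.range K, (l ^ 3) ^ (-(k + 1 : ℤ)) * X (3 * k + 1) ω) + (l ^ 2 * (∑ k ∈ Finset.range K, (l ^ 3) ^ (-(k + 1 : ℤ)) * X (3 * k) ω) + (∑ k ∈ Finset.range K, (l ^ 3) ^ (-(k + 1 : ℤ)) * X (3 * k + 2) ω))) ^ (2 * n)
              = ∑ r ∈ Finset.range (2 * n + 1), ∑ t ∈ Finset.range (2 * n - r + 1),
                  (((2 * n).choose r : ℝ) * ((2 * n - r).choose t : ℝ) * l ^ r * (l ^ 2) ^ t) *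
                    ((∑ k ∈ Finset.range K, (l ^ 3) ^ (-(k + 1 : ℤ)) * X (3 * k + 1) ω) ^ r * ((∑ k ∈ Finset.range K, (l ^ 3) ^ (-(k + 1 : ℤ)) * X (3 * k) ω) ^ t * (∑ k ∈ Finset.range K, (l ^ 3) ^ (-(k + 1 : ℤ)) * X (3 * k + 2) ω) ^ (2 * n - r - t))) := by
            intro ω
            rw [add_pow]
            refine Finset.sum_congr rfl fun r hr => ?_
            rw [add_pow, Finset.mul_sum, Finset.sum_mul]
            refine Finset.sum_congr rfl fun t ht => ?_
            ring
          simp only [hexp]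
          rw [integral_finset_sum _ (fun r _ => integrable_finset_sum _
            (fun t _ => (int_rt _ _ _).const_mul _))]
          refine Finset.sum_congr rfl fun r _ => ?_
          rw [integral_finset_sum _ (fun t _ => (int_rt _ _ _).const_mul _)]
          refine Finset.sum_congr rfl fun t _ => ?_
          rw [integral_const_mul, hblock r t (2 * n - r - t)]
      _ = ∑ i ∈ Finset.range (n + 1), ∑ j ∈ Finset.range (n + 1 - i),
            (((2 * n).choose (2 * i) : ℝ) * ((2 * n - 2 * i).choose (2 * j) : ℝ) *
                l ^ (2 * i) * (l ^ 2) ^ (2 * j)) *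
              (Gm (fun k : ℕ => (l ^ 3) ^ (-(k + 1 : ℤ))) (Finset.range K) (2 * i) * Gm (fun k : ℕ => (l ^ 3) ^ (-(k + 1 : ℤ))) (Finset.range K) (2 * j) * Gm (fun k : ℕ => (l ^ 3) ^ (-(k + 1 : ℤ))) (Finset.range K) (2 * (n - i - j))) :=
          collapse n (fun r => Gm (fun k : ℕ => (l ^ 3) ^ (-(k + 1 : ℤ))) (Finset.range K) (r)) (fun r hr => Gm_odd _ _ hr)
            (fun r t => ((2 * n).choose r : ℝ) * ((2 * n - r).choose t : ℝ) * l ^ r * (l ^ 2) ^ t)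
      _ = ∑ i ∈ Finset.range (n + 1), ∑ j ∈ Finset.range (n + 1 - i),
            ((2 * n).factorial : ℝ) /
                (((2 * i).factorial : ℝ) * ((2 * j).factorial : ℝ) *
                  ((2 * (n - i - j)).factorial : ℝ)) *
              l ^ (2 * i) * l ^ (4 * j) *
              Gm (fun k : ℕ => (l ^ 3) ^ (-(k + 1 : ℤ))) (Finset.range K) (2 * i) * Gm (fun k : ℕ => (l ^ 3) ^ (-(k + 1 : ℤ))) (Finset.range K) (2 * j) * Gm (fun k : ℕ => (l ^ 3) ^ (-(k + 1 : ℤ))) (Finset.range K) (2 * (n - i - j)) := by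
          refine Finset.sum_congr rfl fun i hi => ?_
          refine Finset.sum_congr rfl fun j hj => ?_
          have hi' : i ≤ n := Nat.lt_succ_iff.1 (Finset.mem_range.1 hi)
          have hj' : j ≤ n - i := by
            have := Finset.mem_range.1 hj
            omega
          have h4j : (l ^ 2) ^ (2 * j) = l ^ (4 * j) := by
            rw [← pow_mul]
            congr 1
            ring
          have hle1 : 2 * i ≤ 2 * n := by omega
          have hle2 : 2 * j ≤ 2 * n - 2 * i := by omega
          have hch : (((2 * n).choose (2 * i)) : ℝ) * (((2 * n - 2 * i).choose (2 * j)) : ℝ)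
              = ((2 * n).factorial : ℝ) /
                  (((2 * i).factorial : ℝ) * ((2 * j).factorial : ℝ) *
                    ((2 * (n - i - j)).factorial : ℝ)) := by
            rw [Nat.cast_choose ℝ hle1, Nat.cast_choose ℝ hle2]
            have e1 : 2 * n - 2 * i - 2 * j = 2 * (n - i - j) := by omega
            rw [e1]
            have hne1 : ((2 * i).factorial : ℝ) ≠ 0 := Nat.cast_ne_zero.mpr (Nat.factorial_ne_zero _)
            have hne2 : ((2 * j).factorial : ℝ) ≠ 0 := Nat.cast_ne_zero.mpr (Nat.factorial_ne_zero _)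
            have hne3 : ((2 * (n - i - j)).factorial : ℝ) ≠ 0 :=
              Nat.cast_ne_zero.mpr (Nat.factorial_ne_zero _)
            have hne4 : ((2 * n - 2 * i).factorial : ℝ) ≠ 0 :=
              Nat.cast_ne_zero.mpr (Nat.factorial_ne_zero _)
            field_simp
          rw [h4j, hch]
          ring
  -- limits
  have hmain_lim := my_key_lim hmeas hpm (fun k : ℕ => l ^ (-(k + 1 : ℤ))) (hsum_abs l hl)
    (S l) (fun ω => hS l hl ω) (2 * n)
  have hml : ∫ ω, S l ω ^ (2 * n) ∂P = m l (2 * n) := (hm l (2 * n)).symm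
  rw [hml] at hmain_lim
  have h3K : Tendsto (fun K : ℕ => 3 * K) atTop atTop :=
    tendsto_atTop_mono (fun K => Nat.le_mul_of_pos_left K (by norm_num)) tendsto_id
  have hΦlim : Tendsto (fun K : ℕ =>
      ∫ ω, (∑ k ∈ Finset.range (3 * K), l ^ (-(k + 1 : ℤ)) * X k ω) ^ (2 * n) ∂P) atTop
      (𝓝 (m l (2 * n))) := hmain_lim.comp h3K
  have hFlim : Tendsto (fun K : ℕ =>
      ∑ i ∈ Finset.range (n + 1), ∑ j ∈ Finset.range (n + 1 - i),
        ((2 * n).factorial : ℝ) /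
            (((2 * i).factorial : ℝ) * ((2 * j).factorial : ℝ) *
              ((2 * (n - i - j)).factorial : ℝ)) *
          l ^ (2 * i) * l ^ (4 * j) *
          Gm (fun k : ℕ => (l ^ 3) ^ (-(k + 1 : ℤ))) (Finset.range K) (2 * i) * Gm (fun k : ℕ => (l ^ 3) ^ (-(k + 1 : ℤ))) (Finset.range K) (2 * j) * Gm (fun k : ℕ => (l ^ 3) ^ (-(k + 1 : ℤ))) (Finset.range K) (2 * (n - i - j))) atTop
      (𝓝 (∑ i ∈ Finset.range (n + 1), ∑ j ∈ Finset.range (n + 1 - i),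
        ((2 * n).factorial : ℝ) /
            (((2 * i).factorial : ℝ) * ((2 * j).factorial : ℝ) *
              ((2 * (n - i - j)).factorial : ℝ)) *
          l ^ (2 * i) * l ^ (4 * j) *
          m (l ^ 3) (2 * i) * m (l ^ 3) (2 * j) * m (l ^ 3) (2 * (n - i - j)))) := by
    refine tendsto_finset_sum _ fun i _ => ?_
    refine tendsto_finset_sum _ fun j _ => ?_
    exact ((tendsto_const_nhds.mul (hglim (2 * i))).mul (hglim (2 * j))).mul
      (hglim (2 * (n - i - j)))
  exact tendsto_nhds_unique (hΦlim.congr hΦeq) hFlim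
end

section
/- For every integer n ≥ 0, m_{2n}(√2) = (δ_{2n+2} − δ_{2n+2}^{−1}) / (4√2 · (n+1) · (2n+1)), where δ_m = (√2 + 1)^m. -/
open MeasureTheory ProbabilityTheory Finset

noncomputable section Stmt14Aux

/-- sign of a boolean -/
def sg (b : Bool) : ℝ := if b then 1 else -1

/-- the coefficients `(√2)^{-(i+1)}` -/
def aa (i : ℕ) : ℝ := ((Real.sqrt 2)⁻¹) ^ (i + 1)

/-- value of truncated sum at sign vector ε -/
def EE {N : ℕ} (ε : Fin N → Bool) : ℝ := ∑ i, aa i.1 * sg (ε i)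

/-- truncated moments -/
def nu (N k : ℕ) : ℝ := (∑ ε : Fin N → Bool, (EE ε) ^ k) / 2 ^ N

/-- parity weight -/
def ww (j : ℕ) : ℝ := (1 + (-1 : ℝ) ^ j) / 2

/-- candidate closed form for moments -/
def FF (k : ℕ) : ℝ :=
  ((Real.sqrt 2 + 1) ^ (k + 2) - ((Real.sqrt 2 + 1)⁻¹) ^ (k + 2)) /
    (2 * Real.sqrt 2 * (k + 1) * (k + 2))

lemma sqrt2_pos : (0:ℝ) < Real.sqrt 2 := Real.sqrt_pos.mpr (by norm_num)

lemma sqrt2_ne : (Real.sqrt 2 : ℝ) ≠ 0 := ne_of_gt sqrt2_pos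

lemma sqrt2_mul_self : Real.sqrt 2 * Real.sqrt 2 = 2 :=
  Real.mul_self_sqrt (by norm_num)

lemma sqrt2_lt : (1:ℝ) < Real.sqrt 2 := by
  nlinarith [sqrt2_mul_self, sqrt2_pos]

lemma inv_sqrt2_lt : (Real.sqrt 2)⁻¹ < 1 := by
  rw [inv_lt_one_iff₀]; right; exact sqrt2_lt

lemma inv_sqrt2_nonneg : (0:ℝ) ≤ (Real.sqrt 2)⁻¹ := by positivity

lemma aa_pos (i : ℕ) : 0 < aa i := by
  unfold aa; positivity

lemma aa_zero : aa 0 = (Real.sqrt 2)⁻¹ := by simp [aa]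

lemma aa_succ (i : ℕ) : aa (i + 1) = (Real.sqrt 2)⁻¹ * aa i := by
  unfold aa; ring

lemma aa_summable : Summable aa := by
  have h := summable_geometric_of_lt_one inv_sqrt2_nonneg inv_sqrt2_lt
  have := h.mul_left ((Real.sqrt 2)⁻¹)
  exact this.congr fun i => by unfold aa; ring

lemma ww_even {j : ℕ} (h : Even j) : ww j = 1 := by
  simp [ww, h.neg_one_pow]

lemma ww_odd {j : ℕ} (h : Odd j) : ww j = 0 := by
  simp [ww, h.neg_one_pow]

lemma ww_symm {n j : ℕ} (h : j ≤ 2 * n) : ww (2 * n - j) = ww j := by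
  rcases Nat.even_or_odd j with hj | hj
  · rw [ww_even hj, ww_even]
    rcases hj with ⟨m, rfl⟩
    exact ⟨n - m, by omega⟩
  · rw [ww_odd hj, ww_odd]
    rcases hj with ⟨m, rfl⟩
    exact ⟨n - m - 1, by omega⟩

lemma sg_sq (b : Bool) : sg b = 1 ∨ sg b = -1 := by
  cases b <;> simp [sg]

/-- binomial-type sum with even weights -/
lemma sum_choose_ww (M : ℕ) (x : ℝ) :
    ∑ r ∈ range (M + 1), (M.choose r : ℝ) * ww r * x ^ r
      = ((x + 1) ^ M + (1 - x) ^ M) / 2 := by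
  have h1 : (x + 1) ^ M = ∑ r ∈ range (M + 1), x ^ r * 1 ^ (M - r) * (M.choose r : ℝ) :=
    add_pow x 1 M
  have h2 : (1 - x) ^ M = ∑ r ∈ range (M + 1), (-x) ^ r * 1 ^ (M - r) * (M.choose r : ℝ) := by
    rw [show (1 : ℝ) - x = -x + 1 by ring]; exact add_pow (-x) 1 M
  rw [h1, h2, ← Finset.sum_add_distrib, Finset.sum_div]
  refine Finset.sum_congr rfl fun r _ => ?_
  rw [neg_pow]
  unfold ww
  ring

/-- choose ratio identity -/
lemma choose_ratio (n j : ℕ) :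
    (2 * n).choose j * ((2 * n + 1) * (2 * n + 2)) =
      (2 * n + 2).choose (j + 2) * ((j + 1) * (j + 2)) := by
  have h1 := Nat.add_one_mul_choose_eq (2 * n) j
  have h2 := Nat.add_one_mul_choose_eq (2 * n + 1) (j + 1)
  -- (2n+1) * C(2n, j) = C(2n+1, j+1) * (j+1)
  -- (2n+2) * C(2n+1, j+1) = C(2n+2, j+2) * (j+2)
  nlinarith [h1, h2]



lemma EE_cons {N : ℕ} (e : Bool) (ε : Fin N → Bool) :
    EE (Fin.cons e ε) = (Real.sqrt 2)⁻¹ * (sg e + EE ε) := by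
  unfold EE
  rw [Fin.sum_univ_succ]
  simp only [Fin.cons_zero, Fin.cons_succ, Fin.val_zero, Fin.val_succ, aa_zero, aa_succ]
  rw [mul_add, Finset.mul_sum]
  exact congrArg (fun z => (Real.sqrt 2)⁻¹ * sg e + z)
    (Finset.sum_congr rfl fun (i : Fin N) _ => mul_assoc _ _ _)

lemma nu_rec (N k : ℕ) :
    (Real.sqrt 2) ^ k * nu (N + 1) k
      = ∑ j ∈ range (k + 1), (k.choose j : ℝ) * ww (k - j) * nu N j := by
  have hsum : ∑ ε : Fin (N+1) → Bool, (EE ε) ^ k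
      = ∑ p : Bool × (Fin N → Bool), (EE (Fin.cons p.1 p.2)) ^ k := by
    exact (Fintype.sum_equiv (Fin.consEquiv (fun _ : Fin (N+1) => Bool))
      (fun p => (EE (Fin.cons p.1 p.2)) ^ k) (fun ε => (EE ε) ^ k) (fun p => rfl)).symm
  have hsplit : ∑ p : Bool × (Fin N → Bool), (EE (Fin.cons p.1 p.2)) ^ k
      = ∑ ε : Fin N → Bool, ((EE (Fin.cons true ε)) ^ k + (EE (Fin.cons false ε)) ^ k) := by
    rw [Fintype.sum_prod_type]
    simp only [Fintype.sum_bool]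
    exact Finset.sum_add_distrib.symm
  have key : ∀ ε : Fin N → Bool,
      (Real.sqrt 2) ^ k * ((EE (Fin.cons true ε)) ^ k + (EE (Fin.cons false ε)) ^ k)
        = ∑ j ∈ range (k + 1), (k.choose j : ℝ) * (ww (k - j) * 2) * (EE ε) ^ j := by
    intro ε
    rw [EE_cons, EE_cons]
    have h1 : (EE ε + 1) ^ k = ∑ j ∈ range (k + 1),
        (EE ε) ^ j * 1 ^ (k - j) * (k.choose j : ℝ) := add_pow _ _ _
    have h2 : (EE ε + (-1)) ^ k = ∑ j ∈ range (k + 1),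
        (EE ε) ^ j * (-1) ^ (k - j) * (k.choose j : ℝ) := add_pow _ _ _
    have hs : sg true = 1 := rfl
    have hs' : sg false = -1 := rfl
    rw [hs, hs']
    rw [mul_pow, mul_pow, ← mul_add, ← mul_assoc, ← mul_pow,
      mul_inv_cancel₀ sqrt2_ne, one_pow, one_mul]
    rw [show (1 + EE ε) = EE ε + 1 by ring, show (-1 + EE ε) = EE ε + (-1) by ring,
      h1, h2, ← Finset.sum_add_distrib]
    refine Finset.sum_congr rfl fun j _ => ?_
    unfold ww
    ring
  calc (Real.sqrt 2) ^ k * nu (N + 1) k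
      = (∑ ε : Fin N → Bool, (Real.sqrt 2) ^ k *
          ((EE (Fin.cons true ε)) ^ k + (EE (Fin.cons false ε)) ^ k)) / 2 ^ (N+1) := by
        unfold nu
        rw [hsum, hsplit, ← Finset.mul_sum]
        ring
    _ = (∑ ε : Fin N → Bool, ∑ j ∈ range (k + 1),
          (k.choose j : ℝ) * (ww (k - j) * 2) * (EE ε) ^ j) / 2 ^ (N+1) := by
        rw [Finset.sum_congr rfl fun ε _ => key ε]
    _ = ∑ j ∈ range (k + 1), (k.choose j : ℝ) * ww (k - j) * nu N j := by
        rw [Finset.sum_comm, Finset.sum_div]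
        refine Finset.sum_congr rfl fun j _ => ?_
        unfold nu
        rw [← Finset.mul_sum]
        field_simp
        ring

-- evaluation of the two binomial sums at δ and δ⁻¹
lemma delta_inv : (Real.sqrt 2 + 1)⁻¹ = Real.sqrt 2 - 1 := by
  have h : (Real.sqrt 2 + 1) * (Real.sqrt 2 - 1) = 1 := by nlinarith [sqrt2_mul_self]
  exact inv_eq_of_mul_eq_one_right h

lemma key_sum_eval (n : ℕ) :
    ∑ r ∈ range (2 * n + 3), ((2 * n + 2).choose r : ℝ) * ww r *
        ((Real.sqrt 2 + 1) ^ r - ((Real.sqrt 2 + 1)⁻¹) ^ r)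
      = 2 ^ n * ((Real.sqrt 2 + 1) ^ (2 * n + 2) - ((Real.sqrt 2 + 1)⁻¹) ^ (2 * n + 2)) := by
  set c := Real.sqrt 2 with hc
  set δ := c + 1 with hδ
  have hsum : ∑ r ∈ range (2 * n + 3), ((2 * n + 2).choose r : ℝ) * ww r * (δ ^ r - (δ⁻¹) ^ r)
      = (((δ + 1) ^ (2*n+2) + (1 - δ) ^ (2*n+2)) -
         ((δ⁻¹ + 1) ^ (2*n+2) + (1 - δ⁻¹) ^ (2*n+2))) / 2 := by
    have e1 := sum_choose_ww (2 * n + 2) δ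
    have e2 := sum_choose_ww (2 * n + 2) δ⁻¹
    have e3 : ∑ r ∈ range (2 * n + 3), ((2 * n + 2).choose r : ℝ) * ww r * (δ ^ r - (δ⁻¹) ^ r)
        = (∑ r ∈ range (2 * n + 3), ((2 * n + 2).choose r : ℝ) * ww r * δ ^ r)
          - ∑ r ∈ range (2 * n + 3), ((2 * n + 2).choose r : ℝ) * ww r * (δ⁻¹) ^ r := by
      rw [← Finset.sum_sub_distrib]
      exact Finset.sum_congr rfl fun r _ => by ring
    rw [e3]
    rw [show 2*n+3 = (2*n+2)+1 from rfl] at *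
    rw [e1, e2]
    ring
  rw [hsum]
  have hδinv : δ⁻¹ = c - 1 := delta_inv
  have h1 : δ + 1 = c * δ := by rw [hδ]; nlinarith [sqrt2_mul_self]
  have h2 : (1 : ℝ) - δ = -c := by rw [hδ]; ring
  have h3 : δ⁻¹ + 1 = c := by rw [hδinv]; ring
  have h4 : (1 : ℝ) - δ⁻¹ = c * δ⁻¹ := by
    rw [hδinv]; nlinarith [sqrt2_mul_self]
  rw [h1, h2, h3, h4]
  have hceven : c ^ (2 * n + 2) = 2 ^ (n + 1) := by
    rw [show 2 * n + 2 = 2 * (n + 1) by ring, pow_mul]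
    norm_num [hc, sqrt2_mul_self, sq]
  have hneg : (-c) ^ (2*n+2) = c ^ (2*n+2) := Even.neg_pow ⟨n+1, by ring⟩ c
  rw [hneg, mul_pow, mul_pow, hceven]
  ring

lemma key_identity (n : ℕ) :
    ∑ j ∈ range (2 * n + 1), ((2 * n).choose j : ℝ) * ww (2 * n - j) * FF j
      = 2 ^ n * FF (2 * n) := by
  have step1 : ∀ j ∈ range (2 * n + 1),
      ((2 * n).choose j : ℝ) * ww (2 * n - j) * FF j
        = ((2 * n + 2).choose (j + 2) : ℝ) * ww (j + 2) *
            ((Real.sqrt 2 + 1) ^ (j + 2) - ((Real.sqrt 2 + 1)⁻¹) ^ (j + 2)) /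
            (2 * Real.sqrt 2 * (2 * (n:ℝ) + 1) * (2 * (n:ℝ) + 2)) := by
    intro j hj
    rw [Finset.mem_range] at hj
    rw [ww_symm (by omega : j ≤ 2 * n)]
    have hww : ww (j + 2) = ww j := by
      unfold ww; rw [pow_add]; norm_num
    rw [hww]
    unfold FF
    have hcr : (((2 * n).choose j : ℕ) : ℝ) * ((2 * (n:ℝ) + 1) * (2 * (n:ℝ) + 2)) =
        (((2 * n + 2).choose (j + 2) : ℕ) : ℝ) * (((j:ℝ) + 1) * ((j:ℝ) + 2)) := by
      exact_mod_cast choose_ratio n j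
    have hshape : ((2 * n).choose j : ℝ) * ww j *
        (((Real.sqrt 2 + 1) ^ (j + 2) - ((Real.sqrt 2 + 1)⁻¹) ^ (j + 2)) /
          (2 * Real.sqrt 2 * ((j:ℝ) + 1) * ((j:ℝ) + 2)))
        = (((2 * n).choose j : ℝ) * ww j *
            ((Real.sqrt 2 + 1) ^ (j + 2) - ((Real.sqrt 2 + 1)⁻¹) ^ (j + 2))) /
          (2 * Real.sqrt 2 * ((j:ℝ) + 1) * ((j:ℝ) + 2)) := by ring
    push_cast
    rw [hshape, div_eq_div_iff]
    · linear_combination (ww j * ((Real.sqrt 2 + 1) ^ (j + 2) -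
        ((Real.sqrt 2 + 1)⁻¹) ^ (j + 2)) * (2 * Real.sqrt 2)) * hcr
    · positivity
    · positivity
  rw [Finset.sum_congr rfl step1]
  set g : ℕ → ℝ := fun r => ((2 * n + 2).choose r : ℝ) * ww r *
      ((Real.sqrt 2 + 1) ^ r - ((Real.sqrt 2 + 1)⁻¹) ^ r) with hg
  have hterm : ∀ j, ((2 * n + 2).choose (j + 2) : ℝ) * ww (j + 2) *
      ((Real.sqrt 2 + 1) ^ (j + 2) - ((Real.sqrt 2 + 1)⁻¹) ^ (j + 2)) = g (j + 2) := fun j => rfl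
  have hsumdiv : ∑ j ∈ range (2 * n + 1), g (j + 2) /
      (2 * Real.sqrt 2 * (2 * (n:ℝ) + 1) * (2 * (n:ℝ) + 2))
      = (∑ j ∈ range (2 * n + 1), g (j + 2)) /
        (2 * Real.sqrt 2 * (2 * (n:ℝ) + 1) * (2 * (n:ℝ) + 2)) := by
    rw [Finset.sum_div]
  have e1 : ∑ r ∈ range (2 * n + 2 + 1), g r
      = (∑ j ∈ range (2 * n + 2), g (j + 1)) + g 0 := Finset.sum_range_succ' g (2 * n + 2)
  have e2 : ∑ j ∈ range (2 * n + 1 + 1), g (j + 1)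
      = (∑ j ∈ range (2 * n + 1), g (j + 1 + 1)) + g 1 :=
    Finset.sum_range_succ' (fun j => g (j + 1)) (2 * n + 1)
  have hg0 : g 0 = 0 := by simp [hg]
  have hg1 : g 1 = 0 := by simp [hg, ww_odd (odd_one)]
  have hsum3 : ∑ j ∈ range (2 * n + 1), g (j + 2)
      = ∑ r ∈ range (2 * n + 3), g r := by
    rw [show 2*n+3 = 2*n+2+1 from rfl, e1, show 2*n+2 = 2*n+1+1 from rfl, e2, hg0, hg1]
    norm_num
  have heval : ∑ r ∈ range (2 * n + 3), g r
      = 2 ^ n * ((Real.sqrt 2 + 1) ^ (2 * n + 2) - ((Real.sqrt 2 + 1)⁻¹) ^ (2 * n + 2)) :=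
    key_sum_eval n
  calc ∑ j ∈ range (2 * n + 1), g (j + 2) /
        (2 * Real.sqrt 2 * (2 * (n:ℝ) + 1) * (2 * (n:ℝ) + 2))
      = (∑ r ∈ range (2 * n + 3), g r) /
        (2 * Real.sqrt 2 * (2 * (n:ℝ) + 1) * (2 * (n:ℝ) + 2)) := by rw [hsumdiv, hsum3]
    _ = 2 ^ n * FF (2 * n) := by
        rw [heval]
        unfold FF
        push_cast
        ring

variable {Ω : Type*} [MeasurableSpace Ω] (P : Measure Ω) [IsProbabilityMeasure P]

/-- a ±1 random variable is a.e. valued in {1, -1} -/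
lemma ae_pm (Y : Ω → ℝ) (hY : Measurable Y) (hY1 : P {ω | Y ω = 1} = 1 / 2)
    (hY2 : P {ω | Y ω = -1} = 1 / 2) : ∀ᵐ ω ∂P, Y ω = 1 ∨ Y ω = -1 := by
  have hE : MeasurableSet {ω | Y ω = 1} := hY (measurableSet_singleton 1)
  have hF : MeasurableSet {ω | Y ω = -1} := hY (measurableSet_singleton (-1))
  have hdisj : Disjoint {ω | Y ω = 1} {ω | Y ω = -1} := by
    rw [Set.disjoint_left]
    intro ω h1 h2
    simp only [Set.mem_setOf_eq] at h1 h2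
    norm_num [h1] at h2
  have hunion : P ({ω | Y ω = 1} ∪ {ω | Y ω = -1}) = 1 := by
    rw [measure_union hdisj hF, hY1, hY2, one_div, ENNReal.inv_two_add_inv_two]
  have hcompl : P ({ω | Y ω = 1} ∪ {ω | Y ω = -1})ᶜ = 0 := by
    rw [prob_compl_eq_zero_iff (hE.union hF)]
    exact hunion
  rw [ae_iff]
  convert hcompl using 2
  ext ω; simp

/-- l-th moment of a ±1 random variable -/
lemma int_pow_pm (Y : Ω → ℝ) (hY : Measurable Y) (hY1 : P {ω | Y ω = 1} = 1 / 2)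
    (hY2 : P {ω | Y ω = -1} = 1 / 2) (l : ℕ) : ∫ ω, (Y ω) ^ l ∂P = ww l := by
  have hE : MeasurableSet {ω | Y ω = 1} := hY (measurableSet_singleton 1)
  have hF : MeasurableSet {ω | Y ω = -1} := hY (measurableSet_singleton (-1))
  have hae := ae_pm P Y hY hY1 hY2
  have heq : (fun ω => (Y ω) ^ l) =ᵐ[P]
      fun ω => Set.indicator {ω | Y ω = 1} (fun _ => (1:ℝ)) ω
        + Set.indicator {ω | Y ω = -1} (fun _ => (-1:ℝ)^l) ω := by
    filter_upwards [hae] with ω hω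
    rcases hω with h | h
    · rw [Set.indicator_of_mem (by exact h), Set.indicator_of_notMem (by
        simp only [Set.mem_setOf_eq, h]; norm_num), h]
      norm_num
    · rw [Set.indicator_of_notMem (by simp only [Set.mem_setOf_eq, h]; norm_num),
        Set.indicator_of_mem (by exact h), h]
      norm_num
  rw [integral_congr_ae heq, integral_add, integral_indicator hE, integral_indicator hF,
    setIntegral_const, setIntegral_const, measureReal_def, measureReal_def, hY1, hY2]
  · unfold ww
    norm_num [ENNReal.toReal_div]
    ring
  · exact (integrable_const _).indicator hE
  · exact (integrable_const _).indicator hF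

/-- integrability of a.e.-bounded measurable functions -/
lemma integrable_of_bdd {f : Ω → ℝ} (hf : AEStronglyMeasurable f P) (C : ℝ)
    (h : ∀ᵐ ω ∂P, |f ω| ≤ C) : Integrable f P :=
  Integrable.mono' (integrable_const C) hf (by filter_upwards [h] with ω hω; rwa [Real.norm_eq_abs])

/-- expansion of moments against a constant shift -/
lemma moment_shift (W : Ω → ℝ) (hW : Measurable W) (C : ℝ) (hC : 0 ≤ C)
    (hbd : ∀ᵐ ω ∂P, |W ω| ≤ C) (k : ℕ) (t : ℝ) :
    ∫ ω, (W ω + t) ^ k ∂P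
      = ∑ i ∈ range (k + 1), (k.choose i : ℝ) * (∫ ω, (W ω) ^ i ∂P) * t ^ (k - i) := by
  have hWi : ∀ i : ℕ, Integrable (fun ω => (W ω) ^ i) P := by
    intro i
    refine integrable_of_bdd P ((hW.pow_const i).aestronglyMeasurable) (C ^ i) ?_
    filter_upwards [hbd] with ω hω
    rw [abs_pow]
    exact pow_le_pow_left₀ (abs_nonneg _) hω i
  have hexp : (fun ω => (W ω + t) ^ k)
      = fun ω => ∑ i ∈ range (k + 1), (W ω) ^ i * t ^ (k - i) * (k.choose i : ℝ) :=
    funext fun ω => add_pow _ _ _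
  rw [hexp, integral_finset_sum]
  · refine Finset.sum_congr rfl fun i _ => ?_
    rw [show (fun ω => (W ω) ^ i * t ^ (k-i) * (k.choose i : ℝ))
        = fun ω => (W ω) ^ i * (t ^ (k-i) * (k.choose i : ℝ)) from funext fun ω => by ring,
      integral_mul_const]
    ring
  · intro i _
    exact ((hWi i).mul_const _).mul_const _

/-- the split lemma: integrating out a ±1 variable independent of W -/
lemma split (W Y : Ω → ℝ) (hW : Measurable W) (hY : Measurable Y) (C : ℝ) (hC : 0 ≤ C)
    (hbd : ∀ᵐ ω ∂P, |W ω| ≤ C)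
    (hY1 : P {ω | Y ω = 1} = 1 / 2) (hY2 : P {ω | Y ω = -1} = 1 / 2)
    (hInd : IndepFun W Y P) (b : ℝ) (k : ℕ) :
    ∫ ω, (W ω + b * Y ω) ^ k ∂P
      = ((∫ ω, (W ω + b) ^ k ∂P) + (∫ ω, (W ω - b) ^ k ∂P)) / 2 := by
  have haeY := ae_pm P Y hY hY1 hY2
  have hWi : ∀ i : ℕ, Integrable (fun ω => (W ω) ^ i) P := by
    intro i
    refine integrable_of_bdd P ((hW.pow_const i).aestronglyMeasurable) (C ^ i) ?_
    filter_upwards [hbd] with ω hω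
    rw [abs_pow]
    exact pow_le_pow_left₀ (abs_nonneg _) hω i
  have hexp : (fun ω => (W ω + b * Y ω) ^ k)
      = fun ω => ∑ i ∈ range (k + 1), (W ω) ^ i * (b * Y ω) ^ (k - i) * (k.choose i : ℝ) :=
    funext fun ω => add_pow _ _ _
  have hint : ∀ i ∈ range (k + 1),
      Integrable (fun ω => (W ω) ^ i * (b * Y ω) ^ (k - i) * (k.choose i : ℝ)) P := by
    intro i _
    refine integrable_of_bdd P ?_ (C ^ i * |b| ^ (k - i) * (k.choose i : ℝ)) ?_
    · exact (((hW.pow_const i).mul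
        ((hY.const_mul b).pow_const (k - i))).mul_const _).aestronglyMeasurable
    · filter_upwards [hbd, haeY] with ω h1 h2
      have hy : |Y ω| = 1 := by rcases h2 with h | h <;> rw [h] <;> norm_num
      rw [abs_mul, abs_mul, abs_pow, abs_pow, abs_mul, hy, mul_one, Nat.abs_cast]
      gcongr
  have hsplit_term : ∀ i, ∫ ω, (W ω) ^ i * (Y ω) ^ (k - i) ∂P
      = (∫ ω, (W ω) ^ i ∂P) * ww (k - i) := by
    intro i
    have hIk : IndepFun (fun ω => (W ω) ^ i) (fun ω => (Y ω) ^ (k - i)) P :=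
      hInd.comp (measurable_id.pow_const i) (measurable_id.pow_const (k - i))
    have := hIk.integral_mul_eq_mul_integral ((hW.pow_const i).aestronglyMeasurable)
      ((hY.pow_const (k - i)).aestronglyMeasurable)
    rw [int_pow_pm P Y hY hY1 hY2 (k - i)] at this
    exact this
  have hL : ∫ ω, (W ω + b * Y ω) ^ k ∂P
      = ∑ i ∈ range (k + 1), (k.choose i : ℝ) * (∫ ω, (W ω) ^ i ∂P) * (b ^ (k - i) * ww (k - i)) := by
    rw [hexp, integral_finset_sum _ hint]
    refine Finset.sum_congr rfl fun i _ => ?_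
    rw [show (fun ω => (W ω) ^ i * (b * Y ω) ^ (k - i) * (k.choose i : ℝ))
        = fun ω => ((W ω) ^ i * (Y ω) ^ (k - i)) * (b ^ (k - i) * (k.choose i : ℝ))
        from funext fun ω => by rw [mul_pow]; ring, integral_mul_const, hsplit_term i]
    ring
  rw [hL, moment_shift P W hW C hC hbd k b,
    show (fun ω => (W ω - b) ^ k) = fun ω => (W ω + (-b)) ^ k from funext fun ω => by ring,
    moment_shift P W hW C hC hbd k (-b), ← Finset.sum_add_distrib, Finset.sum_div]
  refine Finset.sum_congr rfl fun i _ => ?_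
  rw [neg_pow]
  unfold ww
  ring

lemma EE_snoc {N : ℕ} (ε : Fin N → Bool) (e : Bool) :
    EE (Fin.snoc ε e) = EE ε + aa N * sg e := by
  unfold EE
  rw [Fin.sum_univ_castSucc]
  simp only [Fin.snoc_castSucc, Fin.snoc_last, Fin.coe_castSucc, Fin.val_last]

lemma finite_formula (X : ℕ → Ω → ℝ) (hmeas : ∀ n, Measurable (X n))
    (hindep : iIndepFun X P)
    (h1 : ∀ n, P {ω | X n ω = 1} = 1 / 2) (h2 : ∀ n, P {ω | X n ω = -1} = 1 / 2) :
    ∀ (N : ℕ) (t : ℝ) (k : ℕ),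
      ∫ ω, ((∑ i ∈ range N, aa i * X i ω) + t) ^ k ∂P
        = (∑ ε : Fin N → Bool, (EE ε + t) ^ k) / 2 ^ N := by
  have haeall : ∀ᵐ ω ∂P, ∀ i, X i ω = 1 ∨ X i ω = -1 :=
    (MeasureTheory.ae_all_iff).mpr fun i => ae_pm P (X i) (hmeas i) (h1 i) (h2 i)
  intro N
  induction N with
  | zero =>
    intro t k
    simp only [Finset.range_zero, Finset.sum_empty, zero_add, integral_const, measure_univ,
      ENNReal.toReal_one, one_smul, pow_zero]
    have : ∀ ε : Fin 0 → Bool, (EE ε + t) ^ k = t ^ k := by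
      intro ε
      unfold EE
      simp
    rw [Finset.sum_congr rfl fun ε _ => this ε]
    simp
  | succ N IH =>
    intro t k
    -- the partial sum up to N, with shift t
    set W : Ω → ℝ := fun ω => (∑ i ∈ range N, aa i * X i ω) + t with hWdef
    have hWmeas : Measurable W := by
      apply Measurable.add_const
      exact Finset.measurable_sum _ fun i _ => (hmeas i).const_mul (aa i)
    have hC : (0:ℝ) ≤ (∑' i, aa i) + |t| := by
      have : (0:ℝ) ≤ ∑' i, aa i := tsum_nonneg (fun i => (aa_pos i).le)
      positivity
    have hbd : ∀ᵐ ω ∂P, |W ω| ≤ (∑' i, aa i) + |t| := by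
      filter_upwards [haeall] with ω hω
      have h1' : |∑ i ∈ range N, aa i * X i ω| ≤ ∑ i ∈ range N, aa i := by
        refine le_trans (Finset.abs_sum_le_sum_abs _ _) ?_
        refine Finset.sum_le_sum fun i _ => ?_
        rw [abs_mul]
        have : |X i ω| = 1 := by rcases hω i with h | h <;> rw [h] <;> norm_num
        rw [this, mul_one, abs_of_pos (aa_pos i)]
      have h2' : ∑ i ∈ range N, aa i ≤ ∑' i, aa i :=
        Summable.sum_le_tsum (range N) (fun i _ => (aa_pos i).le) aa_summable
      calc |W ω| ≤ |∑ i ∈ range N, aa i * X i ω| + |t| := abs_add_le _ _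
        _ ≤ (∑' i, aa i) + |t| := by linarith
    have hInd : IndepFun W (X N) P := by
      set Z : ℕ → Ω → ℝ := fun i ω => (if i = N then 1 else aa i) * X i ω with hZdef
      have hZindep : iIndepFun Z P :=
        hindep.comp (fun i x => (if i = N then 1 else aa i) * x)
          (fun i => measurable_id.const_mul _)
      have hZmeas : ∀ i, Measurable (Z i) := fun i => (hmeas i).const_mul _
      have h0 : IndepFun (∑ j ∈ range N, Z j) (Z N) P :=
        hZindep.indepFun_sum_range_succ hZmeas N
      have hL : (fun ω => (∑ j ∈ range N, Z j) ω + t) = W := by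
        funext ω
        rw [hWdef]
        simp only [Finset.sum_apply]
        congr 1
        refine Finset.sum_congr rfl fun j hj => ?_
        rw [Finset.mem_range] at hj
        rw [hZdef]
        simp only [if_neg (Nat.ne_of_lt hj)]
      have hR : Z N = X N := by
        funext ω
        rw [hZdef]
        simp
      have := h0.comp (measurable_add_const t) measurable_id
      rwa [show (fun x => x + t) ∘ (∑ j ∈ range N, Z j) = W by rw [← hL]; rfl,
        show (id ∘ Z N) = X N by rw [← hR]; rfl] at this
    have hstep := split P W (X N) hWmeas (hmeas N) _ hC hbd (h1 N) (h2 N) hInd (aa N) k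
    have hLrw : (fun ω => ((∑ i ∈ range (N+1), aa i * X i ω) + t) ^ k)
        = fun ω => (W ω + aa N * X N ω) ^ k := by
      funext ω
      rw [hWdef, Finset.sum_range_succ]
      ring
    have hplus : (fun ω => (W ω + aa N) ^ k)
        = fun ω => ((∑ i ∈ range N, aa i * X i ω) + (t + aa N)) ^ k := by
      funext ω; rw [hWdef]; ring
    have hminus : (fun ω => (W ω - aa N) ^ k)
        = fun ω => ((∑ i ∈ range N, aa i * X i ω) + (t - aa N)) ^ k := by
      funext ω; rw [hWdef]; ring
    calc ∫ ω, ((∑ i ∈ range (N+1), aa i * X i ω) + t) ^ k ∂P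
        = ∫ ω, (W ω + aa N * X N ω) ^ k ∂P := by rw [hLrw]
      _ = ((∫ ω, (W ω + aa N) ^ k ∂P) + (∫ ω, (W ω - aa N) ^ k ∂P)) / 2 := hstep
      _ = ((∑ ε : Fin N → Bool, (EE ε + (t + aa N)) ^ k) / 2 ^ N
            + (∑ ε : Fin N → Bool, (EE ε + (t - aa N)) ^ k) / 2 ^ N) / 2 := by
          rw [hplus, hminus, IH (t + aa N) k, IH (t - aa N) k]
      _ = (∑ ε : Fin (N+1) → Bool, (EE ε + t) ^ k) / 2 ^ (N+1) := by
          have hsum : ∑ ε : Fin (N+1) → Bool, (EE ε + t) ^ k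
              = ∑ p : Bool × (Fin N → Bool), (EE (Fin.snoc p.2 p.1) + t) ^ k :=
            (Fintype.sum_equiv (Fin.snocEquiv (fun _ : Fin (N+1) => Bool))
              (fun p => (EE (Fin.snoc p.2 p.1) + t) ^ k) (fun ε => (EE ε + t) ^ k)
              (fun p => by rfl)).symm
          rw [hsum, Fintype.sum_prod_type]
          simp only [Fintype.sum_bool]
          rw [Finset.sum_add_distrib.symm]
          have : ∀ ε : Fin N → Bool,
              (EE (Fin.snoc ε true) + t) ^ k + (EE (Fin.snoc ε false) + t) ^ k
                = (EE ε + (t + aa N)) ^ k + (EE ε + (t - aa N)) ^ k := by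
            intro ε
            rw [EE_snoc, EE_snoc, show sg true = 1 from rfl, show sg false = -1 from rfl]
            ring_nf
          rw [Finset.sum_congr rfl fun ε _ => this ε, Finset.sum_add_distrib]
          push_cast
          ring

lemma aa_eq (n : ℕ) : (Real.sqrt 2) ^ (-(n + 1 : ℤ)) = aa n := by
  rw [show (-(n + 1 : ℤ)) = -((n + 1 : ℕ) : ℤ) by push_cast; ring, zpow_neg, zpow_natCast,
    ← inv_pow]
  rfl

lemma FF_zero : FF 0 = 1 := by
  unfold FF
  rw [delta_inv]
  have h := sqrt2_mul_self
  have hne := sqrt2_ne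
  field_simp
  push_cast; ring

lemma sqrt2_pow_even (n : ℕ) : (Real.sqrt 2) ^ (2 * n) = 2 ^ n := by
  rw [pow_mul]
  norm_num [sq, sqrt2_mul_self]

lemma tendsto_nu (X : ℕ → Ω → ℝ) (hmeas : ∀ n, Measurable (X n))
    (hindep : iIndepFun X P)
    (h1 : ∀ n, P {ω | X n ω = 1} = 1 / 2) (h2 : ∀ n, P {ω | X n ω = -1} = 1 / 2)
    (S : Ω → ℝ) (hSval : ∀ ω, S ω = ∑' n, aa n * X n ω) (k : ℕ) :
    Filter.Tendsto (fun N => nu N k) Filter.atTop (nhds (∫ ω, (S ω) ^ k ∂P)) := by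
  have haeall : ∀ᵐ ω ∂P, ∀ i, X i ω = 1 ∨ X i ω = -1 :=
    (MeasureTheory.ae_all_iff).mpr fun i => ae_pm P (X i) (hmeas i) (h1 i) (h2 i)
  have hFmeas : ∀ N : ℕ, AEStronglyMeasurable
      (fun ω => (∑ i ∈ range N, aa i * X i ω) ^ k) P := fun N =>
    ((Finset.measurable_sum _ fun i _ => (hmeas i).const_mul (aa i)).pow_const k)
      |>.aestronglyMeasurable
  have hpartial : ∀ ω, (∀ i, X i ω = 1 ∨ X i ω = -1) →
      ∀ N, |∑ i ∈ range N, aa i * X i ω| ≤ ∑' i, aa i := by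
    intro ω hω N
    have h1' : |∑ i ∈ range N, aa i * X i ω| ≤ ∑ i ∈ range N, aa i := by
      refine le_trans (Finset.abs_sum_le_sum_abs _ _) ?_
      refine Finset.sum_le_sum fun i _ => ?_
      rw [abs_mul]
      have : |X i ω| = 1 := by rcases hω i with h | h <;> rw [h] <;> norm_num
      rw [this, mul_one, abs_of_pos (aa_pos i)]
    exact le_trans h1' (Summable.sum_le_tsum (range N) (fun i _ => (aa_pos i).le) aa_summable)
  have h_bound : ∀ N : ℕ, ∀ᵐ ω ∂P,
      ‖(∑ i ∈ range N, aa i * X i ω) ^ k‖ ≤ (∑' i, aa i) ^ k := by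
    intro N
    filter_upwards [haeall] with ω hω
    rw [Real.norm_eq_abs, abs_pow]
    exact pow_le_pow_left₀ (abs_nonneg _) (hpartial ω hω N) k
  have h_lim : ∀ᵐ ω ∂P, Filter.Tendsto (fun N => (∑ i ∈ range N, aa i * X i ω) ^ k)
      Filter.atTop (nhds ((S ω) ^ k)) := by
    filter_upwards [haeall] with ω hω
    have habs : (fun n => |aa n * X n ω|) = aa := by
      funext n
      rw [abs_mul]
      have : |X n ω| = 1 := by rcases hω n with h | h <;> rw [h] <;> norm_num
      rw [this, mul_one, abs_of_pos (aa_pos n)]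
    have hsm : Summable (fun n => aa n * X n ω) := by
      refine Summable.of_abs ?_
      rw [habs]
      exact aa_summable
    have ht := hsm.hasSum.tendsto_sum_nat
    rw [← hSval ω] at ht
    exact ht.pow k
  have := MeasureTheory.tendsto_integral_of_dominated_convergence
    (fun _ => (∑' i, aa i) ^ k) hFmeas (integrable_const _) h_bound h_lim
  have hnu : ∀ N : ℕ, ∫ ω, (∑ i ∈ range N, aa i * X i ω) ^ k ∂P = nu N k := by
    intro N
    have hf := finite_formula P X hmeas hindep h1 h2 N 0 k
    simp only [add_zero] at hf
    rw [hf]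
    rfl
  rw [show (fun N => ∫ ω, (∑ i ∈ range N, aa i * X i ω) ^ k ∂P) = fun N => nu N k
    from funext hnu] at this
  exact this

end Stmt14Aux

/-- `m_(2n)(√2) = (δ_(2n+2) - δ_(2n+2)⁻¹)/(4√2 (n+1)(2n+1))`
where `δ_m = (√2+1)^m`. -/
theorem stmt_14 {Ω : Type*} [MeasurableSpace Ω] (P : Measure Ω) [IsProbabilityMeasure P]
    (X : ℕ → Ω → ℝ) (hmeas : ∀ n, Measurable (X n))
    (hindep : iIndepFun X P)
    (h1 : ∀ n, P {ω | X n ω = 1} = 1 / 2) (h2 : ∀ n, P {ω | X n ω = -1} = 1 / 2)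
    (S : ℝ → Ω → ℝ)
    (hS : ∀ l : ℝ, 1 < l → ∀ ω, S l ω = ∑' n : ℕ, l ^ (-(n + 1 : ℤ)) * X n ω)
    (m : ℝ → ℕ → ℝ) (hm : ∀ l k, m l k = ∫ ω, (S l ω) ^ k ∂P)
    (n : ℕ) :
    m (Real.sqrt 2) (2 * n) =
      ((Real.sqrt 2 + 1) ^ (2 * n + 2) - ((Real.sqrt 2 + 1) ^ (2 * n + 2))⁻¹) /
        (4 * Real.sqrt 2 * (n + 1) * (2 * n + 1)) := by
  have hlt : (1:ℝ) < Real.sqrt 2 := by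
    nlinarith [sqrt2_mul_self, sqrt2_pos]
  have hSval : ∀ ω, S (Real.sqrt 2) ω = ∑' n, aa n * X n ω := by
    intro ω
    rw [hS _ hlt ω]
    exact tsum_congr fun i => by rw [aa_eq i]
  have hMtend : ∀ k, Filter.Tendsto (fun N => nu N k) Filter.atTop
      (nhds (m (Real.sqrt 2) k)) := by
    intro k
    rw [hm]
    exact tendsto_nu P X hmeas hindep h1 h2 _ hSval k
  have hrec : ∀ k, (Real.sqrt 2) ^ k * m (Real.sqrt 2) k
      = ∑ j ∈ range (k + 1), (k.choose j : ℝ) * ww (k - j) * m (Real.sqrt 2) j := by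
    intro k
    have hL : Filter.Tendsto (fun N => (Real.sqrt 2) ^ k * nu (N + 1) k) Filter.atTop
        (nhds ((Real.sqrt 2) ^ k * m (Real.sqrt 2) k)) :=
      ((hMtend k).comp (Filter.tendsto_add_atTop_nat 1)).const_mul _
    have hR : Filter.Tendsto
        (fun N => ∑ j ∈ range (k + 1), (k.choose j : ℝ) * ww (k - j) * nu N j) Filter.atTop
        (nhds (∑ j ∈ range (k + 1), (k.choose j : ℝ) * ww (k - j) * m (Real.sqrt 2) j)) :=
      tendsto_finset_sum _ fun j _ => (hMtend j).const_mul _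
    have heq : (fun N => (Real.sqrt 2) ^ k * nu (N + 1) k)
        = fun N => ∑ j ∈ range (k + 1), (k.choose j : ℝ) * ww (k - j) * nu N j :=
      funext fun N => nu_rec N k
    rw [heq] at hL
    exact tendsto_nhds_unique hL hR
  have hM0 : m (Real.sqrt 2) 0 = 1 := by
    rw [hm]
    simp
  have hmain : ∀ n : ℕ, m (Real.sqrt 2) (2 * n) = FF (2 * n) := by
    intro n
    induction n using Nat.strong_induction_on with
    | _ n ih =>
      rcases Nat.eq_zero_or_pos n with rfl | hn
      · rw [Nat.mul_zero, hM0, FF_zero]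
      · have hr := hrec (2 * n)
        rw [Finset.sum_range_succ] at hr
        have hlast : ((2 * n).choose (2 * n) : ℝ) * ww (2 * n - 2 * n) * m (Real.sqrt 2) (2 * n)
            = m (Real.sqrt 2) (2 * n) := by
          rw [Nat.choose_self, Nat.sub_self, ww_even Even.zero]
          norm_num
        rw [hlast, sqrt2_pow_even] at hr
        have hcsum : ∑ j ∈ range (2 * n), ((2 * n).choose j : ℝ) * ww (2 * n - j)
              * m (Real.sqrt 2) j
            = ∑ j ∈ range (2 * n), ((2 * n).choose j : ℝ) * ww (2 * n - j) * FF j := by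
          refine Finset.sum_congr rfl fun j hj => ?_
          rw [Finset.mem_range] at hj
          rcases Nat.even_or_odd j with hje | hjo
          · rcases hje with ⟨i, hi⟩
            have hji : j = 2 * i := by omega
            have : m (Real.sqrt 2) j = FF j := by
              rw [hji]
              exact ih i (by omega)
            rw [this]
          · have hw : ww (2 * n - j) = 0 := by
              apply ww_odd
              rcases hjo with ⟨i, hi⟩
              exact ⟨n - i - 1, by omega⟩
            rw [hw]
            ring
        rw [hcsum] at hr
        have hkey := key_identity n
        rw [Finset.sum_range_succ] at hkey
        have hlast2 : ((2 * n).choose (2 * n) : ℝ) * ww (2 * n - 2 * n) * FF (2 * n)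
            = FF (2 * n) := by
          rw [Nat.choose_self, Nat.sub_self, ww_even Even.zero]
          norm_num
        rw [hlast2] at hkey
        have h2n : (1:ℝ) < 2 ^ n := by
          have : (2:ℝ) ^ 1 ≤ 2 ^ n := pow_le_pow_right₀ (by norm_num) (by omega)
          norm_num at this
          linarith
        have hzero : ((2:ℝ) ^ n - 1) * (m (Real.sqrt 2) (2 * n) - FF (2 * n)) = 0 := by
          nlinarith [hr, hkey]
        rcases mul_eq_zero.mp hzero with h | h
        · exfalso; nlinarith
        · linarith [sub_eq_zero.mp h]
  rw [hmain n]
  unfold FF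
  rw [inv_pow]
  push_cast
  ring
end
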